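/- arXiv:2006.12206 — 9 statements merged into one kernel-verified Lean document; each statement's English description precedes it below -/
import Mathlib

section
/- Let q ∈ L¹(ℝ) be real-valued. For each λ in the closed upper half-plane with λ ≠ 0, let m_λ : ℝ → ℂ be the unique bounded solution of the Jost integral equation for q and λ, and set a(λ) := 1 − (2iλ)^{-1} ∫_ℝ q(t) m_λ(t) dt. Then log⁺|a(λ)| = o(|λ|^{-1}) as λ → 0 within the open upper half-plane; that is, for every ε > 0 there exists δ > 0 such that for all λ with Im λ > 0 and 0 < |λ| < δ one has |λ| · log⁺|a(λ)| ≤ ε. -/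
open MeasureTheory


/-- The kernel `D(y,λ) = (e^{2iλy} - 1)/(2iλ)` for `y > 0`, extended by `0`. -/
noncomputable def D (lam : ℂ) (y : ℝ) : ℂ :=
  if 0 < y then (Complex.exp (2 * Complex.I * lam * y) - 1) / (2 * Complex.I * lam) else 0

lemma abs_exp_sub_one_le_of_re_nonpos (z : ℂ) (hz : z.re ≤ 0) :
    ‖Complex.exp z - 1‖ ≤ ‖z‖ := by
  have hderiv : ∀ t : ℝ, HasDerivAt (fun s : ℝ => Complex.exp ((s : ℂ) * z)) (Complex.exp ((t:ℂ)*z) * z) t := by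
    intro t
    have h1 : HasDerivAt (fun s : ℝ => (s : ℂ) * z) z t := by
      simpa using (Complex.ofRealCLM.hasDerivAt (x := t)).mul_const z
    simpa using h1.cexp
  have key : ∫ t in (0:ℝ)..1, Complex.exp ((t:ℂ)*z) * z = Complex.exp z - 1 := by
    have := intervalIntegral.integral_eq_sub_of_hasDerivAt (f := fun s : ℝ => Complex.exp ((s:ℂ)*z))
      (f' := fun t : ℝ => Complex.exp ((t:ℂ)*z) * z) (a := 0) (b := 1)
      (fun t _ => hderiv t) ?_
    · simpa using this
    · apply Continuous.intervalIntegrable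
      exact (Complex.continuous_ofReal.mul continuous_const).cexp.mul continuous_const
  have hbound : ‖∫ t in (0:ℝ)..1, Complex.exp ((t:ℂ)*z) * z‖ ≤ ‖z‖ := by
    have := intervalIntegral.norm_integral_le_of_norm_le_const
      (C := ‖z‖) (f := fun t : ℝ => Complex.exp ((t:ℂ)*z) * z) (a := 0) (b := 1) ?_
    · simpa using this
    · intro t ht
      rw [Set.uIoc_of_le (by norm_num : (0:ℝ) ≤ 1)] at ht
      have h1 : ‖Complex.exp ((t:ℂ)*z)‖ ≤ 1 := by
        rw [Complex.norm_exp]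
        apply Real.exp_le_one_iff.mpr
        have : ((t:ℂ)*z).re = t * z.re := by simp
        rw [this]
        exact mul_nonpos_of_nonneg_of_nonpos (le_of_lt ht.1) hz
      calc ‖Complex.exp ((t:ℂ)*z) * z‖ = ‖Complex.exp ((t:ℂ)*z)‖ * ‖z‖ := norm_mul _ _
        _ ≤ 1 * ‖z‖ := by gcongr
        _ = ‖z‖ := by simp
  rw [← key]; exact hbound

lemma abs_D_le_inv (lam : ℂ) (him : 0 ≤ lam.im) (hne : lam ≠ 0) (y : ℝ) :
    ‖D lam y‖ ≤ (‖lam‖)⁻¹ := by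
  unfold D
  split_ifs with hy
  · rw [norm_div]
    have habs2 : ‖2 * Complex.I * lam‖ = 2 * ‖lam‖ := by
      simp [map_mul]
    rw [habs2]
    have hnum : ‖Complex.exp (2 * Complex.I * lam * y) - 1‖ ≤ 2 := by
      calc ‖Complex.exp (2 * Complex.I * lam * y) - 1‖
          ≤ ‖Complex.exp (2 * Complex.I * lam * y)‖ + ‖(1:ℂ)‖ := by
            exact norm_sub_le _ _
        _ ≤ 1 + 1 := by
            gcongr
            · rw [Complex.norm_exp]
              apply Real.exp_le_one_iff.mpr
              have : (2 * Complex.I * lam * y).re = -(2 * lam.im * y) := by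
                simp [Complex.mul_re, Complex.mul_im]; try ring
              rw [this]
              simp only [neg_nonpos]
              positivity
            · simp
        _ = 2 := by norm_num
    have hl : 0 < ‖lam‖ := by
      exact norm_pos_iff.mpr hne
    rw [div_le_iff₀ (by positivity)]
    rw [show (‖lam‖)⁻¹ * (2 * ‖lam‖) = 2 by field_simp]
    exact hnum
  · simp [inv_nonneg.mpr (norm_nonneg lam)]

lemma abs_D_le_self (lam : ℂ) (him : 0 ≤ lam.im) (hne : lam ≠ 0) (y : ℝ) :
    ‖D lam y‖ ≤ max y 0 := by
  unfold D
  split_ifs with hy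
  · rw [norm_div]
    have habs2 : ‖2 * Complex.I * lam‖ = 2 * ‖lam‖ := by
      simp [map_mul]
    have hre : (2 * Complex.I * lam * y).re ≤ 0 := by
      have : (2 * Complex.I * lam * y).re = -(2 * lam.im * y) := by
        simp [Complex.mul_re, Complex.mul_im]; try ring
      rw [this]
      simp only [neg_nonpos]
      positivity
    have h1 := abs_exp_sub_one_le_of_re_nonpos _ hre
    have h2 : ‖2 * Complex.I * lam * (y:ℂ)‖ = 2 * ‖lam‖ * y := by
      rw [norm_mul, habs2, Complex.norm_real, Real.norm_eq_abs, abs_of_pos hy]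
    have hl : 0 < ‖lam‖ := by exact norm_pos_iff.mpr hne
    rw [max_eq_left hy.le, habs2, div_le_iff₀ (by positivity)]
    calc ‖Complex.exp (2 * Complex.I * lam * y) - 1‖
        ≤ 2 * ‖lam‖ * y := by rw [← h2]; exact h1
      _ = y * (2 * ‖lam‖) := by ring
  · simp [le_max_iff]


noncomputable def Htail (h : ℝ → ℝ) (x : ℝ) : ℝ := ∫ t in Set.Ioi x, h t

section HtailLemmas
variable {h : ℝ → ℝ} (hh : Integrable h) (hp : ∀ t, 0 ≤ h t)
include hh hp

omit hh in
lemma Htail_nonneg (x : ℝ) : 0 ≤ Htail h x :=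
  setIntegral_nonneg measurableSet_Ioi (fun t _ => hp t)

lemma Htail_anti : Antitone (Htail h) := by
  intro a b hab
  exact setIntegral_mono_set hh.integrableOn
    (Filter.Eventually.of_forall (fun t => hp t))
    (HasSubset.Subset.eventuallyLE (Set.Ioi_subset_Ioi hab))

omit hp in
lemma Htail_split {a b : ℝ} (hab : a ≤ b) :
    Htail h a = (∫ t in Set.Ioc a b, h t) + Htail h b := by
  unfold Htail
  rw [← setIntegral_union (Set.Ioc_disjoint_Ioi le_rfl) measurableSet_Ioi
    hh.integrableOn hh.integrableOn, Set.Ioc_union_Ioi_eq_Ioi hab]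

lemma Htail_le_total (x : ℝ) : Htail h x ≤ ∫ t, h t :=
  setIntegral_le_integral hh (Filter.Eventually.of_forall hp)

omit hp in
lemma Htail_continuous : Continuous (Htail h) := by
  have heq : ∀ x : ℝ, Htail h x = Htail h 0 - ∫ t in (0:ℝ)..x, h t := by
    intro x
    rcases le_total (0:ℝ) x with hx | hx
    · rw [Htail_split hh hx, intervalIntegral.integral_of_le hx]; ring
    · rw [Htail_split hh hx, intervalIntegral.integral_of_ge hx]; ring
  have : Continuous fun x => Htail h 0 - ∫ t in (0:ℝ)..x, h t :=
    continuous_const.sub (intervalIntegral.continuous_primitive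
      (fun a b => hh.intervalIntegrable) 0)
  exact (funext heq :) ▸ this

omit hp in
lemma Htail_exists_small {v : ℝ} (hv : 0 < v) : ∃ b : ℝ, Htail h b ≤ v := by
  have hmono : Monotone fun n : ℕ => Set.Iic (n : ℝ) := by
    intro a b hab
    exact Set.Iic_subset_Iic.mpr (by exact_mod_cast hab)
  have hunion : (⋃ n : ℕ, Set.Iic ((n : ℝ))) = Set.univ := by
    ext x
    simp only [Set.mem_iUnion, Set.mem_Iic, Set.mem_univ, iff_true]
    exact exists_nat_ge x
  have htend := tendsto_setIntegral_of_monotone (fun n : ℕ => measurableSet_Iic)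
    hmono (by rw [hunion]; exact hh.integrableOn)
  rw [hunion, setIntegral_univ] at htend
  have hcompl : ∀ n : ℕ, Htail h n = (∫ t, h t) - ∫ t in Set.Iic (n:ℝ), h t := by
    intro n
    have := integral_add_compl (measurableSet_Iic (a := (n:ℝ))) hh
    rw [Set.compl_Iic] at this
    unfold Htail; linarith
  have : Filter.Tendsto (fun n : ℕ => Htail h n) Filter.atTop (nhds 0) := by
    simp only [hcompl]
    simpa using (tendsto_const_nhds (x := ∫ t, h t)).sub htend
  rcases (this.eventually_le_const (by linarith : (0:ℝ) < v)).exists with ⟨n, hn⟩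
  exact ⟨n, hn⟩

lemma exp_Htail_integrableOn (s : Set ℝ) :
    IntegrableOn (fun t => h t * Real.exp (4 * Htail h t)) s := by
  apply Integrable.integrableOn
  have heq : (fun t => h t * Real.exp (4 * Htail h t))
      = fun t => Real.exp (4 * Htail h t) * h t := by funext t; ring
  rw [heq]
  refine hh.bdd_mul (c := Real.exp (4 * ∫ t, h t)) ?_ ?_
  · exact (Real.continuous_exp.comp ((continuous_const.mul (Htail_continuous hh)))).aestronglyMeasurable
  · refine Filter.Eventually.of_forall (fun t => ?_)
    rw [Real.norm_eq_abs, abs_of_pos (Real.exp_pos _), Real.exp_le_exp]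
    have := Htail_le_total hh hp t
    linarith

lemma key_direct (x : ℝ) (hx : 4 * Htail h x ≤ Real.log 2) :
    ∫ t in Set.Ioi x, h t * Real.exp (4 * Htail h t)
      ≤ (Real.exp (4 * Htail h x) - 1) / 2 := by
  have hs0 : 0 ≤ Htail h x := Htail_nonneg hp x
  have hlog2' : Real.log 2 ≤ 1 := by
    linarith [Real.log_le_sub_one_of_pos (by norm_num : (0:ℝ) < 2)]
  have hstep : ∫ t in Set.Ioi x, h t * Real.exp (4 * Htail h t)
      ≤ Htail h x * Real.exp (4 * Htail h x) := by
    calc ∫ t in Set.Ioi x, h t * Real.exp (4 * Htail h t)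
        ≤ ∫ t in Set.Ioi x, h t * Real.exp (4 * Htail h x) := by
          apply setIntegral_mono_on (exp_Htail_integrableOn hh hp _)
            ((hh.mul_const _).integrableOn) measurableSet_Ioi
          intro t ht
          refine mul_le_mul_of_nonneg_left (Real.exp_le_exp.mpr ?_) (hp t)
          have := Htail_anti hh hp (le_of_lt ht)
          linarith
      _ = Htail h x * Real.exp (4 * Htail h x) := by
          rw [integral_mul_const]; rfl
  have h1 : 4 * Htail h x + 1 ≤ Real.exp (4 * Htail h x) := Real.add_one_le_exp _
  nlinarith [Real.exp_pos (4 * Htail h x)]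

lemma key_aux (n : ℕ) : ∀ x : ℝ, 4 * Htail h x ≤ n * Real.log 2 →
    ∫ t in Set.Ioi x, h t * Real.exp (4 * Htail h t)
      ≤ (Real.exp (4 * Htail h x) - 1) / 2 := by
  have hlog2 : 0 < Real.log 2 := Real.log_pos one_lt_two
  induction n with
  | zero =>
    intro x hx
    exact key_direct hh hp x (by simpa using le_trans hx (by simp; positivity))
  | succ n ih =>
    intro x hx
    by_cases hc : 4 * Htail h x ≤ Real.log 2
    · exact key_direct hh hp x hc
    · push_neg at hc
      set v := Htail h x - Real.log 2 / 4 with hv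
      have hv0 : 0 < v := by rw [hv]; linarith
      obtain ⟨b0, hb0⟩ := Htail_exists_small hh hv0
      have hxb1 : x ≤ max b0 x := le_max_right b0 x
      have hq1 : Htail h (max b0 x) ≤ v :=
        le_trans (Htail_anti hh hp (le_max_left _ _)) hb0
      have hcont : ContinuousOn (Htail h) (Set.Icc x (max b0 x)) :=
        (Htail_continuous hh).continuousOn
      have hvmem : v ∈ Set.Icc (Htail h (max b0 x)) (Htail h x) :=
        ⟨hq1, by rw [hv]; linarith⟩
      obtain ⟨b, hbmem, hbv⟩ := intermediate_value_Icc' hxb1 hcont hvmem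
      have hxb : x ≤ b := hbmem.1
      have hsplit : ∫ t in Set.Ioi x, h t * Real.exp (4 * Htail h t)
          = (∫ t in Set.Ioc x b, h t * Real.exp (4 * Htail h t))
            + ∫ t in Set.Ioi b, h t * Real.exp (4 * Htail h t) := by
        rw [← setIntegral_union (Set.Ioc_disjoint_Ioi le_rfl) measurableSet_Ioi
          (exp_Htail_integrableOn hh hp _) (exp_Htail_integrableOn hh hp _),
          Set.Ioc_union_Ioi_eq_Ioi hxb]
      have hpiece : ∫ t in Set.Ioc x b, h t * Real.exp (4 * Htail h t)
          ≤ Real.exp (4 * Htail h x) * (Real.log 2 / 4) := by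
        calc ∫ t in Set.Ioc x b, h t * Real.exp (4 * Htail h t)
            ≤ ∫ t in Set.Ioc x b, h t * Real.exp (4 * Htail h x) := by
              apply setIntegral_mono_on (exp_Htail_integrableOn hh hp _)
                ((hh.mul_const _).integrableOn) measurableSet_Ioc
              intro t ht
              refine mul_le_mul_of_nonneg_left (Real.exp_le_exp.mpr ?_) (hp t)
              have := Htail_anti hh hp (le_of_lt ht.1)
              linarith
          _ = (Htail h x - Htail h b) * Real.exp (4 * Htail h x) := by
              rw [integral_mul_const]
              congr 1
              have := Htail_split hh hxb
              unfold Htail at *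
              linarith
          _ = Real.exp (4 * Htail h x) * (Real.log 2 / 4) := by
              rw [hbv, hv]; ring
      have hIH : ∫ t in Set.Ioi b, h t * Real.exp (4 * Htail h t)
          ≤ (Real.exp (4 * Htail h b) - 1) / 2 := by
        apply ih b
        rw [hbv, hv]
        push_cast at hx ⊢
        linarith
      have hexp : Real.exp (4 * Htail h b) = Real.exp (4 * Htail h x) / 2 := by
        rw [hbv, hv, show 4 * (Htail h x - Real.log 2 / 4) = 4 * Htail h x - Real.log 2 by ring,
          Real.exp_sub, Real.exp_log (by norm_num : (0:ℝ) < 2)]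
      rw [hsplit]
      rw [hexp] at hIH
      have hlog2' : Real.log 2 ≤ 1 := by
        linarith [Real.log_le_sub_one_of_pos (by norm_num : (0:ℝ) < 2)]
      nlinarith [Real.exp_pos (4 * Htail h x)]

lemma key_exp (x : ℝ) :
    ∫ t in Set.Ioi x, h t * Real.exp (4 * Htail h t)
      ≤ Real.exp (4 * Htail h x) / 2 := by
  have hlog2 : 0 < Real.log 2 := Real.log_pos one_lt_two
  obtain ⟨n, hn⟩ := exists_nat_ge (4 * Htail h x / Real.log 2)
  have h1 := key_aux hh hp n x (by rw [div_le_iff₀ hlog2] at hn; linarith)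
  have h2 : 0 < Real.exp (4 * Htail h x) := Real.exp_pos _
  linarith

end HtailLemmas

lemma gronwall {h u : ℝ → ℝ} (hh : Integrable h) (hp : ∀ t, 0 ≤ h t)
    (hum : Measurable u) (hup : ∀ x, 0 ≤ u x) (C : ℝ) (huC : ∀ x, u x ≤ C)
    (β : ℝ) (hβ : 0 < β) (x₀ : ℝ)
    (key : ∀ x, x₀ ≤ x → u x ≤ β + ∫ t in Set.Ioi x, h t * u t) :
    ∀ x, x₀ ≤ x → u x ≤ 3 * β * Real.exp (4 * Htail h x) := by
  have hC0 : 0 ≤ C := le_trans (hup x₀) (huC x₀)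
  have hint_hu : ∀ s : Set ℝ, IntegrableOn (fun t => h t * u t) s := by
    intro s
    apply Integrable.integrableOn
    have heq : (fun t => h t * u t) = fun t => u t * h t := by funext t; ring
    rw [heq]
    refine hh.bdd_mul (c := C) hum.aestronglyMeasurable (Filter.Eventually.of_forall (fun t => ?_))
    rw [Real.norm_eq_abs, abs_of_nonneg (hup t)]
    exact huC t
  have main : ∀ n : ℕ, ∀ x, x₀ ≤ x →
      u x ≤ (2 * β + C / 2 ^ n) * Real.exp (4 * Htail h x) := by
    intro n
    induction n with
    | zero =>
      intro x hx
      have hE : 1 ≤ Real.exp (4 * Htail h x) :=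
        Real.one_le_exp (mul_nonneg (by norm_num) (Htail_nonneg hp x))
      nlinarith [huC x]
    | succ n ih =>
      intro x hx
      have h1 : u x ≤ β + ∫ t in Set.Ioi x, h t * u t := key x hx
      have h2 : ∫ t in Set.Ioi x, h t * u t
          ≤ ∫ t in Set.Ioi x, (2 * β + C / 2 ^ n) * (h t * Real.exp (4 * Htail h t)) := by
        apply setIntegral_mono_on (hint_hu _)
          ((exp_Htail_integrableOn hh hp _).const_mul _) measurableSet_Ioi
        intro t ht
        have := ih t (le_trans hx (le_of_lt ht))
        have h2n : (0:ℝ) < 2 ^ n := by positivity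
        nlinarith [hp t, Real.exp_pos (4 * Htail h t)]
      rw [integral_const_mul] at h2
      have h4 := key_exp hh hp x
      have hE : 1 ≤ Real.exp (4 * Htail h x) :=
        Real.one_le_exp (mul_nonneg (by norm_num) (Htail_nonneg hp x))
      have hK : (0:ℝ) ≤ C / 2 ^ n := by positivity
      have hpow : (2:ℝ) ^ (n + 1) = 2 ^ n * 2 := pow_succ 2 n
      have hconst : (0:ℝ) ≤ 2 * β + C / 2 ^ n := by positivity
      have h5 : (2 * β + C / 2 ^ n) * (∫ t in Set.Ioi x, h t * Real.exp (4 * Htail h t))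
          ≤ (2 * β + C / 2 ^ n) * (Real.exp (4 * Htail h x) / 2) :=
        mul_le_mul_of_nonneg_left h4 hconst
      have hKsplit : C / 2 ^ (n + 1) = (C / 2 ^ n) / 2 := by
        rw [hpow]; ring
      rw [hKsplit]
      nlinarith
  obtain ⟨n, hn⟩ := pow_unbounded_of_one_lt (C / β) (one_lt_two (α := ℝ))
  intro x hx
  have h2n : (0:ℝ) < 2 ^ n := by positivity
  have hCn : C / 2 ^ n ≤ β := by
    rw [div_le_iff₀ h2n]
    rw [div_lt_iff₀ hβ] at hn
    nlinarith
  have := main n x hx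
  have hE : (0:ℝ) ≤ Real.exp (4 * Htail h x) := (Real.exp_pos _).le
  nlinarith


lemma final_numeric (ε Q R L A η : ℝ) (hε : 0 < ε) (hQ0 : 0 ≤ Q) (hR0 : 0 < R)
    (hL0 : 0 < L) (hA0 : 0 ≤ A) (hη : η = ε / 16)
    (hδ1 : L ≤ 1) (hδ2 : L ≤ (ε/16)^2) (hδ3 : L ≤ ε / (4 * (6*Q + 8*R*Q + 1)))
    (ha : A ≤ (1 + 3 * L⁻¹ * Q)^2 * (Real.exp (8*R*Q) * Real.exp (8 * L⁻¹ * η))) :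
    L * max (Real.log A) 0 ≤ ε := by
  have hΛ0 : 0 < L⁻¹ := inv_pos.mpr hL0
  have hΛ1 : 1 ≤ L⁻¹ := (one_le_inv₀ hL0).2 hδ1
  have hη0 : 0 < η := by rw [hη]; positivity
  have hbase : (0:ℝ) < 1 + 3 * L⁻¹ * Q := by positivity
  have hS0 : 0 ≤ 2 * Real.log (1 + 3 * L⁻¹ * Q) + 8*R*Q + 8 * L⁻¹ * η := by
    have := Real.log_nonneg (by nlinarith : 1 ≤ 1 + 3 * L⁻¹ * Q)
    positivity
  have hlogP : Real.log ((1 + 3 * L⁻¹ * Q)^2 * (Real.exp (8*R*Q) * Real.exp (8 * L⁻¹ * η)))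
      = 2 * Real.log (1 + 3 * L⁻¹ * Q) + 8*R*Q + 8 * L⁻¹ * η := by
    rw [Real.log_mul (by positivity) (by positivity),
      Real.log_mul (Real.exp_ne_zero _) (Real.exp_ne_zero _),
      Real.log_pow, Real.log_exp, Real.log_exp]
    push_cast; ring
  have hmax : max (Real.log A) 0 ≤ 2 * Real.log (1 + 3 * L⁻¹ * Q) + 8*R*Q + 8 * L⁻¹ * η := by
    rcases le_or_gt A 1 with hA | hA
    · rw [max_eq_right (Real.log_nonpos hA0 hA)]; exact hS0
    · refine max_le ?_ hS0
      rw [← hlogP]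
      exact Real.log_le_log (by linarith) ha
  -- bound the log term
  have hlog1 : Real.log (1 + 3 * L⁻¹ * Q) ≤ Real.log L⁻¹ + 3 * Q := by
    have h1 : 1 + 3 * L⁻¹ * Q ≤ L⁻¹ * (1 + 3 * Q) := by nlinarith
    calc Real.log (1 + 3 * L⁻¹ * Q) ≤ Real.log (L⁻¹ * (1 + 3 * Q)) :=
          Real.log_le_log hbase h1
      _ = Real.log L⁻¹ + Real.log (1 + 3 * Q) := by
          rw [Real.log_mul (ne_of_gt hΛ0) (by positivity)]
      _ ≤ Real.log L⁻¹ + 3 * Q := by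
          have := Real.log_le_sub_one_of_pos (show (0:ℝ) < 1 + 3*Q by positivity)
          linarith
  -- L * log L⁻¹ ≤ 2 √L
  set s := Real.sqrt L with hs
  have hs0 : 0 < s := Real.sqrt_pos.mpr hL0
  have hss : s * s = L := Real.mul_self_sqrt hL0.le
  have hsinv : Real.sqrt L⁻¹ = s⁻¹ := by rw [Real.sqrt_inv]
  have hlogΛ : Real.log L⁻¹ ≤ 2 * s⁻¹ := by
    have h2 : L⁻¹ = s⁻¹ * s⁻¹ := by
      field_simp
      linarith [hss]
    calc Real.log L⁻¹ = Real.log (s⁻¹ * s⁻¹) := by rw [h2]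
      _ = Real.log s⁻¹ + Real.log s⁻¹ := Real.log_mul (by positivity) (by positivity)
      _ ≤ 2 * s⁻¹ := by
          have := Real.log_le_sub_one_of_pos (show (0:ℝ) < s⁻¹ by positivity)
          linarith
  have hLlog : L * Real.log L⁻¹ ≤ 2 * s := by
    have hLs : L * s⁻¹ = s := by
      field_simp
      linarith [hss]
    calc L * Real.log L⁻¹ ≤ L * (2 * s⁻¹) := mul_le_mul_of_nonneg_left hlogΛ hL0.le
      _ = 2 * (L * s⁻¹) := by ring
      _ = 2 * s := by rw [hLs]
  have hsε : s ≤ ε / 16 := by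
    rw [hs]
    calc Real.sqrt L ≤ Real.sqrt ((ε/16)^2) := Real.sqrt_le_sqrt hδ2
      _ = ε / 16 := Real.sqrt_sq (by positivity)
  have hLΛ : L * L⁻¹ = 1 := mul_inv_cancel₀ (ne_of_gt hL0)
  have hmain : L * (2 * Real.log (1 + 3 * L⁻¹ * Q) + 8*R*Q + 8 * L⁻¹ * η) ≤ ε := by
    have e1 : L * (8 * L⁻¹ * η) = 8 * η := by
      field_simp
    have e2 : L * (2 * Real.log (1 + 3 * L⁻¹ * Q)) ≤ 2 * (L * Real.log L⁻¹) + 6 * Q * L := by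
      have h := mul_le_mul_of_nonneg_left hlog1 (show (0:ℝ) ≤ 2 * L by positivity)
      calc L * (2 * Real.log (1 + 3 * L⁻¹ * Q)) = 2 * L * Real.log (1 + 3 * L⁻¹ * Q) := by ring
        _ ≤ 2 * L * (Real.log L⁻¹ + 3 * Q) := h
        _ = 2 * (L * Real.log L⁻¹) + 6 * Q * L := by ring
    have e3 : (6*Q + 8*R*Q + 1) * L ≤ ε / 4 := by
      have := (le_div_iff₀ (by positivity : (0:ℝ) < 4 * (6*Q + 8*R*Q + 1))).mp hδ3
      linarith
    have e4 : 2 * (L * Real.log L⁻¹) ≤ 4 * s := by linarith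
    have e5 : 4 * s ≤ ε / 4 := by linarith
    have e6 : 8 * η = ε / 2 := by rw [hη]; ring
    have expand : L * (2 * Real.log (1 + 3 * L⁻¹ * Q) + 8*R*Q + 8 * L⁻¹ * η)
        = L * (2 * Real.log (1 + 3 * L⁻¹ * Q)) + 8*R*Q*L + L * (8 * L⁻¹ * η) := by ring
    rw [expand]
    linarith
  calc L * max (Real.log A) 0
      ≤ L * (2 * Real.log (1 + 3 * L⁻¹ * Q) + 8*R*Q + 8 * L⁻¹ * η) := by
        exact mul_le_mul_of_nonneg_left hmax hL0.le
    _ ≤ ε := hmain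


lemma measurable_D (lam : ℂ) (x : ℝ) : Measurable fun t : ℝ => D lam (t - x) := by
  unfold D
  refine Measurable.ite ?_ ?_ measurable_const
  · exact measurableSet_lt measurable_const (measurable_id.sub_const x)
  · have hcont : Continuous fun t : ℝ =>
        (Complex.exp (2*Complex.I*lam*((t - x : ℝ):ℂ)) - 1)/(2*Complex.I*lam) :=
      ((Complex.continuous_exp.comp (continuous_const.mul
        (Complex.continuous_ofReal.comp (continuous_id.sub continuous_const)))).sub
        continuous_const).div_const _
    exact hcont.measurable

lemma combine_bound (X E1 E2 : ℝ) (hX : 0 ≤ X) (hE1 : 1 ≤ E1) (hE2 : 1 ≤ E2) :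
    1 + X/2 * (3 * (1 + X * (3*(E1*E2)) + 3*(E1*E2)) * E2) ≤ (1+3*X)^2 * (E1*(E2*E2)) := by
  have hE20 : (0:ℝ) < E2 := lt_of_lt_of_le one_pos hE2
  have h12 : (1:ℝ) ≤ E1 * E2 := by
    calc (1:ℝ) = 1 * 1 := by norm_num
      _ ≤ E1 * E2 := mul_le_mul hE1 hE2 zero_le_one (by linarith)
  have h122 : (1:ℝ) ≤ E1 * (E2 * E2) := by
    calc (1:ℝ) = 1 * 1 := by norm_num
      _ ≤ (E1 * E2) * E2 := mul_le_mul h12 hE2 zero_le_one (by nlinarith)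
      _ = E1 * (E2 * E2) := by ring
  have hE2le : E2 ≤ E1 * (E2 * E2) := by
    calc E2 = 1 * E2 := by ring
      _ ≤ (E1 * E2) * E2 := mul_le_mul_of_nonneg_right h12 hE20.le
      _ = E1 * (E2 * E2) := by ring
  nlinarith [mul_nonneg hX (sub_nonneg.mpr hE2le),
    mul_nonneg (mul_nonneg hX hX) (le_trans zero_le_one h122),
    sub_nonneg.mpr h122]

theorem log_plus_a_little_o (q : ℝ → ℝ) (hq : Integrable q)
    (m : ℂ → ℝ → ℂ)
    (hm : ∀ lam : ℂ, 0 ≤ lam.im → lam ≠ 0 →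
      Measurable (m lam) ∧ (∃ C, ∀ x, ‖m lam x‖ ≤ C) ∧
      (∀ x, m lam x = 1 + ∫ t in Set.Ioi x, D lam (t - x) * (q t : ℂ) * m lam t)) :
    ∀ ε > (0 : ℝ), ∃ δ > (0 : ℝ), ∀ lam : ℂ, 0 < lam.im → ‖lam‖ < δ →
      ‖lam‖ *
        max (Real.log ‖
          (1 - (2 * Complex.I * lam)⁻¹ * ∫ t : ℝ, (q t : ℂ) * m lam t)‖) 0 ≤ ε := by
  intro ε hε
  have hqabs : Integrable (fun t => |q t|) := hq.abs
  set Q := ∫ t, |q t| with hQdef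
  have hQ0 : 0 ≤ Q := integral_nonneg (fun t => abs_nonneg _)
  -- tail choice
  obtain ⟨R, hR0, htail_lo, htail_hi⟩ :
      ∃ R : ℝ, 0 < R ∧ (∫ t in Set.Iic (-R), |q t|) ≤ ε/16 ∧ (∫ t in Set.Ioi R, |q t|) ≤ ε/16 := by
    have hmono : Monotone fun n : ℕ => Set.Icc (-(n:ℝ)) (n:ℝ) := by
      intro a b hab t ht
      have hab' : (a:ℝ) ≤ b := by exact_mod_cast hab
      exact ⟨le_trans (by linarith) ht.1, le_trans ht.2 hab'⟩
    have hunion : (⋃ n : ℕ, Set.Icc (-(n:ℝ)) (n:ℝ)) = Set.univ := by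
      ext x
      simp only [Set.mem_iUnion, Set.mem_Icc, Set.mem_univ, iff_true]
      obtain ⟨n, hn⟩ := exists_nat_ge |x|
      exact ⟨n, by rw [abs_le] at hn; exact hn.1, by rw [abs_le] at hn; exact hn.2⟩
    have htend := tendsto_setIntegral_of_monotone (fun n : ℕ => measurableSet_Icc)
      hmono (by rw [hunion]; exact hqabs.integrableOn)
    rw [hunion, setIntegral_univ] at htend
    have hev := (htend.eventually (eventually_gt_nhds
      (show Q - ε/16 < Q by linarith))).exists
    obtain ⟨N, hN⟩ := hev
    have hcompl : (∫ t in (Set.Icc (-(N:ℝ)) (N:ℝ))ᶜ, |q t|) ≤ ε/16 := by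
      have hsum := integral_add_compl (measurableSet_Icc (a := -(N:ℝ)) (b := (N:ℝ))) hqabs
      have : (∫ t in Set.Icc (-(N:ℝ)) (N:ℝ), |q t|) + (∫ t in (Set.Icc (-(N:ℝ)) (N:ℝ))ᶜ, |q t|) = Q := hsum
      linarith
    refine ⟨(N:ℝ) + 1, by positivity, ?_, ?_⟩
    · refine le_trans (setIntegral_mono_set (hqabs.integrableOn)
        (Filter.Eventually.of_forall (fun t => abs_nonneg _))
        (HasSubset.Subset.eventuallyLE ?_)) hcompl
      intro t ht
      simp only [Set.mem_Iic] at ht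
      simp only [Set.mem_compl_iff, Set.mem_Icc, not_and_or, not_le]
      left; linarith
    · refine le_trans (setIntegral_mono_set (hqabs.integrableOn)
        (Filter.Eventually.of_forall (fun t => abs_nonneg _))
        (HasSubset.Subset.eventuallyLE ?_)) hcompl
      intro t ht
      simp only [Set.mem_Ioi] at ht
      simp only [Set.mem_compl_iff, Set.mem_Icc, not_and_or, not_le]
      right; linarith
  refine ⟨min 1 (min ((ε/16)^2) (ε/(4*(6*Q + 8*R*Q + 1)))), by positivity, ?_⟩
  intro lam himpos hlt
  have hlam_ne : lam ≠ 0 := by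
    intro h0; rw [h0] at himpos; simp at himpos
  obtain ⟨hmeas, hbdd, heqn⟩ := hm lam himpos.le hlam_ne
  obtain ⟨C, hC⟩ := hbdd
  set L := ‖lam‖ with hLdef
  have hL0 : 0 < L := norm_pos_iff.mpr hlam_ne
  set Λ := L⁻¹ with hΛdef
  have hΛ0 : 0 < Λ := inv_pos.mpr hL0
  set u : ℝ → ℝ := fun x => ‖m lam x‖ with hudef
  have hum : Measurable u := hmeas.norm
  have hup : ∀ x, 0 ≤ u x := fun x => norm_nonneg _
  have hC0 : 0 ≤ C := le_trans (hup 0) (hC 0)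
  have hnormid : ∀ (x t : ℝ), ‖D lam (t - x) * (q t : ℂ) * m lam t‖
      = ‖D lam (t - x)‖ * (|q t| * u t) := by
    intro x t
    rw [norm_mul, norm_mul, Complex.norm_real,
      Real.norm_eq_abs]
    ring
  -- base inequality
  have base_ineq : ∀ (x : ℝ) (g : ℝ → ℝ), Measurable g → (∀ t, 0 ≤ g t) →
      (∀ t, g t ≤ Λ) → (∀ t, t ∈ Set.Ioi x → ‖D lam (t - x)‖ ≤ g t) →
      u x ≤ 1 + ∫ t in Set.Ioi x, (g t * |q t|) * u t := by
    intro x g hgm hgp hgK hgle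
    have hDm : Measurable fun t : ℝ => D lam (t - x) := measurable_D lam x
    have hintC : Integrable (fun t => D lam (t - x) * (q t : ℂ) * m lam t) := by
      refine Integrable.mono' (hqabs.const_mul (Λ * C)) ?_
        (Filter.Eventually.of_forall (fun t => ?_))
      · exact ((hDm.aestronglyMeasurable.mul
          (Complex.continuous_ofReal.comp_aestronglyMeasurable hq.1)).mul
          hmeas.aestronglyMeasurable)
      · rw [hnormid x t]
        have h1 := abs_D_le_inv lam himpos.le hlam_ne (t - x)
        have h2 : u t ≤ C := hC t
        have h3 := abs_nonneg (q t)
        have h5 := hup t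
        have hLinv : (0:ℝ) ≤ (‖lam‖)⁻¹ := by positivity
        calc ‖D lam (t-x)‖ * (|q t| * u t)
            ≤ (‖lam‖)⁻¹ * (|q t| * C) :=
              mul_le_mul h1 (mul_le_mul_of_nonneg_left h2 h3)
                (mul_nonneg h3 h5) hLinv
          _ = Λ * C * |q t| := by rw [hΛdef, hLdef]; ring
    have hint_guq : Integrable (fun t => (g t * |q t|) * u t) := by
      have heq2 : (fun t => (g t * |q t|) * u t) = fun t => (g t * u t) * |q t| := by
        funext t; ring
      rw [heq2]
      refine hqabs.bdd_mul (c := Λ * C) ((hgm.mul hum).aestronglyMeasurable) (Filter.Eventually.of_forall (fun t => ?_))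
      rw [Real.norm_eq_abs, abs_mul, abs_of_nonneg (hgp t), abs_of_nonneg (hup t)]
      exact mul_le_mul (hgK t) (hC t) (hup t) hΛ0.le
    have h1 : u x ≤ 1 + ‖∫ t in Set.Ioi x, D lam (t - x) * (q t : ℂ) * m lam t‖ := by
      rw [hudef]
      simp only
      rw [heqn x]
      calc ‖1 + ∫ t in Set.Ioi x, D lam (t - x) * (q t : ℂ) * m lam t‖
          ≤ ‖(1:ℂ)‖ + ‖∫ t in Set.Ioi x, D lam (t - x) * (q t : ℂ) * m lam t‖ :=
            norm_add_le _ _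
        _ = 1 + ‖∫ t in Set.Ioi x, D lam (t - x) * (q t : ℂ) * m lam t‖ := by
            rw [norm_one]
    have h2 : ‖∫ t in Set.Ioi x, D lam (t - x) * (q t : ℂ) * m lam t‖
        ≤ ∫ t in Set.Ioi x, ‖D lam (t - x) * (q t : ℂ) * m lam t‖ :=
      norm_integral_le_integral_norm _
    have h3 : (∫ t in Set.Ioi x, ‖D lam (t - x) * (q t : ℂ) * m lam t‖)
        ≤ ∫ t in Set.Ioi x, (g t * |q t|) * u t := by
      apply setIntegral_mono_on hintC.norm.integrableOn hint_guq.integrableOn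
        measurableSet_Ioi
      intro t ht
      rw [hnormid x t]
      have := hgle t ht
      have h6 := mul_nonneg (abs_nonneg (q t)) (hup t)
      calc ‖D lam (t-x)‖ * (|q t| * u t) ≤ g t * (|q t| * u t) :=
            mul_le_mul_of_nonneg_right this h6
        _ = (g t * |q t|) * u t := by ring
    linarith
  -- Step 1
  set B := 3 * Real.exp (4 * (2*R*Q + Λ * (ε/16))) with hBdef
  have hB0 : 0 < B := by positivity
  have step1 : ∀ x : ℝ, -R ≤ x → u x ≤ B := by
    intro x hx
    set g : ℝ → ℝ := fun t => min (max (t - x) 0) Λ with hgdef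
    have hgm : Measurable g :=
      ((measurable_id.sub_const x).max measurable_const).min measurable_const
    have hgp : ∀ t, 0 ≤ g t := fun t => le_min (le_max_right _ _) hΛ0.le
    have hgK : ∀ t, g t ≤ Λ := fun t => min_le_right _ _
    set h1 : ℝ → ℝ := fun t => g t * |q t| with hh1def
    have hh1int : Integrable h1 := by
      refine hqabs.bdd_mul (c := Λ) hgm.aestronglyMeasurable (Filter.Eventually.of_forall (fun t => ?_))
      rw [Real.norm_eq_abs, abs_of_nonneg (hgp t)]; exact hgK t
    have hh1p : ∀ t, 0 ≤ h1 t := fun t => mul_nonneg (hgp t) (abs_nonneg _)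
    have hkey : ∀ y, x ≤ y → u y ≤ 1 + ∫ t in Set.Ioi y, h1 t * u t := by
      intro y hy
      have hgle : ∀ t, t ∈ Set.Ioi y → ‖D lam (t - y)‖ ≤ g t := by
        intro t ht
        refine le_min ?_ (abs_D_le_inv lam himpos.le hlam_ne (t - y))
        calc ‖D lam (t-y)‖ ≤ max (t-y) 0 :=
              abs_D_le_self lam himpos.le hlam_ne (t-y)
          _ ≤ max (t-x) 0 := max_le_max (by linarith) le_rfl
      exact base_ineq y g hgm hgp hgK hgle
    have hgr := gronwall hh1int hh1p hum hup C hC 1 one_pos x hkey x le_rfl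
    have hHb : Htail h1 x ≤ 2*R*Q + Λ*(ε/16) := by
      have hbig : ∀ z : ℝ, Htail h1 z ≤ Λ * ∫ t in Set.Ioi z, |q t| := by
        intro z
        calc Htail h1 z ≤ ∫ t in Set.Ioi z, Λ * |q t| := by
              apply setIntegral_mono_on hh1int.integrableOn
                ((hqabs.const_mul Λ).integrableOn) measurableSet_Ioi
              intro t _
              exact mul_le_mul_of_nonneg_right (hgK t) (abs_nonneg _)
          _ = Λ * ∫ t in Set.Ioi z, |q t| := integral_const_mul _ _
      rcases le_or_gt x R with hxR | hxR
      · rw [Htail_split hh1int hxR]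
        have p1 : (∫ t in Set.Ioc x R, h1 t) ≤ 2*R*Q := by
          calc (∫ t in Set.Ioc x R, h1 t) ≤ ∫ t in Set.Ioc x R, (2*R) * |q t| := by
                apply setIntegral_mono_on hh1int.integrableOn
                  ((hqabs.const_mul _).integrableOn) measurableSet_Ioc
                intro t ht
                refine mul_le_mul_of_nonneg_right ?_ (abs_nonneg _)
                refine le_trans (min_le_left _ _) ?_
                rw [max_le_iff]
                exact ⟨by linarith [ht.2], by positivity⟩
            _ = (2*R) * ∫ t in Set.Ioc x R, |q t| := integral_const_mul _ _
            _ ≤ (2*R) * Q := by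
                refine mul_le_mul_of_nonneg_left ?_ (by positivity)
                exact setIntegral_le_integral hqabs
                  (Filter.Eventually.of_forall (fun t => abs_nonneg _))
            _ = 2*R*Q := by ring
        have p2 : Htail h1 R ≤ Λ*(ε/16) :=
          le_trans (hbig R) (mul_le_mul_of_nonneg_left htail_hi hΛ0.le)
        linarith
      · have p3 : Htail h1 x ≤ Λ*(ε/16) := by
          refine le_trans (hbig x) ?_
          refine mul_le_mul_of_nonneg_left (le_trans ?_ htail_hi) hΛ0.le
          exact setIntegral_mono_set hqabs.integrableOn
            (Filter.Eventually.of_forall (fun t => abs_nonneg _))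
            (HasSubset.Subset.eventuallyLE (Set.Ioi_subset_Ioi hxR.le))
        nlinarith
    calc u x ≤ 3 * 1 * Real.exp (4 * Htail h1 x) := hgr
      _ ≤ B := by
        rw [hBdef]
        have hee := Real.exp_le_exp.mpr (show 4 * Htail h1 x ≤ 4*(2*R*Q + Λ*(ε/16)) by linarith)
        calc 3 * 1 * Real.exp (4 * Htail h1 x) = 3 * Real.exp (4 * Htail h1 x) := by ring
          _ ≤ 3 * Real.exp (4*(2*R*Q + Λ*(ε/16))) := by linarith
  -- Step 2
  set β := 1 + Λ*Q*B + B with hβdef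
  have hβ0 : 0 < β := by positivity
  set w : ℝ → ℝ := fun t => if t ≤ -R then Λ else 0 with hwdef
  have hwm : Measurable w := measurable_const.ite (measurableSet_le measurable_id measurable_const) measurable_const
  have hwb : ∀ t, ‖w t‖ ≤ Λ := by
    intro t; rw [Real.norm_eq_abs, hwdef]
    simp only
    split_ifs
    · rw [abs_of_nonneg hΛ0.le]
    · rw [abs_zero]; exact hΛ0.le
  set h2 : ℝ → ℝ := fun t => w t * |q t| with hh2def
  have hh2int : Integrable h2 := hqabs.bdd_mul (c := Λ) hwm.aestronglyMeasurable (Filter.Eventually.of_forall hwb)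
  have hh2p : ∀ t, 0 ≤ h2 t := by
    intro t; rw [hh2def]
    simp only
    rw [hwdef]
    simp only
    split_ifs
    · positivity
    · simp
  have hint_lqu : Integrable (fun t => (Λ * |q t|) * u t) := by
    have heq2 : (fun t => (Λ * |q t|) * u t) = fun t => (Λ * u t) * |q t| := by
      funext t; ring
    rw [heq2]
    refine hqabs.bdd_mul (c := Λ*C) ((measurable_const.mul hum).aestronglyMeasurable) (Filter.Eventually.of_forall (fun t => ?_))
    rw [Real.norm_eq_abs, abs_mul, abs_of_nonneg hΛ0.le, abs_of_nonneg (hup t)]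
    exact mul_le_mul_of_nonneg_left (hC t) hΛ0.le
  have hint_h2u : Integrable (fun t => h2 t * u t) := by
    have heq2 : (fun t => h2 t * u t) = fun t => (w t * u t) * |q t| := by
      funext t; rw [hh2def]; ring
    rw [heq2]
    refine hqabs.bdd_mul (c := Λ*C) ((hwm.mul hum).aestronglyMeasurable) (Filter.Eventually.of_forall (fun t => ?_))
    rw [Real.norm_eq_abs, abs_mul]
    refine mul_le_mul ?_ ?_ (abs_nonneg _) hΛ0.le
    · rw [← Real.norm_eq_abs]; exact hwb t
    · rw [abs_of_nonneg (hup t)]; exact hC t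
  have key2 : ∀ y : ℝ, u y ≤ β + ∫ t in Set.Ioi y, h2 t * u t := by
    intro y
    have hnn : 0 ≤ ∫ t in Set.Ioi y, h2 t * u t :=
      setIntegral_nonneg measurableSet_Ioi (fun t _ => mul_nonneg (hh2p t) (hup t))
    rcases le_or_gt y (-R) with hy | hy
    · have hb := base_ineq y (fun _ => Λ) measurable_const (fun _ => hΛ0.le)
        (fun _ => le_rfl) (fun t _ => abs_D_le_inv lam himpos.le hlam_ne (t - y))
      have hsplit : (∫ t in Set.Ioi y, (Λ * |q t|) * u t)
          = (∫ t in Set.Ioc y (-R), (Λ * |q t|) * u t)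
            + ∫ t in Set.Ioi (-R), (Λ * |q t|) * u t := by
        rw [← setIntegral_union (Set.Ioc_disjoint_Ioi le_rfl) measurableSet_Ioi
          hint_lqu.integrableOn hint_lqu.integrableOn, Set.Ioc_union_Ioi_eq_Ioi hy]
      have hp2 : (∫ t in Set.Ioi (-R), (Λ * |q t|) * u t) ≤ Λ*Q*B := by
        calc (∫ t in Set.Ioi (-R), (Λ * |q t|) * u t)
            ≤ ∫ t in Set.Ioi (-R), (Λ*B) * |q t| := by
              apply setIntegral_mono_on hint_lqu.integrableOn
                ((hqabs.const_mul _).integrableOn) measurableSet_Ioi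
              intro t ht
              have hub := step1 t (le_of_lt ht)
              calc (Λ * |q t|) * u t ≤ (Λ * |q t|) * B :=
                    mul_le_mul_of_nonneg_left hub
                      (mul_nonneg hΛ0.le (abs_nonneg _))
                _ = (Λ*B) * |q t| := by ring
          _ = (Λ*B) * ∫ t in Set.Ioi (-R), |q t| := integral_const_mul _ _
          _ ≤ (Λ*B) * Q := by
              refine mul_le_mul_of_nonneg_left ?_ (by positivity)
              exact setIntegral_le_integral hqabs
                (Filter.Eventually.of_forall (fun t => abs_nonneg _))
          _ = Λ*Q*B := by ring
      have hp1 : (∫ t in Set.Ioc y (-R), (Λ * |q t|) * u t)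
          ≤ ∫ t in Set.Ioi y, h2 t * u t := by
        have hcongr : (∫ t in Set.Ioc y (-R), (Λ * |q t|) * u t)
            = ∫ t in Set.Ioc y (-R), h2 t * u t := by
          apply setIntegral_congr_fun measurableSet_Ioc
          intro t ht
          rw [hh2def, hwdef]
          simp only
          rw [if_pos ht.2]
        rw [hcongr]
        exact setIntegral_mono_set hint_h2u.integrableOn
          (Filter.Eventually.of_forall (fun t => mul_nonneg (hh2p t) (hup t)))
          (HasSubset.Subset.eventuallyLE Set.Ioc_subset_Ioi_self)
      rw [hsplit] at hb
      have : (1:ℝ) + Λ*Q*B ≤ β := by rw [hβdef]; linarith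
      linarith
    · have := step1 y (le_of_lt hy)
      have : u y ≤ β := le_trans this (by rw [hβdef]; nlinarith [mul_nonneg (mul_nonneg hΛ0.le hQ0) hB0.le])
      linarith
  have conc2 : ∀ x : ℝ, u x ≤ 3 * β * Real.exp (4 * Htail h2 x) := by
    intro x
    exact gronwall hh2int hh2p hum hup C hC β hβ0 x (fun y _ => key2 y) x le_rfl
  have hH2 : ∀ x : ℝ, Htail h2 x ≤ Λ * (ε/16) := by
    intro x
    have h1 : Htail h2 x ≤ ∫ t, h2 t := Htail_le_total hh2int hh2p x
    have h2eq : (∫ t, h2 t) = ∫ t in Set.Iic (-R), Λ * |q t| := by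
      have : h2 = (Set.Iic (-R)).indicator (fun t => Λ * |q t|) := by
        funext t
        rw [Set.indicator_apply, hh2def, hwdef]
        simp only [Set.mem_Iic]
        split_ifs
        · rfl
        · exact zero_mul _
      rw [this, integral_indicator measurableSet_Iic]
    have h3 : (∫ t in Set.Iic (-R), Λ * |q t|) ≤ Λ * (ε/16) := by
      rw [integral_const_mul]
      exact mul_le_mul_of_nonneg_left htail_lo hΛ0.le
    linarith
  set E2 := Real.exp (4 * (Λ * (ε/16))) with hE2def
  have hE2_1 : 1 ≤ E2 := Real.one_le_exp (by positivity)
  have ubound : ∀ x : ℝ, u x ≤ 3 * β * E2 := by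
    intro x
    refine le_trans (conc2 x) ?_
    rw [hE2def]
    have hee := Real.exp_le_exp.mpr (show 4 * Htail h2 x ≤ 4 * (Λ * (ε/16)) by
      have := hH2 x; linarith)
    exact mul_le_mul_of_nonneg_left hee (by positivity)
  -- integral of |q| * u
  have hint_qu : Integrable (fun t => |q t| * u t) := by
    have heq2 : (fun t => |q t| * u t) = fun t => u t * |q t| := by funext t; ring
    rw [heq2]
    refine hqabs.bdd_mul (c := C) hum.aestronglyMeasurable (Filter.Eventually.of_forall (fun t => ?_))
    rw [Real.norm_eq_abs, abs_of_nonneg (hup t)]; exact hC t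
  have hT : (∫ t, |q t| * u t) ≤ Q * (3 * β * E2) := by
    calc (∫ t, |q t| * u t) ≤ ∫ t, |q t| * (3 * β * E2) := by
          refine integral_mono hint_qu (hqabs.mul_const _) (fun t => ?_)
          exact mul_le_mul_of_nonneg_left (ubound t) (abs_nonneg _)
      _ = (∫ t, |q t|) * (3 * β * E2) := integral_mul_const _ _
      _ = Q * (3 * β * E2) := by rw [hQdef]
  -- bound on a
  have hIabs : ‖∫ t : ℝ, (q t : ℂ) * m lam t‖ ≤ ∫ t, |q t| * u t := by
    refine le_trans (norm_integral_le_integral_norm _) (le_of_eq ?_)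
    congr 1
    funext t
    rw [norm_mul, Complex.norm_real, Real.norm_eq_abs, hudef]
  have habs_inv : ‖(2*Complex.I*lam)⁻¹‖ = Λ/2 := by
    rw [norm_inv]
    have : ‖2*Complex.I*lam‖ = 2 * L := by
      rw [norm_mul, norm_mul]
      simp [hLdef]
    rw [this, hΛdef, mul_inv]
    ring
  have ha1 : ‖1 - (2*Complex.I*lam)⁻¹ * ∫ t : ℝ, (q t : ℂ) * m lam t‖
      ≤ 1 + (Λ/2) * (Q * (3 * β * E2)) := by
    calc ‖1 - (2*Complex.I*lam)⁻¹ * ∫ t : ℝ, (q t : ℂ) * m lam t‖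
        ≤ ‖(1:ℂ)‖ + ‖(2*Complex.I*lam)⁻¹ * ∫ t : ℝ, (q t : ℂ) * m lam t‖ := by
          exact (norm_sub_le _ _)
      _ = 1 + ‖(2*Complex.I*lam)⁻¹‖ * ‖∫ t : ℝ, (q t : ℂ) * m lam t‖ := by
          rw [norm_one, norm_mul]
      _ ≤ 1 + (Λ/2) * (Q * (3 * β * E2)) := by
          rw [habs_inv]
          have h5 := le_trans hIabs hT
          have h7 := mul_le_mul_of_nonneg_left h5 (by positivity : (0:ℝ) ≤ Λ/2)
          linarith
  -- convert to the shape of final_numeric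
  set E1 := Real.exp (8*R*Q) with hE1def
  have hE1_1 : 1 ≤ E1 := Real.one_le_exp (by positivity)
  have hBE : B = 3 * (E1 * E2) := by
    rw [hBdef, hE1def, hE2def, ← Real.exp_add]
    congr 1
    ring
  have hfin : ‖1 - (2*Complex.I*lam)⁻¹ * ∫ t : ℝ, (q t : ℂ) * m lam t‖
      ≤ (1 + 3 * Λ * Q)^2 * (E1 * (E2 * E2)) := by
    refine le_trans ha1 ?_
    have hXQ : 0 ≤ Λ * Q := by positivity
    have := combine_bound (Λ*Q) E1 E2 hXQ hE1_1 hE2_1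
    calc 1 + (Λ/2) * (Q * (3 * β * E2))
        = 1 + (Λ*Q)/2 * (3 * (1 + (Λ*Q) * (3*(E1*E2)) + 3*(E1*E2)) * E2) := by
          rw [hβdef, hBE]; ring
      _ ≤ (1 + 3*(Λ*Q))^2 * (E1 * (E2 * E2)) := this
      _ = (1 + 3 * Λ * Q)^2 * (E1 * (E2 * E2)) := by ring
  have hE22 : E1 * (E2 * E2) = Real.exp (8*R*Q) * Real.exp (8 * Λ * (ε/16)) := by
    rw [hE1def, hE2def, ← Real.exp_add]
    congr 2
    ring
  rw [hE22] at hfin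
  -- final numeric step
  have hδ1 : L ≤ 1 := le_trans hlt.le (min_le_left _ _)
  have hδ2 : L ≤ (ε/16)^2 := le_trans hlt.le (le_trans (min_le_right _ _) (min_le_left _ _))
  have hδ3 : L ≤ ε/(4*(6*Q + 8*R*Q + 1)) :=
    le_trans hlt.le (le_trans (min_le_right _ _) (min_le_right _ _))
  exact final_numeric ε Q R L _ (ε/16) hε hQ0 hR0 hL0 (norm_nonneg _) rfl
    hδ1 hδ2 hδ3 (by rw [← hΛdef]; exact hfin)
end

section
/- Let λ ∈ ℂ with Im λ ≥ 0 and λ ≠ 0, and let q ∈ L¹(ℝ) vanish almost everywhere outside the interval [−1/|λ|, 1/|λ|]. Define the map Φ on bounded measurable functions f : ℝ → ℂ by (Φf)(x) = ∫_x^∞ D(t−x,λ) q(t) f(t) dt. Then for every bounded measurable f and every n ≥ 1, sup_{x∈ℝ} |(Φⁿ f)(x)| ≤ (3‖q‖_{L¹}/(n|λ|))ⁿ · (1/n!) · sup_{x∈ℝ} |f(x)|. -/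
open MeasureTheory Set


lemma norm_exp_sub_one_le_of_re_nonpos {z : ℂ} (hz : z.re ≤ 0) :
    ‖Complex.exp z - 1‖ ≤ ‖z‖ := by
  have hder : ∀ t : ℝ, t ∈ uIcc (0:ℝ) 1 →
      HasDerivAt (fun s : ℝ => Complex.exp ((s : ℂ) * z)) (Complex.exp ((t:ℂ) * z) * z) t := by
    intro t _
    have h1 : HasDerivAt (fun w : ℂ => Complex.exp (w * z)) (Complex.exp ((t:ℂ) * z) * z) (t : ℂ) := by
      simpa using ((hasDerivAt_id ((t:ℂ))).mul_const z).cexp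
    exact h1.comp_ofReal
  have hcont : IntervalIntegrable (fun t : ℝ => Complex.exp ((t:ℂ) * z) * z) volume 0 1 := by
    apply Continuous.intervalIntegrable
    fun_prop
  have key := intervalIntegral.integral_eq_sub_of_hasDerivAt hder hcont
  simp only [Complex.ofReal_one, Complex.ofReal_zero, one_mul, zero_mul, Complex.exp_zero] at key
  have hb : ∀ t ∈ Set.uIoc (0:ℝ) 1, ‖Complex.exp ((t:ℂ) * z) * z‖ ≤ ‖z‖ := by
    intro t ht
    rw [uIoc_of_le (by norm_num : (0:ℝ) ≤ 1)] at ht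
    have h1 : ‖Complex.exp ((t:ℂ) * z)‖ ≤ 1 := by
      rw [Complex.norm_exp]
      apply Real.exp_le_one_iff.mpr
      have : ((t:ℂ) * z).re = t * z.re := by simp [Complex.mul_re]
      rw [this]
      exact mul_nonpos_of_nonneg_of_nonpos (le_of_lt ht.1) hz
    calc ‖Complex.exp ((t:ℂ) * z) * z‖ = ‖Complex.exp ((t:ℂ) * z)‖ * ‖z‖ := by
          simp [norm_mul]
      _ ≤ 1 * ‖z‖ := by gcongr
      _ = ‖z‖ := one_mul _
  have := intervalIntegral.norm_integral_le_of_norm_le_const hb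
  rw [key] at this
  simpa using this


lemma key_integral (g : ℝ → ℝ) (hgm : Measurable g) (hg0 : ∀ t, 0 ≤ g t)
    (hgint : Integrable g) :
    ∀ (k : ℕ) (x : ℝ), ∫ t in Ioi x, g t * (∫ s in Ioi t, g s) ^ k
      = (∫ t in Ioi x, g t) ^ (k+1) / (k+1) := by
  set G : ℝ → ℝ := fun x => ∫ t in Ioi x, g t with hG
  have hGanti : Antitone G := by
    intro u v huv
    exact setIntegral_mono_set hgint.integrableOn
      (ae_of_all _ fun t => hg0 t) (HasSubset.Subset.eventuallyLE (Ioi_subset_Ioi huv))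
  have hGm : Measurable G := hGanti.measurable
  have hG0 : ∀ y, 0 ≤ G y := fun y => setIntegral_nonneg measurableSet_Ioi fun t _ => hg0 t
  set M : ℝ := ∫ t, g t with hM
  have hGleM : ∀ y, G y ≤ M := fun y => setIntegral_le_integral hgint (ae_of_all _ hg0)
  have hInt : ∀ k : ℕ, Integrable (fun t => g t * G t ^ k) := by
    intro k
    apply Integrable.mono' (hgint.mul_const (M ^ k))
      ((hgm.mul (hGm.pow_const k)).aestronglyMeasurable)
    refine ae_of_all _ fun t => ?_
    simp only [Real.norm_eq_abs, Pi.mul_apply]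
    rw [abs_of_nonneg (mul_nonneg (hg0 t) (pow_nonneg (hG0 t) k))]
    exact mul_le_mul_of_nonneg_left (pow_le_pow_left₀ (hG0 t) (hGleM t) k) (hg0 t)
  intro k
  induction k with
  | zero => intro x; simp
  | succ k IH =>
    intro x
    -- the swapped double integral form
    have swap : ∫ t in Ioi x, g t * G t ^ (k+1)
        = ∫ s in Ioi x, (∫ t in Ioi x, (g t * G t ^ k) * (Ioi t).indicator g s) := by
      have step1 : ∫ t in Ioi x, g t * G t ^ (k+1)
          = ∫ t in Ioi x, (∫ s in Ioi x, (g t * G t ^ k) * (Ioi t).indicator g s) := by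
        refine setIntegral_congr_fun measurableSet_Ioi fun t ht => ?_
        have hsub : Ioi x ∩ Ioi t = Ioi t := by
          rw [inter_eq_right]; exact Ioi_subset_Ioi (le_of_lt ht)
        rw [MeasureTheory.integral_const_mul, setIntegral_indicator measurableSet_Ioi, hsub]
        rw [pow_succ]
        ring
      rw [step1]
      apply MeasureTheory.integral_integral_swap
      -- integrability on the product
      have hmeas : AEStronglyMeasurable
          (Function.uncurry fun t s => (g t * G t ^ k) * (Ioi t).indicator g s)
          ((volume.restrict (Ioi x)).prod (volume.restrict (Ioi x))) := by
        apply Measurable.aestronglyMeasurable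
        have : (Function.uncurry fun t s => (g t * G t ^ k) * (Ioi t).indicator g s)
            = fun z : ℝ × ℝ => if z.1 < z.2 then (g z.1 * G z.1 ^ k) * g z.2 else 0 := by
          funext z
          simp only [Function.uncurry, Set.indicator, mem_Ioi]
          split <;> ring
        rw [this]
        exact Measurable.ite (measurableSet_lt measurable_fst measurable_snd)
          (((hgm.comp measurable_fst).mul ((hGm.comp measurable_fst).pow_const k)).mul
            (hgm.comp measurable_snd)) measurable_const
      apply Integrable.mono' (g := fun z : ℝ × ℝ => (g z.1 * M ^ k) * g z.2)
        ((hgint.restrict.mul_const (M ^ k)).mul_prod hgint.restrict) hmeas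
      refine ae_of_all _ fun z => ?_
      rw [Function.uncurry, Real.norm_eq_abs, abs_of_nonneg
        (mul_nonneg (mul_nonneg (hg0 z.1) (pow_nonneg (hG0 z.1) k)) (indicator_nonneg (fun s _ => hg0 s) _))]
      have h1 : (Ioi z.1).indicator g z.2 ≤ g z.2 := indicator_le_self' (fun s _ => hg0 s) z.2
      have h2 : g z.1 * G z.1 ^ k ≤ g z.1 * M ^ k :=
        mul_le_mul_of_nonneg_left (pow_le_pow_left₀ (hG0 z.1) (hGleM z.1) k) (hg0 z.1)
      have hM0 : 0 ≤ M := integral_nonneg hg0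
      exact mul_le_mul h2 h1 (indicator_nonneg (fun s _ => hg0 s) _)
        (mul_nonneg (hg0 z.1) (pow_nonneg hM0 k))
    -- evaluate inner integral for each s > x
    have inner : ∀ s ∈ Ioi x, (∫ t in Ioi x, (g t * G t ^ k) * (Ioi t).indicator g s)
        = g s * ((G x)^(k+1)/(k+1) - (G s)^(k+1)/(k+1)) := by
      intro s hs
      have hrw : (fun t => (g t * G t ^ k) * (Ioi t).indicator g s)
          = (Iio s).indicator (fun t => (g t * G t ^ k) * g s) := by
        funext t
        simp only [Set.indicator, mem_Ioi, mem_Iio]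
        split <;> ring_nf <;> simp_all
      rw [hrw, setIntegral_indicator measurableSet_Iio]
      have hIoo : Ioi x ∩ Iio s = Ioo x s := Ioi_inter_Iio
      rw [hIoo]
      have hsplit : ∫ t in Ioo x s, (g t * G t ^ k) * g s
          = (∫ t in Ioi x, g t * G t ^ k) * g s - (∫ t in Ioi s, g t * G t ^ k) * g s := by
        have hunion : Ioo x s ∪ Ici s = Ioi x := Ioo_union_Ici_eq_Ioi hs
        have hdisj : Disjoint (Ioo x s) (Ici s) := by
          rw [Set.disjoint_left]
          rintro a ⟨_, h2⟩ h3
          exact absurd h3 (not_le.mpr h2)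
        have := MeasureTheory.setIntegral_union hdisj measurableSet_Ici
          (((hInt k).mul_const (g s)).integrableOn (s := Ioo x s))
          (((hInt k).mul_const (g s)).integrableOn (s := Ici s))
        rw [hunion] at this
        rw [integral_Ici_eq_integral_Ioi] at this
        simp only [MeasureTheory.integral_mul_const] at this ⊢
        linarith
      rw [hsplit, IH x, IH s]
      ring
    rw [swap, setIntegral_congr_fun measurableSet_Ioi inner]
    -- now compute the outer integral
    have houter : ∫ s in Ioi x, g s * ((G x)^(k+1)/(k+1) - (G s)^(k+1)/(k+1))
        = G x * ((G x)^(k+1)/(k+1)) - (∫ s in Ioi x, g s * G s ^ (k+1)) / (k+1) := by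
      have h1 : Integrable (fun s => g s * ((G x)^(k+1)/(k+1))) (volume.restrict (Ioi x)) :=
        hgint.restrict.mul_const _
      have h2 : Integrable (fun s => g s * G s ^ (k+1) / (k+1)) (volume.restrict (Ioi x)) :=
        ((hInt (k+1)).restrict).div_const _
      have : (fun s => g s * ((G x)^(k+1)/(k+1) - (G s)^(k+1)/(k+1)))
          = fun s => g s * ((G x)^(k+1)/(k+1)) - g s * G s ^ (k+1) / (k+1) := by
        funext s; ring
      rw [this, integral_sub h1 h2, integral_mul_const, integral_div]
    rw [houter]
    -- solve the linear equation
    have hEq : ∫ s in Ioi x, g s * G s ^ (k+1)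
        = G x * (G x ^ (k+1) / (k+1)) - (∫ s in Ioi x, g s * G s ^ (k+1)) / (k+1) := by
      calc ∫ s in Ioi x, g s * G s ^ (k+1)
          = ∫ s in Ioi x, g s * ((G x)^(k+1)/(k+1) - (G s)^(k+1)/(k+1)) := by
            rw [← setIntegral_congr_fun measurableSet_Ioi inner, ← swap]
        _ = G x * (G x ^ (k+1) / (k+1)) - (∫ s in Ioi x, g s * G s ^ (k+1)) / (k+1) := houter
    have hk1 : ((k:ℝ)+1) ≠ 0 := by positivity
    have hk2 : ((k:ℝ)+2) ≠ 0 := by positivity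
    have hcast : ((k+1:ℕ):ℝ) + 1 = (k:ℝ) + 2 := by push_cast; ring
    rw [hcast]
    field_simp at hEq ⊢
    nlinarith [hEq, pow_succ (G x) (k+1)]

/-- The integral operator `(Φ f)(x) = ∫_x^∞ D(t-x,λ) q(t) f(t) dt`. -/
noncomputable def Phi (q : ℝ → ℂ) (lam : ℂ) (f : ℝ → ℂ) : ℝ → ℂ :=
  fun x => ∫ t in Set.Ioi x, D lam (t - x) * q t * f t

theorem iterate_Phi_bound_compact_support (lam : ℂ) (him : 0 ≤ lam.im) (hne : lam ≠ 0)
    (q : ℝ → ℂ) (hq : Integrable q)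
    (hsupp : ∀ᵐ t ∂(volume : Measure ℝ),
      t ∉ Set.Icc (-(1 / ‖lam‖)) (1 / ‖lam‖) → q t = 0)
    (f : ℝ → ℂ) (hf : Measurable f) (C : ℝ) (hC : ∀ x, ‖f x‖ ≤ C)
    (n : ℕ) (hn : 1 ≤ n) (x : ℝ) :
    ‖(Phi q lam)^[n] f x‖ ≤
      (3 * (∫ t, ‖q t‖) / (n * ‖lam‖)) ^ n / n.factorial * C := by
  classical
  rw [one_div] at hsupp
  have hlam : 0 < ‖lam‖ := norm_pos_iff.mpr hne
  set aval : ℝ := (‖lam‖)⁻¹ with ha_def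
  have ha : 0 < aval := inv_pos.mpr hlam
  have hC0 : 0 ≤ C := le_trans (norm_nonneg _) (hC 0)
  have hn0 : 0 < (n : ℝ) := by exact_mod_cast hn
  -- measurable representative of q
  obtain ⟨q', hq'm, hqq'⟩ : ∃ q' : ℝ → ℂ, StronglyMeasurable q' ∧ q =ᵐ[volume] q' :=
    ⟨hq.1.mk q, hq.1.stronglyMeasurable_mk, hq.1.ae_eq_mk⟩
  have hPhi_eq : Phi q lam = Phi q' lam := by
    funext f' x'
    exact integral_congr_ae (ae_restrict_of_ae (hqq'.mono fun t ht => by simp only [ht]))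
  rw [hPhi_eq]
  have hq' : Integrable q' := hq.congr hqq'
  have hsupp' : ∀ᵐ t ∂(volume : Measure ℝ), t ∉ Icc (-aval) aval → q' t = 0 := by
    filter_upwards [hsupp, hqq'] with t h1 h2 ht
    rw [← h2]; exact h1 ht
  -- the comparison function g and its integral G
  set g : ℝ → ℝ := fun t => Set.indicator (Icc (-aval) aval) (fun t => ‖q' t‖) t with hg_def
  have hgm : Measurable g := (hq'm.measurable.norm).indicator measurableSet_Icc
  have hg0 : ∀ t, 0 ≤ g t := fun t => Set.indicator_nonneg (fun s _ => norm_nonneg _) t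
  have hgint : Integrable g := (hq'.norm).indicator measurableSet_Icc
  have hgq' : ∀ᵐ t ∂(volume : Measure ℝ), ‖q' t‖ = g t := by
    filter_upwards [hsupp'] with t h2
    by_cases ht : t ∈ Icc (-aval) aval
    · rw [hg_def]; simp [Set.indicator_of_mem ht]
    · rw [hg_def]; simp [Set.indicator_of_notMem ht, h2 ht]
  set M : ℝ := ∫ t, ‖q t‖ with hM_def
  have hMg : ∫ t, g t = M := by
    rw [hM_def]
    refine integral_congr_ae ?_
    filter_upwards [hgq', hqq'] with t h1 h2
    rw [← h1, h2]
  have hM0 : 0 ≤ M := by rw [← hMg]; exact integral_nonneg hg0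
  set G : ℝ → ℝ := fun y => ∫ t in Ioi y, g t with hG_def
  have hGanti : Antitone G := by
    intro u v huv
    exact setIntegral_mono_set hgint.integrableOn
      (ae_of_all _ fun t => hg0 t) (HasSubset.Subset.eventuallyLE (Ioi_subset_Ioi huv))
  have hGm : Measurable G := hGanti.measurable
  have hG0 : ∀ y, 0 ≤ G y := fun y => setIntegral_nonneg measurableSet_Ioi fun t _ => hg0 t
  have hGleM : ∀ y, G y ≤ M := by
    intro y
    rw [← hMg]
    exact setIntegral_le_integral hgint (ae_of_all _ hg0)
  have hIntk : ∀ k : ℕ, Integrable (fun t => g t * G t ^ k) := by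
    intro k
    apply Integrable.mono' (hgint.mul_const (M ^ k))
      ((hgm.mul (hGm.pow_const k)).aestronglyMeasurable)
    refine ae_of_all _ fun t => ?_
    simp only [Real.norm_eq_abs, Pi.mul_apply]
    rw [abs_of_nonneg (mul_nonneg (hg0 t) (pow_nonneg (hG0 t) k))]
    exact mul_le_mul_of_nonneg_left (pow_le_pow_left₀ (hG0 t) (hGleM t) k) (hg0 t)
  -- the exponent and weight
  set c : ℝ := n / (3 * aval) with hc_def
  have hc : 0 < c := by positivity
  set ψ : ℝ → ℝ := fun y => max (min y aval) (-(2 * aval)) with hψ_def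
  have hψub : ∀ y, ψ y ≤ aval := fun y => max_le (min_le_right _ _) (by linarith)
  have hψlb : ∀ y, -(2 * aval) ≤ ψ y := fun y => le_max_right _ _
  have hψIcc : ∀ t ∈ Icc (-aval) aval, ψ t = t := by
    rintro t ⟨h1, h2⟩
    rw [hψ_def]
    simp only [min_eq_left h2]
    exact max_eq_left (by linarith)
  -- bounds on the kernel D
  have hznorm : ∀ y : ℝ, 0 < y → ‖2 * Complex.I * lam * (y : ℂ)‖ =
      2 * ‖lam‖ * y := by
    intro y hy
    simp [norm_mul, abs_of_pos hy, abs_of_nonneg]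
    try ring
  have hzre : ∀ y : ℝ, 0 < y → (2 * Complex.I * lam * (y : ℂ)).re ≤ 0 := by
    intro y hy
    have : (2 * Complex.I * lam * (y : ℂ)).re = -2 * lam.im * y := by
      simp [Complex.mul_re, Complex.mul_im]
      try ring
    rw [this]
    nlinarith
  have hexple : ∀ y : ℝ, 0 < y → ‖Complex.exp (2 * Complex.I * lam * y)‖ ≤ 1 := by
    intro y hy
    rw [Complex.norm_exp]
    exact Real.exp_le_one_iff.mpr (hzre y hy)
  have hD1 : ∀ y : ℝ, ‖D lam y‖ ≤ aval := by
    intro y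
    rw [D]
    split
    · rename_i hy
      rw [norm_div]
      have h2 : ‖(2 * Complex.I * lam)‖ = 2 * ‖lam‖ := by
        simp [norm_mul]
      rw [h2]
      have hnum : ‖Complex.exp (2 * Complex.I * lam * y) - 1‖ ≤ 2 := by
        have hex := hexple y hy
        calc ‖Complex.exp (2 * Complex.I * lam * y) - 1‖
            ≤ ‖Complex.exp (2 * Complex.I * lam * y)‖ + ‖(1:ℂ)‖ := norm_sub_le _ _
          _ ≤ 1 + 1 := by rw [norm_one]; linarith
          _ = 2 := by norm_num
      rw [ha_def, div_le_iff₀ (by positivity)]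
      calc ‖Complex.exp (2 * Complex.I * lam * y) - 1‖ ≤ 2 := hnum
        _ = (‖lam‖)⁻¹ * (2 * ‖lam‖) := by field_simp
    · simp [ha.le]
  have hD2 : ∀ y : ℝ, 0 < y → ‖D lam y‖ ≤ y := by
    intro y hy
    rw [D, if_pos hy, norm_div]
    have h2 : ‖(2 * Complex.I * lam)‖ = 2 * ‖lam‖ := by simp [norm_mul]
    rw [h2, div_le_iff₀ (by positivity)]
    calc ‖Complex.exp (2 * Complex.I * lam * y) - 1‖
        ≤ ‖(2 * Complex.I * lam * (y:ℂ))‖ := norm_exp_sub_one_le_of_re_nonpos (hzre y hy)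
      _ = 2 * ‖lam‖ * y := hznorm y hy
      _ = y * (2 * ‖lam‖) := by ring
  -- the kernel estimate
  have hK : ∀ x' t : ℝ, x' < t → t ∈ Icc (-aval) aval →
      ‖D lam (t - x')‖ ≤ (c * Real.exp 1)⁻¹ * Real.exp (c * (ψ t - ψ x')) := by
    intro x' t hlt htI
    set u : ℝ := min (t - x') aval with hu_def
    have hu0 : 0 ≤ u := le_min (by linarith) ha.le
    have hDu : ‖D lam (t - x')‖ ≤ u := le_min (hD2 _ (by linarith)) (hD1 _)
    have hexp : c * u ≤ Real.exp (c * u - 1) := by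
      have := Real.add_one_le_exp (c * u - 1)
      linarith
    have hue : u ≤ (c * Real.exp 1)⁻¹ * Real.exp (c * u) := by
      have hsplit : Real.exp (c * u) = Real.exp (c * u - 1) * Real.exp 1 := by
        rw [← Real.exp_add]; ring_nf
      have hce : 0 < c * Real.exp 1 := by positivity
      rw [le_inv_mul_iff₀ hce, hsplit]
      have := mul_le_mul_of_nonneg_right hexp (Real.exp_pos 1).le
      nlinarith
    have humin : u ≤ ψ t - ψ x' := by
      have hψt : ψ t = t := hψIcc t htI
      obtain ⟨ht1, ht2⟩ := htI
      rcases le_or_gt (-(2 * aval)) x' with hx | hx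
      · have hψx : ψ x' = x' := by
          rw [hψ_def]
          simp only [min_eq_left (by linarith : x' ≤ aval)]
          exact max_eq_left hx
        rw [hψt, hψx]
        exact le_trans (min_le_left _ _) le_rfl
      · have hψx : ψ x' = -(2 * aval) := by
          rw [hψ_def]
          simp only [min_eq_left (by linarith : x' ≤ aval)]
          exact max_eq_right (by linarith)
        rw [hψt, hψx]
        calc u ≤ aval := min_le_right _ _
          _ ≤ t - -(2 * aval) := by linarith
    calc ‖D lam (t - x')‖ ≤ u := hDu
      _ ≤ (c * Real.exp 1)⁻¹ * Real.exp (c * u) := hue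
      _ ≤ (c * Real.exp 1)⁻¹ * Real.exp (c * (ψ t - ψ x')) := by
          apply mul_le_mul_of_nonneg_left _ (by positivity : (0:ℝ) ≤ (c * Real.exp 1)⁻¹)
          exact Real.exp_le_exp.mpr (mul_le_mul_of_nonneg_left humin hc.le)
  -- measurability of D
  have hDm : Measurable (D lam) := by
    unfold D
    apply Measurable.ite
    · exact measurableSet_lt measurable_const measurable_id
    · fun_prop
    · exact measurable_const
  -- the main induction
  have main : ∀ k : ℕ, Measurable ((Phi q' lam)^[k] f) ∧
      ∀ y, ‖(Phi q' lam)^[k] f y‖ ≤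
        C * ((c * Real.exp 1)⁻¹) ^ k * Real.exp (c * (aval - ψ y)) * G y ^ k / k.factorial := by
    intro k
    induction k with
    | zero =>
      refine ⟨hf, fun y => ?_⟩
      simp only [Function.iterate_zero, id_eq, pow_zero, Nat.factorial_zero, Nat.cast_one,
        mul_one, one_mul, div_one]
      have h1 : 1 ≤ Real.exp (c * (aval - ψ y)) :=
        Real.one_le_exp (mul_nonneg hc.le (sub_nonneg.mpr (hψub y)))
      calc ‖f y‖ ≤ C := hC y
        _ = C * 1 := (mul_one C).symm
        _ ≤ C * Real.exp (c * (aval - ψ y)) := mul_le_mul_of_nonneg_left h1 hC0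
    | succ k IH =>
      obtain ⟨hmk, hbk⟩ := IH
      set fk : ℝ → ℂ := (Phi q' lam)^[k] f with hfk_def
      have hiter : (Phi q' lam)^[k+1] f = Phi q' lam fk := by
        rw [Function.iterate_succ_apply']
      rw [hiter]
      have hjoint : Measurable (fun p : ℝ × ℝ =>
          if p.1 < p.2 then D lam (p.2 - p.1) * q' p.2 * fk p.2 else 0) := by
        exact Measurable.ite (measurableSet_lt measurable_fst measurable_snd)
          (((hDm.comp (measurable_snd.sub measurable_fst)).mul
            (hq'm.measurable.comp measurable_snd)).mul (hmk.comp measurable_snd))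
          measurable_const
      constructor
      · -- measurability
        have heq : Phi q' lam fk = fun x' => ∫ t, (fun p : ℝ × ℝ =>
            if p.1 < p.2 then D lam (p.2 - p.1) * q' p.2 * fk p.2 else 0) (x', t) := by
          funext x'
          show (∫ t in Set.Ioi x', D lam (t - x') * q' t * fk t) = _
          rw [← integral_indicator measurableSet_Ioi]
          have hpt : ∀ t : ℝ, (Ioi x').indicator (fun t => D lam (t - x') * q' t * fk t) t
              = (if x' < t then D lam (t - x') * q' t * fk t else 0) := fun t => by
            rw [Set.indicator_apply]; simp only [mem_Ioi]
          simp only [hpt]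
        rw [heq]
        exact (hjoint.stronglyMeasurable.integral_prod_right').measurable
      · -- the bound
        intro y
        set Const : ℝ := C * ((c * Real.exp 1)⁻¹) ^ (k+1) *
          Real.exp (c * (aval - ψ y)) / k.factorial with hConst_def
        have hConst0 : 0 ≤ Const := by positivity
        have hdomint : Integrable (fun t => Const * (g t * G t ^ k))
            (volume.restrict (Ioi y)) := ((hIntk k).const_mul Const).restrict
        have hintegrand_meas : AEStronglyMeasurable (fun t => D lam (t - y) * q' t * fk t)
            (volume.restrict (Ioi y)) := by
          apply Measurable.aestronglyMeasurable
          exact ((hDm.comp (measurable_id.sub measurable_const)).mul hq'm.measurable).mul hmk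
        have hae : ∀ᵐ t ∂(volume.restrict (Ioi y)),
            ‖D lam (t - y) * q' t * fk t‖ ≤ Const * (g t * G t ^ k) := by
          filter_upwards [ae_restrict_of_ae hsupp', ae_restrict_of_ae hgq',
            self_mem_ae_restrict measurableSet_Ioi] with t h0 h1 ht
          by_cases htI : t ∈ Icc (-aval) aval
          · have hnorm : ‖D lam (t - y) * q' t * fk t‖ =
                ‖D lam (t - y)‖ * ‖q' t‖ * ‖fk t‖ := by simp [norm_mul]
            rw [hnorm]
            calc ‖D lam (t - y)‖ * ‖q' t‖ * ‖fk t‖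
                ≤ ((c * Real.exp 1)⁻¹ * Real.exp (c * (ψ t - ψ y))) * g t *
                  (C * ((c * Real.exp 1)⁻¹) ^ k * Real.exp (c * (aval - ψ t)) * G t ^ k /
                    k.factorial) := by
                  apply mul_le_mul _ (hbk t) (norm_nonneg _)
                    (mul_nonneg (mul_nonneg (by positivity) (Real.exp_pos _).le) (hg0 t))
                  apply mul_le_mul (hK y t ht htI) (le_of_eq h1) (norm_nonneg _) (by positivity)
              _ = Const * (g t * G t ^ k) := by
                  rw [hConst_def]
                  have hexpmul : Real.exp (c * (ψ t - ψ y)) * Real.exp (c * (aval - ψ t)) =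
                      Real.exp (c * (aval - ψ y)) := by
                    rw [← Real.exp_add]; ring_nf
                  rw [← hexpmul]
                  ring
          · rw [h0 htI]
            simp only [mul_zero, zero_mul, norm_zero]
            exact mul_nonneg hConst0 (mul_nonneg (hg0 t) (pow_nonneg (hG0 t) k))
        calc ‖Phi q' lam fk y‖ ≤ ∫ t in Ioi y, Const * (g t * G t ^ k) :=
              norm_integral_le_of_norm_le hdomint hae
          _ = Const * ∫ t in Ioi y, g t * G t ^ k := integral_const_mul Const _
          _ = Const * (G y ^ (k+1) / (k+1)) := by rw [key_integral g hgm hg0 hgint k y]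
          _ = C * ((c * Real.exp 1)⁻¹) ^ (k+1) * Real.exp (c * (aval - ψ y)) * G y ^ (k+1) /
              (k+1).factorial := by
            have hfact : (((k+1).factorial : ℕ) : ℝ) = (k.factorial : ℝ) * ((k:ℝ) + 1) := by
              rw [Nat.factorial_succ]; push_cast; ring
            rw [hConst_def, div_mul_div_comm, hfact]
  -- final assembly
  obtain ⟨-, hb⟩ := main n
  have hbx := hb x
  have hc3 : c * (3 * aval) = n := by
    rw [hc_def]
    field_simp
  have hE : Real.exp (c * (aval - ψ x)) ≤ Real.exp 1 ^ n := by
    rw [Real.exp_one_pow]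
    apply Real.exp_le_exp.mpr
    calc c * (aval - ψ x) ≤ c * (3 * aval) := by
          apply mul_le_mul_of_nonneg_left _ hc.le
          have := hψlb x
          linarith
      _ = n := hc3
  have hGM : G x ^ n ≤ M ^ n := pow_le_pow_left₀ (hG0 x) (hGleM x) n
  have hid : (3 * M / (n * ‖lam‖)) ^ n / n.factorial * C =
      C * ((c * Real.exp 1)⁻¹) ^ n * Real.exp 1 ^ n * M ^ n / n.factorial := by
    have habs : ‖lam‖ = aval⁻¹ := by rw [ha_def, inv_inv]
    have h1 : 3 * M / (n * ‖lam‖) = M / c := by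
      rw [habs, hc_def]
      field_simp
    rw [h1]
    have hexpne : Real.exp 1 ≠ 0 := (Real.exp_pos 1).ne'
    rw [mul_inv, mul_pow, div_pow]
    have hcn : c ≠ 0 := hc.ne'
    field_simp
    rw [one_div, one_div, inv_pow, inv_pow]
    field_simp
  calc ‖(Phi q' lam)^[n] f x‖
      ≤ C * ((c * Real.exp 1)⁻¹) ^ n * Real.exp (c * (aval - ψ x)) * G x ^ n / n.factorial :=
        hbx
    _ ≤ C * ((c * Real.exp 1)⁻¹) ^ n * Real.exp 1 ^ n * M ^ n / n.factorial := by
        have hfpos : (0:ℝ) < n.factorial := by exact_mod_cast n.factorial_pos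
        have hCA : (0:ℝ) ≤ C * ((c * Real.exp 1)⁻¹) ^ n :=
          mul_nonneg hC0 (by positivity)
        have h1 : C * ((c * Real.exp 1)⁻¹) ^ n * Real.exp (c * (aval - ψ x)) * G x ^ n ≤
            C * ((c * Real.exp 1)⁻¹) ^ n * Real.exp 1 ^ n * M ^ n :=
          mul_le_mul (mul_le_mul_of_nonneg_left hE hCA) hGM (pow_nonneg (hG0 x) n)
            (mul_nonneg hCA (by positivity))
        exact div_le_div_of_nonneg_right h1 hfpos.le
    _ = (3 * M / (n * ‖lam‖)) ^ n / n.factorial * C := hid.symm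
end

section
/- For every real c ≥ 0, one has 1 + ∑_{n=1}^∞ (3c)ⁿ/(nⁿ · n!) ≤ exp(3√c). -/
theorem series_bound_exp_sqrt (c : ℝ) (hc : 0 ≤ c) :
    1 + ∑' n : ℕ, (3 * c) ^ (n + 1) /
        ((n + 1 : ℝ) ^ (n + 1) * (Nat.factorial (n + 1) : ℝ))
      ≤ Real.exp (3 * Real.sqrt c) := by
  set x : ℝ := 3 * Real.sqrt c with hx
  have hx0 : 0 ≤ x := by positivity
  set g : ℕ → ℝ := fun k => x ^ k / Nat.factorial k with hg
  set f : ℕ → ℝ := fun n => x ^ (2 * n) / Nat.factorial (2 * n) with hf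
  have hgsum : Summable g := Real.summable_pow_div_factorial x
  have hgnonneg : ∀ k, 0 ≤ g k := fun k => by positivity
  have hfg : ∀ n, f n = g (2 * n) := fun n => rfl
  have hfsum : Summable f := by
    exact hgsum.comp_injective (i := fun n => 2 * n) (fun a b (h : 2 * a = 2 * b) => by omega)
  -- key termwise bound
  have hterm : ∀ n : ℕ, (3 * c) ^ (n + 1) /
      ((n + 1 : ℝ) ^ (n + 1) * (Nat.factorial (n + 1) : ℝ)) ≤ f (n + 1) := by
    intro n
    set m := n + 1 with hm
    have hm0 : (0 : ℝ) < m := by positivity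
    have hxsq : x ^ (2 * m) = (9 * c) ^ m := by
      rw [pow_mul, hx, mul_pow, Real.sq_sqrt hc]; norm_num
    have hfac : ((2 * m).factorial : ℝ) ≤ 2 ^ m * (m : ℝ) ^ m * m.factorial := by
      have := Nat.factorial_two_mul_le m
      calc ((2 * m).factorial : ℝ) ≤ ((2 * m) ^ m * m.factorial : ℕ) := by exact_mod_cast this
        _ = 2 ^ m * (m : ℝ) ^ m * m.factorial := by push_cast [mul_pow]; ring
    have hcast : ((n : ℝ) + 1) = (m : ℝ) := by push_cast [hm]; ring
    show _ ≤ x ^ (2 * m) / ((2 * m).factorial : ℝ)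
    rw [hcast, hxsq, div_le_div_iff₀ (by positivity) (by positivity)]
    calc (3 * c) ^ m * ((2 * m).factorial : ℝ)
        ≤ (3 * c) ^ m * (2 ^ m * (m : ℝ) ^ m * m.factorial) := by
          apply mul_le_mul_of_nonneg_left hfac; positivity
      _ = (6 * c) ^ m * ((m : ℝ) ^ m * m.factorial) := by
          rw [show ((6:ℝ) * c) ^ m = 2 ^ m * (3 * c) ^ m from by
            rw [← mul_pow]; congr 1; ring]
          ring
      _ ≤ (9 * c) ^ m * ((m : ℝ) ^ m * m.factorial) := by
          apply mul_le_mul_of_nonneg_right (pow_le_pow_left₀ (by positivity) (by linarith) m)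
          positivity
  have htsum : Summable fun n : ℕ => (3 * c) ^ (n + 1) /
      ((n + 1 : ℝ) ^ (n + 1) * (Nat.factorial (n + 1) : ℝ)) := by
    apply Summable.of_nonneg_of_le (fun n => by positivity) hterm
    exact hfsum.comp_injective (fun a b => by omega)
  have h1 : 1 + (∑' n : ℕ, (3 * c) ^ (n + 1) /
      ((n + 1 : ℝ) ^ (n + 1) * (Nat.factorial (n + 1) : ℝ))) ≤ ∑' n, f n := by
    rw [Summable.tsum_eq_zero_add hfsum]
    have : f 0 = 1 := by simp [hf]
    rw [this]
    gcongr
    exact hfsum.comp_injective (fun a b => by omega)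
    exact hterm _
  have h2 : ∑' n, f n ≤ ∑' k, g k := by
    apply Summable.tsum_le_tsum_of_inj (fun n => 2 * n)
      (fun a b h => Nat.eq_of_mul_eq_mul_left two_pos h)
      (fun k _ => hgnonneg k) (fun n => le_of_eq (hfg n))
    · exact hgsum.comp_injective (i := fun n => 2 * n) (fun a b (h : 2 * a = 2 * b) => by omega)
    · exact hgsum
  have h3 : ∑' k, g k = Real.exp x := by
    rw [Real.exp_eq_exp_ℝ, NormedSpace.exp_eq_tsum_div]
  linarith
end

section
/- Let z ∈ ℂ with Im z > 0 and let ζ₁, ζ₂ ∈ ℂ with Im ζ₁ ≥ 0 and Im ζ₂ ≥ 0. Then |(z − ζ₁)/(z − conj(ζ₁)) − (z − ζ₂)/(z − conj(ζ₂))| ≤ 2|ζ₁ − ζ₂|/Im z. -/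
theorem blaschke_factor_lipschitz (z ζ₁ ζ₂ : ℂ) (hz : 0 < z.im)
    (h1 : 0 ≤ ζ₁.im) (h2 : 0 ≤ ζ₂.im) :
    ‖(z - ζ₁) / (z - starRingEnd ℂ ζ₁) - (z - ζ₂) / (z - starRingEnd ℂ ζ₂)‖
      ≤ 2 * ‖ζ₁ - ζ₂‖ / z.im := by
  set c₁ := starRingEnd ℂ ζ₁ with hc₁
  set c₂ := starRingEnd ℂ ζ₂ with hc₂
  have himA : (z - c₁).im = z.im + ζ₁.im := by simp [hc₁, Complex.sub_im, Complex.conj_im]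
  have himB : (z - c₂).im = z.im + ζ₂.im := by simp [hc₂, Complex.sub_im, Complex.conj_im]
  have hAim : z.im ≤ (z - c₁).im := by rw [himA]; linarith
  have hBim : z.im ≤ (z - c₂).im := by rw [himB]; linarith
  have hAabs : z.im ≤ ‖z - c₁‖ :=
    hAim.trans ((Complex.abs_im_le_norm _).trans' (le_abs_self _))
  have hBabs : z.im ≤ ‖z - c₂‖ :=
    hBim.trans ((Complex.abs_im_le_norm _).trans' (le_abs_self _))
  have hA : z - c₁ ≠ 0 := by
    intro h; rw [h] at hAim; simp at hAim; linarith
  have hB : z - c₂ ≠ 0 := by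
    intro h; rw [h] at hBim; simp at hBim; linarith
  have hle : ‖z - ζ₂‖ ≤ ‖z - c₂‖ := by
    have e1 : ‖z - ζ₂‖ ^ 2 = (z - ζ₂).re ^ 2 + (z - ζ₂).im ^ 2 := by
      rw [Complex.sq_norm, Complex.normSq_apply]; ring
    have e2 : ‖z - c₂‖ ^ 2 = (z - c₂).re ^ 2 + (z - c₂).im ^ 2 := by
      rw [Complex.sq_norm, Complex.normSq_apply]; ring
    have hre : (z - ζ₂).re = (z - c₂).re := by
      simp [hc₂, Complex.sub_re, Complex.conj_re]
    have him2 : ((z - ζ₂).im) ^ 2 ≤ ((z - c₂).im) ^ 2 := by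
      rw [himB, Complex.sub_im]; nlinarith
    have hsq : ‖z - ζ₂‖ ^ 2 ≤ ‖z - c₂‖ ^ 2 := by
      rw [e1, e2, hre]; linarith
    exact (pow_le_pow_iff_left₀ (norm_nonneg _) (norm_nonneg _) two_ne_zero).mp hsq
  have hcc : ‖c₁ - c₂‖ = ‖ζ₁ - ζ₂‖ := by
    rw [hc₁, hc₂, ← map_sub, Complex.norm_conj]
  have key : (z - ζ₁) / (z - c₁) - (z - ζ₂) / (z - c₂)
      = (ζ₂ - ζ₁) / (z - c₁) + (z - ζ₂) / (z - c₂) * ((c₁ - c₂) / (z - c₁)) := by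
    field_simp
    ring
  rw [key]
  have hsym : ‖ζ₂ - ζ₁‖ = ‖ζ₁ - ζ₂‖ := by
    rw [← neg_sub, norm_neg]
  have t1 : ‖(ζ₂ - ζ₁) / (z - c₁)‖ ≤ ‖ζ₁ - ζ₂‖ / z.im := by
    rw [norm_div, hsym]
    gcongr
  have t2 : ‖(z - ζ₂) / (z - c₂) * ((c₁ - c₂) / (z - c₁))‖
      ≤ ‖ζ₁ - ζ₂‖ / z.im := by
    rw [norm_mul, norm_div, norm_div, hcc]
    have hq : ‖z - ζ₂‖ / ‖z - c₂‖ ≤ 1 := by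
      rw [div_le_one (lt_of_lt_of_le hz hBabs)]; exact hle
    calc ‖z - ζ₂‖ / ‖z - c₂‖ * (‖ζ₁ - ζ₂‖ / ‖z - c₁‖)
        ≤ 1 * (‖ζ₁ - ζ₂‖ / z.im) := by
          gcongr
      _ = ‖ζ₁ - ζ₂‖ / z.im := one_mul _
  calc ‖_‖ ≤ _ + _ := norm_add_le _ _
    _ ≤ ‖ζ₁ - ζ₂‖ / z.im + ‖ζ₁ - ζ₂‖ / z.im := add_le_add t1 t2
    _ = 2 * ‖ζ₁ - ζ₂‖ / z.im := by ring
end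

section
/- Let (λ_n)_{n∈ℕ} be a sequence of complex numbers with Im λ_n ≥ 0 for all n and ∑_{n} |λ_n| < ∞. Then for every z ∈ ℂ with Im z > 0 the infinite product B(z) := ∏_{n=1}^∞ (z − λ_n)/(z − conj(λ_n)) converges (the factors are multipliable), |B(z)| ≤ 1, and the function z ↦ B(z) is holomorphic on the open upper half-plane ℂ₊. -/
open Filter Finset

lemma blaschke_aux_tri (a c b : ℂ) : ‖a - b‖ ≤ ‖a - c‖ + ‖c - b‖ := by
  simpa [dist_eq_norm] using dist_triangle a c b

/-- `‖∏ (1 + gₙ) - 1‖ ≤ ∏ (1 + ‖gₙ‖) - 1`. -/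
lemma blaschke_aux_prod_sub_one (g : ℕ → ℂ) (F : Finset ℕ) :
    ‖∏ n ∈ F, (1 + g n) - 1‖ ≤ ∏ n ∈ F, (1 + ‖g n‖) - 1 := by
  induction F using Finset.cons_induction with
  | empty => simp
  | cons a F ha ih =>
    rw [Finset.prod_cons, Finset.prod_cons]
    have h1 : (1 + g a) * ∏ n ∈ F, (1 + g n) - 1
        = (1 + g a) * (∏ n ∈ F, (1 + g n) - 1) + g a := by ring
    have hQ1 : (1:ℝ) ≤ ∏ n ∈ F, (1 + ‖g n‖) := by
      calc (1:ℝ) = ∏ _n ∈ F, (1:ℝ) := by simp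
        _ ≤ ∏ n ∈ F, (1 + ‖g n‖) :=
          Finset.prod_le_prod (fun n _ => by positivity)
            (fun n _ => by linarith [norm_nonneg (g n)])
    calc ‖(1 + g a) * ∏ n ∈ F, (1 + g n) - 1‖
        ≤ ‖1 + g a‖ * ‖∏ n ∈ F, (1 + g n) - 1‖ + ‖g a‖ := by
          rw [h1]; exact (norm_add_le _ _).trans (by rw [norm_mul])
      _ ≤ (1 + ‖g a‖) * (∏ n ∈ F, (1 + ‖g n‖) - 1) + ‖g a‖ := by
          have h2 : ‖(1:ℂ) + g a‖ ≤ 1 + ‖g a‖ := by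
            simpa using norm_add_le (1:ℂ) (g a)
          have h3 : (0:ℝ) ≤ ∏ n ∈ F, (1 + ‖g n‖) - 1 := by linarith
          exact add_le_add (mul_le_mul h2 ih (norm_nonneg _) (by positivity)) le_rfl
      _ = (1 + ‖g a‖) * ∏ n ∈ F, (1 + ‖g n‖) - 1 := by ring

/-- If all `‖f n‖ ≤ 1` and `s ⊆ F` then the partial products differ by at most
`exp (∑_{F \ s} ‖f n - 1‖) - 1`. -/
lemma blaschke_aux_prod_diff (f : ℕ → ℂ) (h1 : ∀ n, ‖f n‖ ≤ 1)
    {s F : Finset ℕ} (hsF : s ⊆ F) :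
    ‖∏ n ∈ F, f n - ∏ n ∈ s, f n‖ ≤ Real.exp (∑ n ∈ F \ s, ‖f n - 1‖) - 1 := by
  have hsplit : ∏ n ∈ F, f n = (∏ n ∈ F \ s, f n) * ∏ n ∈ s, f n :=
    (Finset.prod_sdiff hsF).symm
  have hps : ‖∏ n ∈ s, f n‖ ≤ 1 := by
    rw [norm_prod]
    exact Finset.prod_le_one (fun n _ => norm_nonneg _) (fun n _ => h1 n)
  have key : ‖∏ n ∈ F \ s, f n - 1‖ ≤ ∏ n ∈ F \ s, (1 + ‖f n - 1‖) - 1 := by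
    have := blaschke_aux_prod_sub_one (fun n => f n - 1) (F \ s)
    simpa using this
  have key2 : ∏ n ∈ F \ s, (1 + ‖f n - 1‖) ≤ Real.exp (∑ n ∈ F \ s, ‖f n - 1‖) := by
    rw [Real.exp_sum]
    exact Finset.prod_le_prod (fun n _ => by positivity)
      (fun n _ => by rw [add_comm]; exact Real.add_one_le_exp _)
  have hexp1 : (1:ℝ) ≤ Real.exp (∑ n ∈ F \ s, ‖f n - 1‖) := by
    rw [← Real.exp_zero]
    exact Real.exp_le_exp.mpr (Finset.sum_nonneg fun n _ => norm_nonneg _)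
  have hA : ‖∏ n ∈ F \ s, f n - 1‖ ≤ Real.exp (∑ n ∈ F \ s, ‖f n - 1‖) - 1 := by
    linarith [key, key2]
  calc ‖∏ n ∈ F, f n - ∏ n ∈ s, f n‖
      = ‖(∏ n ∈ F \ s, f n - 1) * ∏ n ∈ s, f n‖ := by rw [hsplit]; ring_nf
    _ = ‖∏ n ∈ F \ s, f n - 1‖ * ‖∏ n ∈ s, f n‖ := norm_mul _ _
    _ ≤ (Real.exp (∑ n ∈ F \ s, ‖f n - 1‖) - 1) * 1 :=
        mul_le_mul hA hps (norm_nonneg _) (by linarith)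
    _ = Real.exp (∑ n ∈ F \ s, ‖f n - 1‖) - 1 := mul_one _

/-- Multipliability criterion. -/
lemma blaschke_aux_multipliable (f : ℕ → ℂ) (h1 : ∀ n, ‖f n‖ ≤ 1)
    (hs : Summable fun n => ‖f n - 1‖) : Multipliable f := by
  have hcs : CauchySeq (fun F : Finset ℕ => ∏ n ∈ F, f n) := by
    rw [Metric.cauchySeq_iff]
    intro ε hε
    set t : ℝ := Real.log (1 + ε / 3) with ht
    have htpos : (0:ℝ) < 1 + ε / 3 := by linarith
    have hexp : Real.exp t = 1 + ε / 3 := Real.exp_log htpos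
    obtain ⟨s, hsmall⟩ := summable_iff_vanishing_norm.mp hs t
      (Real.log_pos (by linarith))
    refine ⟨s, fun m hm n hn => ?_⟩
    have bound : ∀ F : Finset ℕ, s ⊆ F →
        ‖∏ k ∈ F, f k - ∏ k ∈ s, f k‖ ≤ ε / 3 := by
      intro F hsF
      have h := blaschke_aux_prod_diff f h1 hsF
      have hd : Disjoint (F \ s) s := Finset.sdiff_disjoint
      have := hsmall (F \ s) hd
      have hsum_le : ∑ k ∈ F \ s, ‖f k - 1‖ < t := by
        have : |∑ k ∈ F \ s, ‖f k - 1‖| < t := by simpa using this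
        exact lt_of_le_of_lt (le_abs_self _) this
      have : Real.exp (∑ k ∈ F \ s, ‖f k - 1‖) ≤ Real.exp t :=
        Real.exp_le_exp.mpr hsum_le.le
      linarith [hexp ▸ this, h]
    have h1' := bound m hm
    have h2' := bound n hn
    rw [dist_eq_norm]
    calc ‖∏ k ∈ m, f k - ∏ k ∈ n, f k‖
        ≤ ‖∏ k ∈ m, f k - ∏ k ∈ s, f k‖ + ‖∏ k ∈ s, f k - ∏ k ∈ n, f k‖ :=
          blaschke_aux_tri _ _ _
      _ ≤ ε / 3 + ε / 3 := by
          rw [norm_sub_rev (∏ k ∈ s, f k)]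
          exact add_le_add h1' h2'
      _ < ε := by linarith
  obtain ⟨a, ha⟩ := cauchySeq_tendsto_of_complete hcs
  exact ⟨a, ha⟩

/-- Uniform convergence of partial products. -/
lemma blaschke_aux_unif {α : Type*} (f : ℕ → α → ℂ) (K : Set α) (C : ℕ → ℝ)
    (hC : Summable C)
    (h1 : ∀ n, ∀ x ∈ K, ‖f n x‖ ≤ 1)
    (hfC : ∀ n, ∀ x ∈ K, ‖f n x - 1‖ ≤ C n) :
    TendstoUniformlyOn (fun N x => ∏ n ∈ Finset.range N, f n x)
      (fun x => ∏' n, f n x) atTop K := by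
  rw [Metric.tendstoUniformlyOn_iff]
  intro ε hε
  set t : ℝ := Real.log (1 + ε / 3) with ht
  have htpos : (0:ℝ) < 1 + ε / 3 := by linarith
  have hexp : Real.exp t = 1 + ε / 3 := Real.exp_log htpos
  obtain ⟨s, hsmall⟩ := summable_iff_vanishing_norm.mp hC t
    (Real.log_pos (by linarith))
  set N₀ : ℕ := s.sup id + 1 with hN₀
  have hsub : s ⊆ Finset.range N₀ := by
    intro n hn
    simp only [Finset.mem_range, hN₀]
    exact Nat.lt_succ_of_le (Finset.le_sup (f := id) hn)
  filter_upwards [eventually_ge_atTop N₀] with N hN x hx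
  -- summability pointwise
  have hsx : Summable fun n => ‖f n x - 1‖ :=
    Summable.of_nonneg_of_le (fun n => norm_nonneg _) (fun n => hfC n x hx) hC
  have hmx : Multipliable fun n => f n x :=
    blaschke_aux_multipliable _ (fun n => h1 n x hx) hsx
  have hdiff_bound : ∀ F : Finset ℕ, Finset.range N₀ ⊆ F →
      ‖∏ k ∈ F, f k x - ∏ k ∈ Finset.range N₀, f k x‖ ≤ ε / 3 := by
    intro F hsF
    have h := blaschke_aux_prod_diff (fun n => f n x) (fun n => h1 n x hx) hsF
    have hd : Disjoint (F \ Finset.range N₀) s :=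
      Finset.disjoint_of_subset_right hsub Finset.sdiff_disjoint
    have hCsum : ∑ k ∈ F \ Finset.range N₀, C k < t := by
      have h' := hsmall (F \ Finset.range N₀) hd
      exact lt_of_le_of_lt (le_abs_self _) (by simpa using h')
    have hle : ∑ k ∈ F \ Finset.range N₀, ‖f k x - 1‖
        ≤ ∑ k ∈ F \ Finset.range N₀, C k :=
      Finset.sum_le_sum fun k _ => hfC k x hx
    have : Real.exp (∑ k ∈ F \ Finset.range N₀, ‖f k x - 1‖) ≤ Real.exp t :=
      Real.exp_le_exp.mpr (hle.trans hCsum.le)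
    linarith [hexp ▸ this, h]
  -- bound between tprod and partial product at N₀
  have hb1 : ‖∏' n, f n x - ∏ k ∈ Finset.range N₀, f k x‖ ≤ ε / 3 := by
    have htend0 : Tendsto (fun F : Finset ℕ => ∏ k ∈ F, f k x) atTop
        (nhds (∏' n, f n x)) := hmx.hasProd
    have htend : Tendsto (fun F : Finset ℕ =>
        ‖∏ k ∈ F, f k x - ∏ k ∈ Finset.range N₀, f k x‖) atTop
        (nhds ‖∏' n, f n x - ∏ k ∈ Finset.range N₀, f k x‖) :=
      (htend0.sub_const _).norm
    refine le_of_tendsto htend ?_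
    filter_upwards [eventually_ge_atTop (Finset.range N₀)] with F hF
    exact hdiff_bound F hF
  have hb2 : ‖∏ k ∈ Finset.range N, f k x - ∏ k ∈ Finset.range N₀, f k x‖ ≤ ε / 3 :=
    hdiff_bound _ (Finset.range_subset_range.mpr hN)
  rw [dist_eq_norm]
  calc ‖∏' n, f n x - ∏ k ∈ Finset.range N, f k x‖
      ≤ ‖∏' n, f n x - ∏ k ∈ Finset.range N₀, f k x‖
        + ‖∏ k ∈ Finset.range N₀, f k x - ∏ k ∈ Finset.range N, f k x‖ :=
        blaschke_aux_tri _ _ _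
    _ ≤ ε / 3 + ε / 3 := by
        rw [norm_sub_rev (∏ k ∈ Finset.range N₀, f k x)]
        exact add_le_add hb1 hb2
    _ < ε := by linarith

/-- The Blaschke factor has modulus at most 1. -/
lemma blaschke_aux_abs_le (z l : ℂ) (hz : 0 < z.im) (hl : 0 ≤ l.im) :
    ‖(z - l) / (z - starRingEnd ℂ l)‖ ≤ 1 := by
  have hdim : (z - starRingEnd ℂ l).im = z.im + l.im := by
    simp [Complex.sub_im, Complex.conj_im]
  have hd : z - starRingEnd ℂ l ≠ 0 := by
    intro h
    rw [h] at hdim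
    simp at hdim
    linarith
  rw [norm_div, div_le_one (norm_pos_iff.mpr hd)]
  have h1 : Complex.normSq (z - l) ≤ Complex.normSq (z - starRingEnd ℂ l) := by
    simp only [Complex.normSq_apply, Complex.sub_re, Complex.sub_im,
      Complex.conj_re, Complex.conj_im]
    nlinarith [mul_nonneg hz.le hl]
  calc ‖z - l‖ = Real.sqrt (Complex.normSq (z - l)) := by
        rw [Complex.norm_def]
    _ ≤ Real.sqrt (Complex.normSq (z - starRingEnd ℂ l)) := Real.sqrt_le_sqrt h1
    _ = ‖z - starRingEnd ℂ l‖ := by rw [Complex.norm_def]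

/-- Bound on the distance of a Blaschke factor from 1. -/
lemma blaschke_aux_sub_one (z l : ℂ) (hz : 0 < z.im) (hl : 0 ≤ l.im)
    {δ : ℝ} (hδ : 0 < δ) (hδz : δ ≤ z.im) :
    ‖(z - l) / (z - starRingEnd ℂ l) - 1‖ ≤ 2 * ‖l‖ / δ := by
  have hdim : (z - starRingEnd ℂ l).im = z.im + l.im := by
    simp [Complex.sub_im, Complex.conj_im]
  have hd : z - starRingEnd ℂ l ≠ 0 := by
    intro h
    rw [h] at hdim
    simp at hdim
    linarith
  rw [div_sub_one hd, norm_div]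
  have hnum : ‖z - l - (z - starRingEnd ℂ l)‖ ≤ 2 * ‖l‖ := by
    have : z - l - (z - starRingEnd ℂ l) = starRingEnd ℂ l - l := by ring
    rw [this]
    calc ‖starRingEnd ℂ l - l‖ ≤ ‖starRingEnd ℂ l‖ + ‖l‖ := norm_sub_le _ _
      _ = 2 * ‖l‖ := by rw [RCLike.norm_conj]; ring
  have hden : δ ≤ ‖z - starRingEnd ℂ l‖ := by
    calc δ ≤ z.im + l.im := by linarith
      _ ≤ |(z - starRingEnd ℂ l).im| := by rw [hdim]; exact le_abs_self _
      _ ≤ ‖z - starRingEnd ℂ l‖ := Complex.abs_im_le_norm _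
  exact div_le_div₀ (by positivity) hnum hδ hden

theorem blaschke_product_properties (lam : ℕ → ℂ) (him : ∀ n, 0 ≤ (lam n).im)
    (hsum : Summable fun n => ‖lam n‖) :
    (∀ z : ℂ, 0 < z.im →
      Multipliable fun n => (z - lam n) / (z - starRingEnd ℂ (lam n))) ∧
    (∀ z : ℂ, 0 < z.im →
      ‖∏' n, (z - lam n) / (z - starRingEnd ℂ (lam n))‖ ≤ 1) ∧
    DifferentiableOn ℂ
      (fun z : ℂ => ∏' n, (z - lam n) / (z - starRingEnd ℂ (lam n)))
      {z : ℂ | 0 < z.im} := by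
  have hsum' : Summable fun n => ‖lam n‖ := by
    simpa using hsum
  have hmult : ∀ z : ℂ, 0 < z.im →
      Multipliable fun n => (z - lam n) / (z - starRingEnd ℂ (lam n)) := by
    intro z hz
    apply blaschke_aux_multipliable _ (fun n => blaschke_aux_abs_le z (lam n) hz (him n))
    apply Summable.of_nonneg_of_le (fun n => norm_nonneg _)
      (fun n => blaschke_aux_sub_one z (lam n) hz (him n) hz le_rfl)
    have h := hsum'.mul_left (2 / z.im)
    exact h.congr fun n => by ring
  refine ⟨hmult, ?_, ?_⟩
  · intro z hz
    have hm := hmult z hz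
    rw [Multipliable.norm_tprod hm]
    have hhp := hm.norm.hasProd
    refine le_of_tendsto hhp ?_
    filter_upwards with F
    exact Finset.prod_le_one (fun n _ => norm_nonneg _)
      (fun n _ => blaschke_aux_abs_le z (lam n) hz (him n))
  · have hopen : IsOpen {z : ℂ | 0 < z.im} :=
      isOpen_lt continuous_const Complex.continuous_im
    have hlocunif : TendstoLocallyUniformlyOn
        (fun N (z : ℂ) => ∏ n ∈ Finset.range N,
          (z - lam n) / (z - starRingEnd ℂ (lam n)))
        (fun z : ℂ => ∏' n, (z - lam n) / (z - starRingEnd ℂ (lam n)))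
        atTop {z : ℂ | 0 < z.im} := by
      rw [tendstoLocallyUniformlyOn_iff_forall_isCompact hopen]
      intro K hK hKc
      rcases K.eq_empty_or_nonempty with rfl | hne
      · exact tendstoUniformlyOn_empty
      obtain ⟨z₀, hz₀K, hz₀min⟩ :=
        hKc.exists_isMinOn hne Complex.continuous_im.continuousOn
      have hδ : 0 < z₀.im := hK hz₀K
      apply blaschke_aux_unif _ _ (fun n => 2 * ‖lam n‖ / z₀.im)
      · have h := hsum'.mul_left (2 / z₀.im)
        exact h.congr fun n => by ring
      · intro n x hx
        exact blaschke_aux_abs_le x (lam n) (hK hx) (him n)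
      · intro n x hx
        exact blaschke_aux_sub_one x (lam n) (hK hx) (him n) hδ (hz₀min hx)
    refine hlocunif.differentiableOn ?_ hopen
    filter_upwards with N
    apply DifferentiableOn.fun_finsetProd
    intro n _
    apply DifferentiableOn.div
    · exact (differentiable_id.sub_const _).differentiableOn
    · exact (differentiable_id.sub_const _).differentiableOn
    · intro z hz
      intro h
      have hdim : (z - starRingEnd ℂ (lam n)).im = z.im + (lam n).im := by
        simp [Complex.sub_im, Complex.conj_im]
      rw [h] at hdim
      simp at hdim
      have := him n
      have hz' : 0 < z.im := hz
      linarith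
end

section
/- Let (λ_n)_{n∈ℕ} and (μ_n)_{n∈ℕ} be sequences of complex numbers with Im λ_n ≥ 0 and Im μ_n ≥ 0 for all n, ∑|λ_n| < ∞ and ∑|μ_n| < ∞. Then for every z ∈ ℂ with Im z > 0, |B(z,λ) − B(z,μ)| ≤ (2/Im z) · ∑_{n=1}^∞ |λ_n − μ_n|. -/
open Complex Filter Finset

private lemma bpl_denom_im (z w : ℂ) : (z - starRingEnd ℂ w).im = z.im + w.im := by
  simp [Complex.sub_im, Complex.conj_im]

private lemma bpl_denom_ne (z w : ℂ) (hz : 0 < z.im) (hw : 0 ≤ w.im) :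
    z - starRingEnd ℂ w ≠ 0 := by
  intro h
  have h2 := bpl_denom_im z w
  rw [h] at h2
  simp at h2
  linarith

private lemma bpl_abs_denom_ge (z w : ℂ) (hz : 0 < z.im) (hw : 0 ≤ w.im) :
    z.im + w.im ≤ ‖z - starRingEnd ℂ w‖ := by
  calc z.im + w.im = (z - starRingEnd ℂ w).im := (bpl_denom_im z w).symm
    _ ≤ |(z - starRingEnd ℂ w).im| := le_abs_self _
    _ ≤ ‖_‖ := Complex.abs_im_le_norm _

private lemma bpl_abs_num_le (z w : ℂ) (hz : 0 < z.im) (hw : 0 ≤ w.im) :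
    ‖z - w‖ ≤ ‖z - starRingEnd ℂ w‖ := by
  have h : Complex.normSq (z - w) ≤ Complex.normSq (z - starRingEnd ℂ w) := by
    simp only [Complex.normSq_apply, Complex.sub_re, Complex.sub_im, Complex.conj_re,
      Complex.conj_im]
    nlinarith [hz, hw]
  rw [Complex.norm_def, Complex.norm_def]
  exact Real.sqrt_le_sqrt h

private lemma bpl_factor_le_one (z w : ℂ) (hz : 0 < z.im) (hw : 0 ≤ w.im) :
    ‖(z - w) / (z - starRingEnd ℂ w)‖ ≤ 1 := by
  rw [norm_div]
  have hpos : 0 < ‖z - starRingEnd ℂ w‖ := by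
    have := bpl_abs_denom_ge z w hz hw
    linarith
  rw [div_le_one hpos]
  exact bpl_abs_num_le z w hz hw

private lemma bpl_factor_lip_aux (z : ℂ) (hz : 0 < z.im) (l m : ℂ) (hl : 0 ≤ l.im)
    (hm : 0 ≤ m.im) (hab : l.im ≤ m.im) :
    ‖(z - l) / (z - starRingEnd ℂ l) - (z - m) / (z - starRingEnd ℂ m)‖
      ≤ 2 / z.im * ‖l - m‖ := by
  set u := z - starRingEnd ℂ l with hu
  set v := z - starRingEnd ℂ m with hv
  have hu0 : u ≠ 0 := bpl_denom_ne z l hz hl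
  have hv0 : v ≠ 0 := bpl_denom_ne z m hz hm
  have key : (z - l) / u - (z - m) / v = ((z - l) * v - (z - m) * u) / (u * v) := by
    field_simp
  have hNid : (z - l) * v - (z - m) * u = u * (m - starRingEnd ℂ m) + (starRingEnd ℂ l - l) * v := by
    rw [hu, hv]; ring
  have e1 : m - starRingEnd ℂ m = (2 * m.im : ℝ) * Complex.I := Complex.sub_conj m
  have e2 : starRingEnd ℂ l - l = -((2 * l.im : ℝ) * Complex.I) := by
    rw [← Complex.sub_conj l]; ring
  have hNid2 : (z - l) * v - (z - m) * u
      = 2 * Complex.I * (((m.im : ℂ) - (l.im : ℂ)) * u + (l.im : ℂ) * (u - v)) := by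
    rw [hNid, e1, e2]
    push_cast
    ring
  have huv : u - v = starRingEnd ℂ (m - l) := by
    rw [hu, hv, map_sub]; ring
  -- bound the numerator
  have habs_num : ‖(z - l) * v - (z - m) * u‖
      ≤ 2 * ((m.im - l.im) * ‖u‖ + l.im * ‖l - m‖) := by
    rw [hNid2]
    rw [norm_mul, norm_mul]
    simp only [Complex.norm_two, Complex.norm_I, mul_one]
    have h1 : ‖((m.im : ℂ) - (l.im : ℂ)) * u + (l.im : ℂ) * (u - v)‖
        ≤ (m.im - l.im) * ‖u‖ + l.im * ‖l - m‖ := by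
      refine (norm_add_le _ _).trans ?_
      rw [norm_mul, norm_mul]
      have : ‖(m.im : ℂ) - (l.im : ℂ)‖ = m.im - l.im := by
        rw [← Complex.ofReal_sub, Complex.norm_real, Real.norm_eq_abs, _root_.abs_of_nonneg (by linarith)]
      rw [this]
      have h2 : ‖(l.im : ℂ)‖ = l.im := by
        rw [Complex.norm_real, Real.norm_eq_abs, _root_.abs_of_nonneg hl]
      rw [h2, huv, Complex.norm_conj, ← neg_sub l m, norm_neg]
    linarith [h1]
  have hdim : m.im - l.im ≤ ‖l - m‖ := by
    have := Complex.abs_im_le_norm (l - m)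
    rw [Complex.sub_im] at this
    have h3 := abs_le.mp (le_refl |(l.im - m.im)|) |>.1
    calc m.im - l.im = -(l.im - m.im) := by ring
      _ ≤ |l.im - m.im| := neg_le_abs _
      _ ≤ ‖l - m‖ := this
  have hau : z.im + l.im ≤ ‖u‖ := bpl_abs_denom_ge z l hz hl
  have hav : z.im + m.im ≤ ‖v‖ := bpl_abs_denom_ge z m hz hm
  have hupos : (0:ℝ) < ‖u‖ := by linarith
  have hvpos : (0:ℝ) < ‖v‖ := by linarith
  rw [key, norm_div, norm_mul]
  rw [div_le_iff₀ (by positivity)]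
  refine habs_num.trans ?_
  have hd0 : 0 ≤ ‖l - m‖ := norm_nonneg _
  have ht : 0 < z.im := hz
  have hV' : z.im + l.im ≤ ‖v‖ := le_trans (by linarith) hav
  rw [div_mul_eq_mul_div, div_mul_eq_mul_div, le_div_iff₀ ht]
  have p1 : (m.im - l.im) * (z.im * ‖u‖)
      ≤ ‖l - m‖ * (z.im * ‖u‖) :=
    mul_le_mul_of_nonneg_right hdim (by positivity)
  have p2 : (‖l - m‖ * ‖u‖) * (z.im + l.im)
      ≤ (‖l - m‖ * ‖u‖) * ‖v‖ :=
    mul_le_mul_of_nonneg_left hV' (by positivity)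
  have p3 : (‖l - m‖ * l.im) * z.im ≤ (‖l - m‖ * l.im) * ‖u‖ :=
    mul_le_mul_of_nonneg_left (by linarith) (by positivity)
  nlinarith [p1, p2, p3]

private lemma bpl_factor_lip (z : ℂ) (hz : 0 < z.im) (l m : ℂ) (hl : 0 ≤ l.im)
    (hm : 0 ≤ m.im) :
    ‖(z - l) / (z - starRingEnd ℂ l) - (z - m) / (z - starRingEnd ℂ m)‖
      ≤ 2 / z.im * ‖l - m‖ := by
  rcases le_total l.im m.im with h | h
  · exact bpl_factor_lip_aux z hz l m hl hm h
  · rw [← norm_neg, neg_sub, ← norm_neg (l - m), neg_sub]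
    exact bpl_factor_lip_aux z hz m l hm hl h

private lemma bpl_prod_diff (s : Finset ℕ) (f g : ℕ → ℂ) (hf : ∀ i, ‖f i‖ ≤ 1)
    (hg : ∀ i, ‖g i‖ ≤ 1) :
    ‖∏ i ∈ s, f i - ∏ i ∈ s, g i‖ ≤ ∑ i ∈ s, ‖f i - g i‖ := by
  induction s using Finset.cons_induction with
  | empty => simp
  | cons j s hj ih =>
    rw [Finset.prod_cons, Finset.prod_cons, Finset.sum_cons]
    have hQ : ‖∏ i ∈ s, g i‖ ≤ 1 := by
      rw [norm_prod]
      exact Finset.prod_le_one (fun i _ => norm_nonneg _) (fun i _ => hg i)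
    calc ‖f j * ∏ i ∈ s, f i - g j * ∏ i ∈ s, g i‖
        = ‖f j * (∏ i ∈ s, f i - ∏ i ∈ s, g i)
            + (f j - g j) * ∏ i ∈ s, g i‖ := by ring_nf
      _ ≤ ‖f j * (∏ i ∈ s, f i - ∏ i ∈ s, g i)‖
            + ‖(f j - g j) * ∏ i ∈ s, g i‖ := norm_add_le _ _
      _ ≤ ‖f j - g j‖ + ∑ i ∈ s, ‖f i - g i‖ := by
          rw [norm_mul, norm_mul]
          have h1 : ‖f j‖ * ‖∏ i ∈ s, f i - ∏ i ∈ s, g i‖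
              ≤ ∑ i ∈ s, ‖f i - g i‖ := by
            calc ‖f j‖ * ‖∏ i ∈ s, f i - ∏ i ∈ s, g i‖
                ≤ 1 * ‖∏ i ∈ s, f i - ∏ i ∈ s, g i‖ :=
                  mul_le_mul_of_nonneg_right (hf j) (norm_nonneg _)
              _ = _ := one_mul _
              _ ≤ _ := ih
          have h2 : ‖f j - g j‖ * ‖∏ i ∈ s, g i‖
              ≤ ‖f j - g j‖ :=
            mul_le_of_le_one_right (norm_nonneg _) hQ
          linarith

private lemma bpl_multipliable (z : ℂ) (hz : 0 < z.im) (w : ℕ → ℂ) (hw : ∀ n, 0 ≤ (w n).im)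
    (hs : Summable fun n => ‖w n‖) :
    Multipliable fun n => (z - w n) / (z - starRingEnd ℂ (w n)) := by
  by_cases hzero : ∃ j, z - w j = 0
  · obtain ⟨j, hj⟩ := hzero
    refine ⟨0, ?_⟩
    have : ∀ᶠ s : Finset ℕ in atTop, ∏ i ∈ s, (z - w i) / (z - starRingEnd ℂ (w i)) = 0 := by
      filter_upwards [Filter.eventually_ge_atTop {j}] with s hs'
      apply Finset.prod_eq_zero (hs' (Finset.mem_singleton_self j))
      rw [hj, zero_div]
    exact Filter.Tendsto.congr' (this.mono fun s h => h.symm) tendsto_const_nhds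
  · push_neg at hzero
    set f : ℕ → ℂ := fun n => (z - w n) / (z - starRingEnd ℂ (w n)) with hf
    have hfne : ∀ n, f n ≠ 0 := fun n =>
      div_ne_zero (hzero n) (bpl_denom_ne z (w n) hz (hw n))
    have hbound : ∀ n, ‖f n - 1‖ ≤ 2 / z.im * ‖w n‖ := by
      intro n
      have hz0 : z ≠ 0 := fun h => by simp [h] at hz
      have h := bpl_factor_lip z hz (w n) 0 (hw n) (le_refl 0)
      simpa [div_self hz0] using h
    have hsum2 : Summable fun n => 2 / z.im * ‖w n‖ := hs.mul_left _
    have hlog : Summable fun n => Complex.log (f n) := by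
      apply Summable.of_norm_bounded_eventually (g := fun n => 3 / 2 * (2 / z.im * ‖w n‖))
        (hsum2.mul_left _)
      have hto : Tendsto (fun n => 2 / z.im * ‖w n‖) cofinite (nhds 0) :=
        hsum2.tendsto_cofinite_zero
      have hev : ∀ᶠ n in cofinite, 2 / z.im * ‖w n‖ ≤ 1 / 2 := by
        have := hto.eventually (eventually_le_nhds (by norm_num : (0:ℝ) < 1/2))
        filter_upwards [this] with n hn using hn
      filter_upwards [hev] with n hn
      have hsmall : ‖f n - 1‖ ≤ 1 / 2 := by
        exact (hbound n).trans hn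
      have := Complex.norm_log_one_add_half_le_self hsmall
      rw [add_sub_cancel] at this
      refine this.trans ?_
      have : ‖f n - 1‖ ≤ 2 / z.im * ‖w n‖ := by
        exact hbound n
      nlinarith [this]
    exact Complex.multipliable_of_summable_log hlog

theorem blaschke_product_lipschitz (lam mu : ℕ → ℂ)
    (hlam : ∀ n, 0 ≤ (lam n).im) (hmu : ∀ n, 0 ≤ (mu n).im)
    (hsl : Summable fun n => ‖lam n‖)
    (hsm : Summable fun n => ‖mu n‖)
    (z : ℂ) (hz : 0 < z.im) :
    ‖(∏' n, (z - lam n) / (z - starRingEnd ℂ (lam n)))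
        - ∏' n, (z - mu n) / (z - starRingEnd ℂ (mu n))‖
      ≤ 2 / z.im * ∑' n, ‖lam n - mu n‖ := by
  set f : ℕ → ℂ := fun n => (z - lam n) / (z - starRingEnd ℂ (lam n)) with hfdef
  set g : ℕ → ℂ := fun n => (z - mu n) / (z - starRingEnd ℂ (mu n)) with hgdef
  have hd : Summable fun n => ‖lam n - mu n‖ := by
    apply Summable.of_nonneg_of_le (fun n => norm_nonneg _)
      (fun n => ?_) (hsl.add hsm)
    simpa using norm_sub_le_norm_sub_add_norm_sub (lam n) 0 (mu n)
  have Ml : Multipliable f := bpl_multipliable z hz lam hlam hsl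
  have Mm : Multipliable g := bpl_multipliable z hz mu hmu hsm
  have T : Tendsto (fun s : Finset ℕ => (∏ i ∈ s, f i) - ∏ i ∈ s, g i) atTop
      (nhds ((∏' n, f n) - ∏' n, g n)) := by
    exact Filter.Tendsto.sub Ml.hasProd Mm.hasProd
  have T2 : Tendsto (fun s : Finset ℕ => ‖(∏ i ∈ s, f i) - ∏ i ∈ s, g i‖) atTop
      (nhds (‖(∏' n, f n) - ∏' n, g n‖)) :=
    (continuous_norm.tendsto _).comp T
  refine le_of_tendsto T2 (Filter.Eventually.of_forall fun s => ?_)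
  have step1 : ‖(∏ i ∈ s, f i) - ∏ i ∈ s, g i‖
      ≤ ∑ i ∈ s, ‖f i - g i‖ :=
    bpl_prod_diff s f g (fun i => bpl_factor_le_one z (lam i) hz (hlam i))
      (fun i => bpl_factor_le_one z (mu i) hz (hmu i))
  have step2 : ∑ i ∈ s, ‖f i - g i‖
      ≤ ∑ i ∈ s, 2 / z.im * ‖lam i - mu i‖ :=
    Finset.sum_le_sum fun i _ => bpl_factor_lip z hz (lam i) (mu i) (hlam i) (hmu i)
  have step3 : ∑ i ∈ s, 2 / z.im * ‖lam i - mu i‖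
      ≤ 2 / z.im * ∑' n, ‖lam n - mu n‖ := by
    rw [← Finset.mul_sum]
    apply mul_le_mul_of_nonneg_left _ (by positivity)
    exact Summable.sum_le_tsum s (fun i _ => norm_nonneg _) hd
  linarith
end

section
/- The quantity β := sup over λ ∈ ℂ with Im λ > 0 of ∫_0^π log |(e^{it} − conj(λ))/(e^{it} − λ)| dt is finite (and positive). -/
open MeasureTheory intervalIntegral Set

set_option maxHeartbeats 1000000

/-- Integrability of `log` on `[0, c]` together with the value of the integral. -/
lemma logIntAux (c : ℝ) (hc : 0 ≤ c) :
    IntervalIntegrable Real.log volume 0 c ∧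
      ∫ x in (0:ℝ)..c, Real.log x = c * Real.log c - c := by
  have hInt1 : IntegrableOn (fun x => -Real.log x) (Set.Ioc (0:ℝ) 1) volume := by
    apply intervalIntegral.integrableOn_deriv_of_nonneg
      (g := fun x => x - x * Real.log x)
    · exact (continuous_id.sub Real.continuous_mul_log).continuousOn
    · intro x hx
      have h := (hasDerivAt_id x).sub (Real.hasDerivAt_mul_log (ne_of_gt hx.1))
      exact h.congr_deriv (by ring)
    · intro x hx
      simp only [neg_nonneg]
      exact Real.log_nonpos hx.1.le hx.2.le
  have hII1 : IntervalIntegrable Real.log volume 0 1 := by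
    rw [intervalIntegrable_iff_integrableOn_Ioc_of_le zero_le_one]
    have h2 := hInt1.neg
    refine h2.congr (Filter.Eventually.of_forall fun x => ?_)
    simp
  have hIIc : IntervalIntegrable Real.log volume 0 c := by
    rcases le_total c 1 with h | h
    · exact hII1.mono_set (by
        rw [Set.uIcc_of_le hc, Set.uIcc_of_le zero_le_one]
        exact Set.Icc_subset_Icc le_rfl h)
    · exact hII1.trans (intervalIntegrable_log
        (notMem_uIcc_of_lt zero_lt_one (by linarith)))
  refine ⟨hIIc, ?_⟩
  rcases eq_or_lt_of_le hc with h0 | h0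
  · simp [← h0]
  · have := intervalIntegral.integral_eq_sub_of_hasDeriv_right_of_le h0.le
      (f := fun x => x * Real.log x - x) (f' := Real.log)
      ((Real.continuous_mul_log.sub continuous_id).continuousOn)
      (fun x hx => by
        have h := (Real.hasDerivAt_mul_log (ne_of_gt hx.1)).sub (hasDerivAt_id x)
        have h' : HasDerivAt (fun x => x * Real.log x - x) (Real.log x) x := by
          exact h.congr_deriv (by ring)
        exact h'.hasDerivWithinAt) hIIc
    rw [this]
    simp

/-- Integrability of `t ↦ log (t - θ)` on `[0, π]` and a lower bound for its integral. -/
lemma logShiftAux (θ : ℝ) (hθ0 : 0 < θ) (hθπ : θ < Real.pi) :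
    IntervalIntegrable (fun t => Real.log (t - θ)) volume 0 Real.pi ∧
      -(Real.pi + 2) ≤ ∫ t in (0:ℝ)..Real.pi, Real.log (t - θ) := by
  have hmono : ∀ x : ℝ, 0 < x → x - 1 ≤ x * Real.log x := by
    intro x hx
    have h := Real.log_le_sub_one_of_pos (show (0:ℝ) < x⁻¹ by positivity)
    rw [Real.log_inv] at h
    have h2 : 1 - x⁻¹ ≤ Real.log x := by linarith
    have h3 : x * (1 - x⁻¹) ≤ x * Real.log x :=
      mul_le_mul_of_nonneg_left h2 hx.le
    have h4 : x * (1 - x⁻¹) = x - 1 := by field_simp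
    linarith
  have hneg : IntervalIntegrable Real.log volume (-θ) 0 := by
    have h := ((logIntAux θ hθ0.le).1).symm
    have h2 := (IntervalIntegrable.iff_comp_neg (by simp)).mp h
    simp only [neg_zero] at h2
    have hfun : (fun x : ℝ => Real.log (-x)) = Real.log := by
      funext x; exact Real.log_neg_eq_log x
    rwa [hfun] at h2
  have hpos : IntervalIntegrable Real.log volume 0 (Real.pi - θ) :=
    (logIntAux (Real.pi - θ) (by linarith)).1
  have htrans : IntervalIntegrable Real.log volume (-θ) (Real.pi - θ) :=
    hneg.trans hpos
  have hshift : IntervalIntegrable (fun t => Real.log (t - θ)) volume 0 Real.pi := by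
    have h := htrans.comp_sub_right θ
    simpa using h
  refine ⟨hshift, ?_⟩
  have hval : ∫ t in (0:ℝ)..Real.pi, Real.log (t - θ)
      = (θ * Real.log θ - θ) + ((Real.pi - θ) * Real.log (Real.pi - θ) - (Real.pi - θ)) := by
    have h1 : ∫ t in (0:ℝ)..Real.pi, Real.log (t - θ)
        = ∫ x in (0 - θ)..(Real.pi - θ), Real.log x :=
      intervalIntegral.integral_comp_sub_right Real.log θ
    have h2 : ∫ x in (-θ:ℝ)..(Real.pi - θ), Real.log x
        = (∫ x in (-θ:ℝ)..0, Real.log x) + ∫ x in (0:ℝ)..(Real.pi - θ), Real.log x :=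
      (intervalIntegral.integral_add_adjacent_intervals hneg hpos).symm
    have h3 : ∫ x in (-θ:ℝ)..0, Real.log x = θ * Real.log θ - θ := by
      have heq : ∫ x in (-θ:ℝ)..0, Real.log x = ∫ x in (-θ:ℝ)..0, Real.log (-x) := by
        congr 1; funext x; exact (Real.log_neg_eq_log x).symm
      rw [heq, intervalIntegral.integral_comp_neg Real.log]
      simpa using (logIntAux θ hθ0.le).2
    rw [h1, show (0:ℝ) - θ = -θ by ring, h2, h3,
      (logIntAux (Real.pi - θ) (by linarith)).2]
  rw [hval]
  have hb1 := hmono θ hθ0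
  have hb2 := hmono (Real.pi - θ) (by linarith)
  linarith

/-- Pointwise upper bound for the Blaschke integrand. -/
lemma blaschke_pointwise (lam : ℂ) (hb : 0 < lam.im) (t : ℝ)
    (ht0 : 0 ≤ t) (htπ : t ≤ Real.pi) (hne : t ≠ Complex.arg lam) :
    Real.log (‖(Complex.exp (Complex.I * t) - starRingEnd ℂ lam) /
        (Complex.exp (Complex.I * t) - lam)‖)
      ≤ Real.log 2 / 2 + Real.log Real.pi - Real.log (t - Complex.arg lam) := by
  set θ := Complex.arg lam with hθdef
  set r := ‖lam‖ with hrdef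
  have hlam0 : lam ≠ 0 := fun h => by simp [h] at hb
  have hr : 0 < r := norm_pos_iff.mpr hlam0
  have ha : lam.re = r * Real.cos θ := by
    rw [Complex.cos_arg hlam0]; field_simp; rfl
  have hbeq : lam.im = r * Real.sin θ := by
    rw [Complex.sin_arg]; field_simp; rfl
  have hθ0 : 0 < θ := by
    rcases lt_or_eq_of_le (Complex.arg_nonneg_iff.mpr hb.le) with h | h
    · exact h
    · exact absurd (Complex.arg_eq_zero_iff.mp h.symm).2 (ne_of_gt hb)
  have hθπ : θ < Real.pi := by
    rcases lt_or_eq_of_le (Complex.arg_le_pi lam) with h | h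
    · exact h
    · exact absurd (Complex.arg_eq_pi_iff.mp h).2 (ne_of_gt hb)
  have hΔne : t - θ ≠ 0 := sub_ne_zero.mpr hne
  have hΔsq : 0 < (t - θ)^2 := by positivity
  have hΔπ : (t - θ)^2 ≤ Real.pi^2 := by nlinarith
  set z := Complex.exp (Complex.I * t) with hzdef
  have hzre : z.re = Real.cos t := by
    rw [hzdef, mul_comm Complex.I (t:ℂ)]; exact Complex.exp_ofReal_mul_I_re t
  have hzim : z.im = Real.sin t := by
    rw [hzdef, mul_comm Complex.I (t:ℂ)]; exact Complex.exp_ofReal_mul_I_im t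
  set X := Complex.normSq (z - starRingEnd ℂ lam) with hXdef
  set Y := Complex.normSq (z - lam) with hYdef
  have hsint0 : 0 ≤ Real.sin t := Real.sin_nonneg_of_nonneg_of_le_pi ht0 htπ
  have hsint1 : Real.sin t ≤ 1 := Real.sin_le_one t
  have hXY : X = Y + 4 * lam.im * Real.sin t := by
    rw [hXdef, hYdef]
    simp only [Complex.normSq_apply, Complex.sub_re, Complex.sub_im,
      Complex.conj_re, Complex.conj_im, hzre, hzim]
    ring
  have hpy : lam.re^2 + lam.im^2 = r^2 := by
    rw [hrdef, Complex.sq_norm, Complex.normSq_apply]; ring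
  have hY : Y = 1 + r^2 - 2*r*Real.cos (t - θ) := by
    rw [hYdef]
    simp only [Complex.normSq_apply, Complex.sub_re, Complex.sub_im, hzre, hzim]
    rw [Real.cos_sub, ha, hbeq]
    linear_combination Real.sin_sq_add_cos_sq t + r^2 * Real.sin_sq_add_cos_sq θ
  have hsin2 : 1 - Real.cos (t - θ) = 2 * Real.sin ((t - θ)/2)^2 := by
    have h1 : Real.cos (t - θ) = 2 * Real.cos ((t - θ)/2)^2 - 1 := by
      rw [← Real.cos_two_mul]
      congr 1
      ring
    linear_combination (-1 : ℝ) * h1 + (-2 : ℝ) * Real.sin_sq_add_cos_sq ((t - θ)/2)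
  have hsinlb : (t - θ)^2 ≤ Real.pi^2 * Real.sin ((t - θ)/2)^2 := by
    set u := (t - θ)/2 with hudef
    have hu : |u| ≤ Real.pi / 2 := by
      rw [abs_le, hudef]
      constructor <;> linarith
    have h := Real.mul_le_sin (abs_nonneg u) hu
    have hsq : Real.sin u ^ 2 = Real.sin |u| ^ 2 := by
      rcases abs_choice u with h' | h'
      · rw [h']
      · rw [h', Real.sin_neg]; ring
    have hnn : 0 ≤ 2 / Real.pi * |u| := by positivity
    have h2 : (2 / Real.pi * |u|)^2 ≤ Real.sin |u| ^ 2 := by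
      nlinarith [Real.sin_nonneg_of_nonneg_of_le_pi (abs_nonneg u)
        (le_trans hu (by linarith [Real.pi_pos]))]
    rw [← hsq] at h2
    have hπ := Real.pi_pos
    have huu : u^2 = (t - θ)^2 / 4 := by rw [hudef]; ring
    have hexp : (2 / Real.pi * |u|)^2 = 4 * u^2 / Real.pi^2 := by
      rw [mul_pow, sq_abs]; field_simp; ring
    rw [hexp, huu] at h2
    have := mul_le_mul_of_nonneg_left h2 (le_of_lt (by positivity : (0:ℝ) < Real.pi^2))
    calc (t - θ)^2 = Real.pi^2 * (4 * ((t-θ)^2/4) / Real.pi^2) := by field_simp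
    _ ≤ Real.pi^2 * Real.sin u ^2 := this
  have himr : lam.im ≤ r := le_trans (le_abs_self _) (Complex.abs_im_le_norm lam)
  have hYlb : 4 * lam.im * (t - θ)^2 ≤ Real.pi^2 * Y := by
    have e2 : Y = (1 - r)^2 + 4*r*Real.sin ((t - θ)/2)^2 := by
      rw [hY]; linear_combination 2*r*hsin2
    rw [e2]
    nlinarith [mul_le_mul_of_nonneg_left hsinlb (le_of_lt (by positivity : (0:ℝ) < 4*r)),
      mul_le_mul_of_nonneg_right himr hΔsq.le,
      mul_nonneg (sq_nonneg Real.pi) (sq_nonneg (1 - r))]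
  have hYpos : 0 < Y := by
    nlinarith [hYlb, mul_pos hb hΔsq, Real.pi_pos, sq_nonneg Real.pi]
  have hXpos : 0 < X := by
    rw [hXY]; nlinarith [mul_nonneg hb.le hsint0]
  have hnum0 : z - starRingEnd ℂ lam ≠ 0 := Complex.normSq_pos.mp hXpos
  have hden0 : z - lam ≠ 0 := Complex.normSq_pos.mp hYpos
  have habsq : ‖(z - starRingEnd ℂ lam) / (z - lam)‖ ^ 2 = X / Y := by
    rw [Complex.sq_norm, map_div₀]
  have hqpos : 0 < ‖(z - starRingEnd ℂ lam) / (z - lam)‖ :=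
    norm_pos_iff.mpr (div_ne_zero hnum0 hden0)
  have hlogq : Real.log (‖(z - starRingEnd ℂ lam) / (z - lam)‖)
      = Real.log (X / Y) / 2 := by
    rw [← habsq, Real.log_pow]
    push_cast; ring
  -- key inequality
  have hs' : (t - θ)^2 * (4 * lam.im * Real.sin t) ≤ 4 * lam.im * (t - θ)^2 := by
    nlinarith [mul_le_mul_of_nonneg_left hsint1
      (show (0:ℝ) ≤ 4 * lam.im * (t - θ)^2 by positivity)]
  have hYmul : (t - θ)^2 * Y ≤ Real.pi^2 * Y :=
    mul_le_mul_of_nonneg_right hΔπ hYpos.le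
  have hkey : (t - θ)^2 * X ≤ 2 * Real.pi^2 * Y := by
    rw [hXY]; nlinarith [hYmul, hs', hYlb]
  have hXYle : X / Y ≤ 2 * Real.pi^2 / (t - θ)^2 := by
    rw [div_le_div_iff₀ hYpos hΔsq]
    nlinarith [hkey]
  have hlog1 : Real.log (X / Y) ≤ Real.log (2 * Real.pi^2 / (t - θ)^2) :=
    Real.log_le_log (by positivity) hXYle
  have hlog2 : Real.log (2 * Real.pi^2 / (t - θ)^2)
      = Real.log 2 + 2 * Real.log Real.pi - 2 * Real.log (t - θ) := by
    rw [Real.log_div (by positivity) (pow_ne_zero _ hΔne),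
      Real.log_mul two_ne_zero (by positivity), Real.log_pow, Real.log_pow]
    push_cast; ring
  rw [hlogq]
  rw [hlog2] at hlog1
  linarith

/-- The set of values of the integral `∫_0^π log |(e^{it} - conj λ)/(e^{it} - λ)| dt`
over all `λ` in the open upper half-plane. -/
noncomputable def blaschkeIntegralValues : Set ℝ :=
  {y : ℝ | ∃ lam : ℂ, 0 < lam.im ∧
    y = ∫ t in (0:ℝ)..Real.pi, Real.log (‖
      ((Complex.exp (Complex.I * t) - starRingEnd ℂ lam) /
        (Complex.exp (Complex.I * t) - lam))‖)}

lemma arg_pos_lt_pi_of_im_pos (lam : ℂ) (hb : 0 < lam.im) :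
    0 < Complex.arg lam ∧ Complex.arg lam < Real.pi := by
  constructor
  · rcases lt_or_eq_of_le (Complex.arg_nonneg_iff.mpr hb.le) with h | h
    · exact h
    · exact absurd (Complex.arg_eq_zero_iff.mp h.symm).2 (ne_of_gt hb)
  · rcases lt_or_eq_of_le (Complex.arg_le_pi lam) with h | h
    · exact h
    · exact absurd (Complex.arg_eq_pi_iff.mp h).2 (ne_of_gt hb)

theorem blaschke_integral_sup_finite_pos :
    BddAbove blaschkeIntegralValues ∧ 0 < sSup blaschkeIntegralValues := by
  have hπ := Real.pi_pos
  have hlog2 : (0:ℝ) ≤ Real.log 2 := Real.log_nonneg one_le_two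
  have hlogπ : (0:ℝ) ≤ Real.log Real.pi :=
    Real.log_nonneg (by linarith [Real.pi_gt_three])
  set C : ℝ := Real.pi * (Real.log 2 / 2 + Real.log Real.pi) + (Real.pi + 2) with hCdef
  have hC0 : 0 ≤ C := by
    have h1 : (0:ℝ) ≤ Real.log 2 / 2 + Real.log Real.pi := by linarith
    rw [hCdef]
    nlinarith [mul_nonneg hπ.le h1]
  have hbdd : BddAbove blaschkeIntegralValues := by
    refine ⟨C, ?_⟩
    rintro y ⟨lam, hb, rfl⟩
    obtain ⟨hθ0, hθπ⟩ := arg_pos_lt_pi_of_im_pos lam hb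
    set θ := Complex.arg lam with hθdef
    obtain ⟨hglogint, hglow⟩ := logShiftAux θ hθ0 hθπ
    by_cases hF : IntervalIntegrable (fun t : ℝ => Real.log (‖
        ((Complex.exp (Complex.I * t) - starRingEnd ℂ lam) /
          (Complex.exp (Complex.I * t) - lam))‖)) volume 0 Real.pi
    · have hG : IntervalIntegrable
          (fun t => Real.log 2 / 2 + Real.log Real.pi - Real.log (t - θ)) volume 0 Real.pi :=
        intervalIntegrable_const.sub hglogint
      have hle : (∫ t in (0:ℝ)..Real.pi, Real.log (‖
            ((Complex.exp (Complex.I * t) - starRingEnd ℂ lam) /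
              (Complex.exp (Complex.I * t) - lam))‖))
          ≤ ∫ t in (0:ℝ)..Real.pi,
              (Real.log 2 / 2 + Real.log Real.pi - Real.log (t - θ)) := by
        apply intervalIntegral.integral_mono_ae_restrict hπ.le hF hG
        have hmem : ∀ᵐ t ∂(volume.restrict (Set.Icc (0:ℝ) Real.pi)),
            t ∈ Set.Icc (0:ℝ) Real.pi :=
          MeasureTheory.ae_restrict_mem measurableSet_Icc
        have hne : ∀ᵐ t ∂(volume.restrict (Set.Icc (0:ℝ) Real.pi)), t ≠ θ := by
          apply MeasureTheory.ae_restrict_of_ae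
          rw [MeasureTheory.ae_iff]
          have hset : {t : ℝ | ¬ t ≠ θ} = {θ} := by ext x; simp
          rw [hset]
          exact Real.volume_singleton
        filter_upwards [hmem, hne] with t ht htne
        exact blaschke_pointwise lam hb t ht.1 ht.2 htne
      have hval : (∫ t in (0:ℝ)..Real.pi,
            (Real.log 2 / 2 + Real.log Real.pi - Real.log (t - θ)))
          = Real.pi * (Real.log 2 / 2 + Real.log Real.pi)
            - ∫ t in (0:ℝ)..Real.pi, Real.log (t - θ) := by
        rw [intervalIntegral.integral_sub intervalIntegrable_const hglogint,
          intervalIntegral.integral_const]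
        simp [smul_eq_mul]
      rw [hval] at hle
      rw [hCdef]
      linarith
    · rw [intervalIntegral.integral_undef hF]
      exact hC0
  refine ⟨hbdd, ?_⟩
  have him : (0:ℝ) < (2 * Complex.I).im := by simp
  have hmem : (∫ t in (0:ℝ)..Real.pi, Real.log (‖
      ((Complex.exp (Complex.I * t) - starRingEnd ℂ (2 * Complex.I)) /
        (Complex.exp (Complex.I * t) - 2 * Complex.I))‖)) ∈ blaschkeIntegralValues :=
    ⟨2 * Complex.I, him, rfl⟩
  have hexpc : Continuous fun t : ℝ => Complex.exp (Complex.I * t) :=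
    Complex.continuous_exp.comp (continuous_const.mul Complex.continuous_ofReal)
  have habs1 : ∀ t : ℝ, ‖Complex.exp (Complex.I * t)‖ = 1 := fun t => by
    rw [mul_comm]; exact Complex.norm_exp_ofReal_mul_I t
  have hden : ∀ t : ℝ, Complex.exp (Complex.I * t) - 2 * Complex.I ≠ 0 := by
    intro t h
    rw [sub_eq_zero] at h
    have h1 := habs1 t
    rw [h] at h1
    simp [map_mul] at h1
  have hnum : ∀ t : ℝ, Complex.exp (Complex.I * t) - starRingEnd ℂ (2 * Complex.I) ≠ 0 := by
    intro t h
    rw [sub_eq_zero] at h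
    have h1 := habs1 t
    rw [h] at h1
    simp [map_mul] at h1
  have hpos : 0 < ∫ t in (0:ℝ)..Real.pi, Real.log (‖
      ((Complex.exp (Complex.I * t) - starRingEnd ℂ (2 * Complex.I)) /
        (Complex.exp (Complex.I * t) - 2 * Complex.I))‖) := by
    apply intervalIntegral.intervalIntegral_pos_of_pos_on _ _ hπ
    · apply Continuous.intervalIntegrable
      apply Continuous.log
      · exact continuous_norm.comp ((hexpc.sub continuous_const).div
          (hexpc.sub continuous_const) hden)
      · intro t
        simp only [Function.comp_apply, norm_div]
        exact div_ne_zero (norm_ne_zero_iff.mpr (hnum t)) (norm_ne_zero_iff.mpr (hden t))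
    · intro x hx
      apply Real.log_pos
      rw [norm_div, one_lt_div (norm_pos_iff.mpr (hden x))]
      have hre : (Complex.exp (Complex.I * x)).re = Real.cos x := by
        rw [mul_comm Complex.I (x:ℂ)]; exact Complex.exp_ofReal_mul_I_re x
      have him' : (Complex.exp (Complex.I * x)).im = Real.sin x := by
        rw [mul_comm Complex.I (x:ℂ)]; exact Complex.exp_ofReal_mul_I_im x
      have hsin := Real.sin_pos_of_pos_of_lt_pi hx.1 hx.2
      have hlt : Complex.normSq (Complex.exp (Complex.I * x) - 2 * Complex.I)
          < Complex.normSq (Complex.exp (Complex.I * x) - starRingEnd ℂ (2 * Complex.I)) := by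
        simp only [Complex.normSq_apply, Complex.sub_re, Complex.sub_im,
          Complex.conj_re, Complex.conj_im, Complex.mul_re, Complex.mul_im,
          Complex.I_re, Complex.I_im, Complex.re_ofNat, Complex.im_ofNat,
          hre, him']
        nlinarith [hsin]
      rw [Complex.norm_def, Complex.norm_def]
      exact Real.sqrt_lt_sqrt (Complex.normSq_nonneg _) hlt
  exact lt_of_lt_of_le hpos (le_csSup hbdd hmem)
end

section
/- Let (λ_n)_{n∈ℕ} be a sequence of complex numbers with Im λ_n ≥ 0 for all n and ∑_{n} |λ_n| < ∞, and let B(z) := ∏_{n=1}^∞ (z − λ_n)/(z − conj(λ_n)) be the corresponding Blaschke product on the open upper half-plane. Then lim_{ξ→0⁺} ∫_0^π ξ · log |B(ξ e^{it})|^{-1} dt = 0. -/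
open Filter Topology MeasureTheory Real intervalIntegral

noncomputable def Complex.abs : AbsoluteValue ℂ ℝ := IsAbsoluteValue.toAbsoluteValue (‖·‖ : ℂ → ℝ)

lemma Complex.abs_apply (z : ℂ) : Complex.abs z = ‖z‖ := rfl

lemma Complex.abs_exp (z : ℂ) : Complex.abs (Complex.exp z) = Real.exp z.re := by
  rw [Complex.abs_apply, Complex.norm_exp]

lemma Complex.abs_ofReal (r : ℝ) : Complex.abs (r : ℂ) = |r| := by
  simp [Complex.abs_apply]

lemma Complex.sq_abs (z : ℂ) : Complex.abs z ^ 2 = Complex.normSq z := Complex.sq_norm z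

lemma Complex.abs_mul_cos_add_sin_mul_I (x : ℂ) :
    ((Complex.abs x : ℝ) * (Complex.cos x.arg + Complex.sin x.arg * Complex.I) : ℂ) = x :=
  Complex.norm_mul_cos_add_sin_mul_I x

lemma Complex.continuous_abs : Continuous Complex.abs := continuous_norm

lemma Complex.abs_conj (z : ℂ) : Complex.abs (starRingEnd ℂ z) = Complex.abs z := Complex.norm_conj z

lemma Complex.abs_im_le_abs (z : ℂ) : |z.im| ≤ Complex.abs z := Complex.abs_im_le_norm z

noncomputable section BlaschkeAux

def zc (ξ t : ℝ) : ℂ := (ξ:ℂ) * Complex.exp (Complex.I * t)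

lemma zc_re (ξ t : ℝ) : (zc ξ t).re = ξ * Real.cos t := by
  simp [zc, mul_comm Complex.I (t:ℂ), Complex.exp_mul_I, ← Complex.ofReal_cos,
    ← Complex.ofReal_sin, Complex.mul_re]

lemma zc_im (ξ t : ℝ) : (zc ξ t).im = ξ * Real.sin t := by
  simp [zc, mul_comm Complex.I (t:ℂ), Complex.exp_mul_I, ← Complex.ofReal_cos,
    ← Complex.ofReal_sin, Complex.mul_im]

lemma zc_abs {ξ : ℝ} (hξ : 0 ≤ ξ) (t : ℝ) : Complex.abs (zc ξ t) = ξ := by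
  simp [zc, Complex.abs_exp, Complex.abs_ofReal, abs_of_nonneg hξ, Complex.mul_re]

lemma abs_sub_conj_sq (z w : ℂ) :
    (Complex.abs (z - starRingEnd ℂ w))^2 = (Complex.abs (z - w))^2 + 4 * z.im * w.im := by
  rw [Complex.sq_abs, Complex.sq_abs, Complex.normSq_apply, Complex.normSq_apply]
  simp [Complex.sub_re, Complex.sub_im, Complex.conj_re, Complex.conj_im]
  ring

lemma abs_sub_le_abs_sub_conj {z w : ℂ} (hz : 0 ≤ z.im) (hw : 0 ≤ w.im) :
    Complex.abs (z - w) ≤ Complex.abs (z - starRingEnd ℂ w) := by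
  have h := abs_sub_conj_sq z w
  nlinarith [Complex.abs.nonneg (z - w), Complex.abs.nonneg (z - starRingEnd ℂ w),
    mul_nonneg hz hw]

lemma normSq_zc_sub (ξ t : ℝ) (w : ℂ) :
    (Complex.abs (zc ξ t - w))^2
      = ξ^2 + (Complex.abs w)^2 - 2*ξ*(Complex.abs w)*Real.cos (t - w.arg) := by
  have hw : w = ((Complex.abs w : ℝ):ℂ) * (Complex.cos w.arg + Complex.sin w.arg * Complex.I) :=
    (Complex.abs_mul_cos_add_sin_mul_I w).symm
  have hre : w.re = Complex.abs w * Real.cos w.arg := by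
    conv_lhs => rw [hw]
    simp [← Complex.ofReal_cos, ← Complex.ofReal_sin, Complex.mul_re]
  have him : w.im = Complex.abs w * Real.sin w.arg := by
    conv_lhs => rw [hw]
    simp [← Complex.ofReal_cos, ← Complex.ofReal_sin, Complex.mul_im]
  rw [Complex.sq_abs, Complex.normSq_apply]
  simp only [Complex.sub_re, Complex.sub_im, zc_re, zc_im, hre, him, Real.cos_sub]
  nlinarith [Real.sin_sq_add_cos_sq t, Real.sin_sq_add_cos_sq w.arg]

lemma one_sub_cos_ge {d : ℝ} (hd : |d| ≤ π) : 2 * (d/π)^2 ≤ 1 - Real.cos d := by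
  have hπ := Real.pi_pos
  have h1 : Real.cos d = 1 - 2 * Real.sin (d/2)^2 := by
    have h := Real.cos_two_mul (d/2)
    have h2 := Real.sin_sq_add_cos_sq (d/2)
    have h3 : 2 * (d/2) = d := by ring
    rw [h3] at h; nlinarith
  have h2 : |d|/π ≤ Real.sin (|d|/2) := by
    have := Real.mul_le_sin (x := |d|/2) (by positivity) (by linarith)
    calc |d|/π = 2/π * (|d|/2) := by field_simp
    _ ≤ Real.sin (|d|/2) := this
  have h3 : Real.sin (|d|/2)^2 = Real.sin (d/2)^2 := by
    rcases abs_cases d with ⟨h,_⟩|⟨h,_⟩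
    · rw [h]
    · rw [h, show -d/2 = -(d/2) from by ring, Real.sin_neg, neg_sq]
  have h4 : (|d|/π)^2 = (d/π)^2 := by
    rw [div_pow, div_pow, sq_abs]
  have h5 : (|d|/π)^2 ≤ Real.sin (|d|/2)^2 := by
    nlinarith [abs_nonneg d, h2, div_nonneg (abs_nonneg d) hπ.le]
  linarith [h5, h4 ▸ h5, h3 ▸ (h4 ▸ h5)]

lemma abs_zc_sub_ge {ξ t : ℝ} (hξ : 0 < ξ) (ht0 : 0 ≤ t) (htπ : t ≤ π) {w : ℂ}
    (hw : 0 ≤ w.im) (hρ : ξ/2 ≤ Complex.abs w) :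
    Real.sqrt 2 * ξ / π * |t - w.arg| ≤ Complex.abs (zc ξ t - w) := by
  have hπ := Real.pi_pos
  have harg0 : 0 ≤ w.arg := Complex.arg_nonneg_iff.2 hw
  have hargπ : w.arg ≤ π := Complex.arg_le_pi w
  have hd : |t - w.arg| ≤ π := by
    rw [abs_le]; constructor <;> linarith
  have h1 := normSq_zc_sub ξ t w
  have h2 := one_sub_cos_ge hd
  have hcos : 0 ≤ 1 - Real.cos (t - w.arg) := by nlinarith [Real.cos_le_one (t - w.arg)]
  have key : (Real.sqrt 2 * ξ / π * |t - w.arg|)^2 ≤ (Complex.abs (zc ξ t - w))^2 := by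
    rw [h1]
    have hs2 : (Real.sqrt 2)^2 = 2 := Real.sq_sqrt (by norm_num)
    have hξρ : 2*ξ*(Complex.abs w)*(1 - Real.cos (t - w.arg))
        ≤ ξ^2 + (Complex.abs w)^2 - 2*ξ*(Complex.abs w)*Real.cos (t - w.arg) := by
      nlinarith [sq_nonneg (ξ - Complex.abs w)]
    have ha : ξ * ξ * (1 - Real.cos (t - w.arg))
        ≤ 2*ξ*(Complex.abs w)*(1 - Real.cos (t - w.arg)) := by
      nlinarith [mul_nonneg (mul_nonneg hξ.le hcos) (show (0:ℝ) ≤ 2*Complex.abs w - ξ by linarith)]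
    have hb : ξ^2 * (2 * ((t - w.arg)/π)^2) ≤ ξ * ξ * (1 - Real.cos (t - w.arg)) := by
      nlinarith [h2, sq_nonneg ξ]
    have hexp : (Real.sqrt 2 * ξ / π * |t - w.arg|)^2 = ξ^2 * (2 * ((t-w.arg)/π)^2) := by
      rw [mul_pow, div_pow, mul_pow, hs2, sq_abs]; ring
    linarith
  have hnn : 0 ≤ Real.sqrt 2 * ξ / π * |t - w.arg| := by positivity
  exact (pow_le_pow_iff_left₀ hnn (Complex.abs.nonneg _) (by norm_num)).1 key



-- |u| ^ (-1/2) = u ^ (-1/2) + (-u) ^ (-1/2)  (using rpow junk value at negative base)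
lemma abs_rpow_neg_half (u : ℝ) :
    |u| ^ (-(1:ℝ)/2) = u ^ (-(1:ℝ)/2) + (-u) ^ (-(1:ℝ)/2) := by
  have hzero : ∀ x : ℝ, x < 0 → x ^ (-(1:ℝ)/2) = 0 := by
    intro x hx
    rw [Real.rpow_def_of_neg hx]
    have : Real.cos (-(1:ℝ)/2 * π) = 0 := by
      rw [show (-(1:ℝ)/2 * π) = -(π/2) by ring, Real.cos_neg, Real.cos_pi_div_two]
    rw [this, mul_zero]
  rcases lt_trichotomy u 0 with h|h|h
  · rw [abs_of_neg h, hzero u h, zero_add]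
  · simp [h]
  · rw [abs_of_pos h, hzero (-u) (by linarith), add_zero]

lemma intervalIntegrable_abs_rpow_neg_half (a b : ℝ) :
    IntervalIntegrable (fun u => |u| ^ (-(1:ℝ)/2)) volume a b := by
  have h1 : IntervalIntegrable (fun u : ℝ => u ^ (-(1:ℝ)/2)) volume a b :=
    intervalIntegral.intervalIntegrable_rpow' (by norm_num)
  have h2 : IntervalIntegrable (fun u : ℝ => (-u) ^ (-(1:ℝ)/2)) volume a b := by
    have := (IntervalIntegrable.iff_comp_neg (by simp)).mp
      (intervalIntegral.intervalIntegrable_rpow' (a := -a) (b := -b) (r := -(1:ℝ)/2)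
        (by norm_num))
    simpa using this
  simpa [abs_rpow_neg_half] using h1.add h2

lemma rpow_half_eq_zero_of_nonpos {x : ℝ} (hx : x ≤ 0) : x ^ ((1:ℝ)/2) = 0 := by
  rcases lt_or_eq_of_le hx with h|h
  · rw [Real.rpow_def_of_neg h]
    have : Real.cos ((1:ℝ)/2 * π) = 0 := by
      rw [show ((1:ℝ)/2 * π) = π/2 by ring, Real.cos_pi_div_two]
    rw [this, mul_zero]
  · subst h; exact Real.zero_rpow (by norm_num)

lemma integral_abs_rpow_neg_half_le {θ : ℝ} (h0 : 0 ≤ θ) (hπ : θ ≤ π) :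
    ∫ t in (0:ℝ)..π, |t - θ| ^ (-(1:ℝ)/2) ≤ 4 * Real.sqrt π := by
  have hc : ∫ t in (0:ℝ)..π, |t - θ| ^ (-(1:ℝ)/2)
      = ∫ u in (0-θ)..(π-θ), |u| ^ (-(1:ℝ)/2) :=
    intervalIntegral.integral_comp_sub_right (fun u => |u| ^ (-(1:ℝ)/2)) θ
  have hsplit : ∫ u in (0-θ)..(π-θ), |u| ^ (-(1:ℝ)/2)
      = (∫ u in (0-θ)..(π-θ), u ^ (-(1:ℝ)/2)) + ∫ u in (0-θ)..(π-θ), (-u) ^ (-(1:ℝ)/2) := by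
    rw [← intervalIntegral.integral_add (intervalIntegral.intervalIntegrable_rpow' (by norm_num))
      (by
        have := (IntervalIntegrable.iff_comp_neg (by simp)).mp
          (intervalIntegral.intervalIntegrable_rpow' (a := -(0-θ)) (b := -(π-θ)) (r := -(1:ℝ)/2)
            (by norm_num))
        simpa using this)]
    congr 1; ext u; exact abs_rpow_neg_half u
  have hval1 : ∫ u in (0-θ)..(π-θ), u ^ (-(1:ℝ)/2) = 2 * (π-θ) ^ ((1:ℝ)/2) := by
    rw [integral_rpow (Or.inl (by norm_num))]
    rw [show (-(1:ℝ)/2 + 1) = 1/2 by norm_num,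
      rpow_half_eq_zero_of_nonpos (by linarith : (0-θ:ℝ) ≤ 0)]
    ring
  have hval2 : ∫ u in (0-θ)..(π-θ), (-u) ^ (-(1:ℝ)/2) = 2 * θ ^ ((1:ℝ)/2) := by
    have := intervalIntegral.integral_comp_neg (a := 0-θ) (b := π-θ)
      (fun v => v ^ (-(1:ℝ)/2))
    rw [this, integral_rpow (Or.inl (by norm_num))]
    rw [show (-(1:ℝ)/2 + 1) = 1/2 by norm_num,
      rpow_half_eq_zero_of_nonpos (by linarith : (-(π-θ):ℝ) ≤ 0)]
    rw [show (-(0-θ):ℝ) = θ by ring]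
    ring
  have hb1 : (π-θ) ^ ((1:ℝ)/2) ≤ Real.sqrt π := by
    rw [← Real.sqrt_eq_rpow]
    exact Real.sqrt_le_sqrt (by linarith)
  have hb2 : θ ^ ((1:ℝ)/2) ≤ Real.sqrt π := by
    rw [← Real.sqrt_eq_rpow]
    exact Real.sqrt_le_sqrt (by linarith)
  rw [hc, hsplit, hval1, hval2]; linarith



lemma neg_log_le_rpow {x : ℝ} (hx : 0 < x) : -Real.log x ≤ 2 * x ^ (-(1:ℝ)/2) := by
  have hs : 0 < Real.sqrt x := Real.sqrt_pos.2 hx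
  have h1 : Real.log x = 2 * Real.log (Real.sqrt x) := by
    rw [Real.log_sqrt hx.le]; ring
  have h2 : Real.log ((Real.sqrt x)⁻¹) ≤ (Real.sqrt x)⁻¹ - 1 :=
    Real.log_le_sub_one_of_pos (by positivity)
  have h3 : x ^ (-(1:ℝ)/2) = (Real.sqrt x)⁻¹ := by
    rw [show (-(1:ℝ)/2) = -(1/2) by ring, Real.rpow_neg hx.le, Real.sqrt_eq_rpow]
  rw [h3, h1, Real.log_inv] at *
  nlinarith [h2]

-- the absolute value monoid hom
def cAbsHom : ℂ →* ℝ where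
  toFun := Complex.abs
  map_one' := map_one Complex.abs
  map_mul' := map_mul Complex.abs

lemma cabs_tprod (f : ℕ → ℂ) (hf : Multipliable f) :
    Complex.abs (∏' n, f n) = ∏' n, Complex.abs (f n) :=
  hf.map_tprod cAbsHom Complex.continuous_abs

lemma multipliable_abs (f : ℕ → ℂ) (hf : Multipliable f) :
    Multipliable (fun n => Complex.abs (f n)) :=
  hf.map cAbsHom Complex.continuous_abs

-- |f n| ≤ 1 for Blaschke factors
lemma abs_factor_le_one {z w : ℂ} (hz : 0 ≤ z.im) (hw : 0 ≤ w.im) :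
    Complex.abs ((z - w)/(z - starRingEnd ℂ w)) ≤ 1 := by
  rw [map_div₀]
  rcases eq_or_lt_of_le (Complex.abs.nonneg (z - starRingEnd ℂ w)) with h|h
  · have ha : Complex.abs (z - w) ≤ 0 := by
      rw [h]; exact abs_sub_le_abs_sub_conj hz hw
    have : Complex.abs (z - w) = 0 := le_antisymm ha (Complex.abs.nonneg _)
    simp [this]
  · rw [div_le_one h]
    exact abs_sub_le_abs_sub_conj hz hw

lemma abs_tprod_le_one (lam : ℕ → ℂ) (him : ∀ n, 0 ≤ (lam n).im) {z : ℂ} (hz : 0 ≤ z.im) :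
    Complex.abs (∏' n, (z - lam n)/(z - starRingEnd ℂ (lam n))) ≤ 1 := by
  by_cases hM : Multipliable (fun n => (z - lam n)/(z - starRingEnd ℂ (lam n)))
  · rw [cabs_tprod _ hM]
    have hMu := multipliable_abs _ hM
    have hT := hMu.hasProd.tendsto_prod_nat
    refine le_of_tendsto hT (Filter.Eventually.of_forall fun m => ?_)
    exact Finset.prod_le_one (fun i _ => Complex.abs.nonneg _)
      (fun i _ => abs_factor_le_one hz (him i))
  · rw [tprod_eq_one_of_not_multipliable hM]; simp

-- main pointwise inequality : tprod vs tsum of logs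
lemma key_pointwise (lam : ℕ → ℂ) (him : ∀ n, 0 ≤ (lam n).im) {z : ℂ} (hz : 0 ≤ z.im)
    (hne : ∀ n, z ≠ lam n) {ξ : ℝ} (hξ : 0 ≤ ξ) :
    ENNReal.ofReal (ξ * Real.log ((Complex.abs
        (∏' n, (z - lam n)/(z - starRingEnd ℂ (lam n))))⁻¹))
      ≤ ∑' n, ENNReal.ofReal (ξ * (Real.log (Complex.abs (z - starRingEnd ℂ (lam n)))
          - Real.log (Complex.abs (z - lam n)))) := by
  set f : ℕ → ℂ := fun n => (z - lam n)/(z - starRingEnd ℂ (lam n)) with hf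
  have hden : ∀ n, z - starRingEnd ℂ (lam n) ≠ 0 := by
    intro n h
    have h1 : z = starRingEnd ℂ (lam n) := by
      rwa [sub_eq_zero] at h
    have h2 : z.im = -(lam n).im := by rw [h1, Complex.conj_im]
    have h3 : (lam n).im = 0 := by
      have := him n; linarith [hz.trans_eq h2]
    apply hne n
    rw [h1]
    exact Complex.ext (by simp) (by simp [h3, h2])
  have hnum : ∀ n, z - lam n ≠ 0 := fun n h => hne n (by rwa [sub_eq_zero] at h)
  set u : ℕ → ℝ := fun n => Complex.abs (f n) with hu
  have hu0 : ∀ n, 0 < u n := fun n => by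
    simp only [hu, hf]
    exact Complex.abs.pos (div_ne_zero (hnum n) (hden n))
  set g : ℕ → ℝ := fun n => Real.log (Complex.abs (z - starRingEnd ℂ (lam n)))
      - Real.log (Complex.abs (z - lam n)) with hg
  have hlog : ∀ n, Real.log (u n) = -(g n) := by
    intro n
    simp only [hu, hf, hg, map_div₀]
    rw [Real.log_div (Complex.abs.ne_zero (hnum n)) (Complex.abs.ne_zero (hden n))]
    ring
  have hg0 : ∀ n, 0 ≤ g n := by
    intro n
    have h1 : u n ≤ 1 := abs_factor_le_one hz (him n)
    have := Real.log_nonpos (hu0 n).le h1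
    rw [hlog n] at this; linarith
  by_cases hM : Multipliable f
  · have habs : Complex.abs (∏' n, f n) = ∏' n, u n := cabs_tprod f hM
    have hMu : Multipliable u := multipliable_abs f hM
    by_cases hS : Summable fun n => Real.log (u n)
    · -- equality case
      have hP : HasProd u (Real.exp (∑' n, Real.log (u n))) := by
        have h := hS.hasSum.rexp
        have heq : (Real.exp ∘ fun n => Real.log (u n)) = u :=
          funext fun n => Real.exp_log (hu0 n)
        rwa [heq] at h
      have htp : ∏' n, u n = Real.exp (∑' n, Real.log (u n)) := hP.tprod_eq
      have hSg : Summable g := by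
        have := hS.neg
        refine this.congr fun n => ?_
        rw [hlog n]; ring
      have hsum_eq : ∑' n, Real.log (u n) = -∑' n, g n := by
        rw [← tsum_neg]
        exact tsum_congr fun n => (hlog n) ▸ rfl
      rw [habs, htp, Real.log_inv, Real.log_exp, hsum_eq, neg_neg]
      rw [← tsum_mul_left]
      rw [ENNReal.ofReal_tsum_of_nonneg (fun n => mul_nonneg hξ (hg0 n)) (hSg.mul_left ξ)]
    · -- product diverges to 0
      have htp0 : ∏' n, u n = 0 := by
        have hT1 := hMu.hasProd.tendsto_prod_nat
        have hNS : ¬ Summable fun n => -(Real.log (u n)) := by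
          intro h; exact hS (by simpa using h.neg)
        have hgpos : ∀ n, 0 ≤ -(Real.log (u n)) := by
          intro n; rw [hlog n]; simpa using hg0 n
        have hT2 : Tendsto (fun m => ∑ i ∈ Finset.range m, -(Real.log (u i))) atTop atTop :=
          (not_summable_iff_tendsto_nat_atTop_of_nonneg hgpos).1 hNS
        have hT3 : Tendsto (fun m => ∑ i ∈ Finset.range m, Real.log (u i)) atTop atBot := by
          have := Filter.tendsto_neg_atTop_atBot.comp hT2
          refine this.congr fun m => ?_
          simp [Function.comp]
        have hT4 : Tendsto (fun m => ∏ i ∈ Finset.range m, u i) atTop (nhds 0) := by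
          have := Real.tendsto_exp_atBot.comp hT3
          refine this.congr fun m => ?_
          rw [Function.comp_apply, Real.exp_sum]
          exact Finset.prod_congr rfl fun i _ => Real.exp_log (hu0 i)
        exact tendsto_nhds_unique hT1 hT4
      rw [habs, htp0]
      simp
  · rw [tprod_eq_one_of_not_multipliable hM]
    simp


lemma sqrt_two_le_two : Real.sqrt 2 ≤ 2 := by
  nlinarith [Real.sq_sqrt (by norm_num : (0:ℝ) ≤ 2), Real.sqrt_nonneg 2]

lemma g_small {ξ t : ℝ} {w : ℂ} (hξ : 0 < ξ) (ht0 : 0 ≤ t) (htπ : t ≤ π)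
    (hw : 0 ≤ w.im) (hρ : Complex.abs w < ξ/2) :
    Real.log (Complex.abs (zc ξ t - starRingEnd ℂ w)) - Real.log (Complex.abs (zc ξ t - w))
      ≤ 8 * Complex.abs w / ξ := by
  set z := zc ξ t with hz
  have hzim0 : 0 ≤ z.im := by
    rw [hz, zc_im]; exact mul_nonneg hξ.le (Real.sin_nonneg_of_nonneg_of_le_pi ht0 htπ)
  have hzim1 : z.im ≤ ξ := by
    rw [hz, zc_im]
    nlinarith [Real.sin_le_one t]
  have hwim : w.im ≤ Complex.abs w := le_trans (le_abs_self _) (Complex.abs_im_le_abs w)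
  have ha2 : ξ/2 ≤ Complex.abs (z - w) := by
    have h1 : Complex.abs z - Complex.abs w ≤ Complex.abs (z - w) := Complex.abs.le_sub z w
    rw [hz, zc_abs hξ.le] at h1
    linarith
  have ha0 : 0 < Complex.abs (z - w) := lt_of_lt_of_le (by linarith) ha2
  have hble : Complex.abs (z - w) ≤ Complex.abs (z - starRingEnd ℂ w) :=
    abs_sub_le_abs_sub_conj hzim0 hw
  have hb0 : 0 < Complex.abs (z - starRingEnd ℂ w) := lt_of_lt_of_le ha0 hble
  set a := Complex.abs (z - w)
  set b := Complex.abs (z - starRingEnd ℂ w)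
  have hsq : b^2 = a^2 + 4 * z.im * w.im := abs_sub_conj_sq z w
  have hnum : 4 * z.im * w.im ≤ 4 * ξ * Complex.abs w := by
    nlinarith [Complex.abs.nonneg w, mul_nonneg hzim0 (hw.trans hwim)]
  have hratio : b^2/a^2 - 1 ≤ 16 * Complex.abs w / ξ := by
    rw [hsq]
    have h1 : (a^2 + 4*z.im*w.im)/a^2 - 1 = 4*z.im*w.im/a^2 := by
      field_simp
      ring
    rw [h1]
    have h2 : 4*z.im*w.im/a^2 ≤ 4*ξ*Complex.abs w/(ξ^2/4) :=
      div_le_div₀ (by positivity) hnum (by positivity) (by nlinarith)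
    have h3 : 4*ξ*Complex.abs w/(ξ^2/4) = 16*Complex.abs w/ξ := by
      field_simp; ring
    linarith
  have hlog : Real.log (b^2/a^2) ≤ b^2/a^2 - 1 :=
    Real.log_le_sub_one_of_pos (by positivity)
  have hsplit : Real.log (b^2/a^2) = 2*Real.log b - 2*Real.log a := by
    rw [Real.log_div (by positivity) (by positivity), Real.log_pow, Real.log_pow]
    push_cast; ring
  have h16 : (16:ℝ) * Complex.abs w / ξ = 2 * (8 * Complex.abs w / ξ) := by ring
  rw [hsplit] at hlog
  rw [h16] at hratio
  linarith

lemma g_big {ξ t : ℝ} {w : ℂ} (hξ : 0 < ξ) (ht0 : 0 ≤ t) (htπ : t ≤ π)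
    (hw : 0 ≤ w.im) (hρ : ξ/2 ≤ Complex.abs w) (hne : t ≠ w.arg) :
    Real.log (Complex.abs (zc ξ t - starRingEnd ℂ w)) - Real.log (Complex.abs (zc ξ t - w))
      ≤ Real.log ((ξ + Complex.abs w)*π/(Real.sqrt 2*ξ))
        + 2 * |t - w.arg| ^ (-(1:ℝ)/2) := by
  have hπ := Real.pi_pos
  set z := zc ξ t with hz
  have hzim0 : 0 ≤ z.im := by
    rw [hz, zc_im]; exact mul_nonneg hξ.le (Real.sin_nonneg_of_nonneg_of_le_pi ht0 htπ)
  have habs : 0 < |t - w.arg| := abs_pos.2 (sub_ne_zero.2 hne)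
  have hm0 : 0 < Real.sqrt 2 * ξ / π * |t - w.arg| := by
    have : (0:ℝ) < Real.sqrt 2 := Real.sqrt_pos.2 (by norm_num)
    positivity
  have hma : Real.sqrt 2 * ξ / π * |t - w.arg| ≤ Complex.abs (z - w) :=
    abs_zc_sub_ge hξ ht0 htπ hw hρ
  have ha0 : 0 < Complex.abs (z - w) := lt_of_lt_of_le hm0 hma
  have hb0 : 0 < Complex.abs (z - starRingEnd ℂ w) :=
    lt_of_lt_of_le ha0 (abs_sub_le_abs_sub_conj hzim0 hw)
  have hbub : Complex.abs (z - starRingEnd ℂ w) ≤ ξ + Complex.abs w := by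
    have h1 : Complex.abs (z - starRingEnd ℂ w) ≤ Complex.abs z + Complex.abs (starRingEnd ℂ w) := by
      simpa [sub_eq_add_neg, map_neg] using Complex.abs.add_le z (-(starRingEnd ℂ w))
    rwa [hz, zc_abs hξ.le, Complex.abs_conj] at h1
  have hlogb : Real.log (Complex.abs (z - starRingEnd ℂ w)) ≤ Real.log (ξ + Complex.abs w) :=
    Real.log_le_log hb0 hbub
  have hloga : Real.log (Real.sqrt 2 * ξ / π * |t - w.arg|) ≤ Real.log (Complex.abs (z - w)) :=
    Real.log_le_log hm0 hma
  have hsplitm : Real.log (Real.sqrt 2 * ξ / π * |t - w.arg|)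
      = Real.log (Real.sqrt 2 * ξ / π) + Real.log |t - w.arg| := by
    rw [Real.log_mul (by positivity) (ne_of_gt habs)]
  have hneglog : -Real.log |t - w.arg| ≤ 2 * |t - w.arg| ^ (-(1:ℝ)/2) :=
    neg_log_le_rpow habs
  have hcomb : Real.log (ξ + Complex.abs w) - Real.log (Real.sqrt 2 * ξ / π)
      = Real.log ((ξ + Complex.abs w)*π/(Real.sqrt 2*ξ)) := by
    have hs : (0:ℝ) < Real.sqrt 2 := Real.sqrt_pos.2 (by norm_num)
    rw [← Real.log_div (by positivity) (by positivity)]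
    congr 1
    field_simp
  linarith [hlogb, hloga, hsplitm ▸ hloga, hneglog]

lemma A_nonneg {ξ : ℝ} {ρ : ℝ} (hξ : 0 < ξ) (hρ : ξ/2 ≤ ρ) :
    0 ≤ Real.log ((ξ + ρ)*π/(Real.sqrt 2*ξ)) := by
  have hπ := Real.pi_gt_three
  have hs : (0:ℝ) < Real.sqrt 2 := Real.sqrt_pos.2 (by norm_num)
  apply Real.log_nonneg
  rw [le_div_iff₀ (by positivity)]
  nlinarith [sqrt_two_le_two]

def bBound (ξ : ℝ) (w : ℂ) : ℝ :=
  if Complex.abs w < ξ/2 then 8*π*Complex.abs w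
  else ξ*(π*Real.log ((ξ + Complex.abs w)*π/(Real.sqrt 2*ξ)) + 8*Real.sqrt π)

lemma bBound_nonneg {ξ : ℝ} (hξ : 0 < ξ) (w : ℂ) : 0 ≤ bBound ξ w := by
  unfold bBound
  split_ifs with h
  · positivity
  · push_neg at h
    have hA := A_nonneg hξ h
    have := Real.pi_pos
    have := Real.sqrt_nonneg π
    positivity

lemma continuous_zc (ξ : ℝ) : Continuous (zc ξ) := by
  unfold zc
  exact continuous_const.mul (Complex.continuous_exp.comp
    (continuous_const.mul Complex.continuous_ofReal))

lemma g_measurable (ξ : ℝ) (w : ℂ) :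
    Measurable (fun t => Real.log (Complex.abs (zc ξ t - starRingEnd ℂ w))
      - Real.log (Complex.abs (zc ξ t - w))) := by
  have h1 : ∀ c : ℂ, Measurable (fun t => Real.log (Complex.abs (zc ξ t - c))) := fun c =>
    Real.measurable_log.comp (Complex.continuous_abs.comp
      ((continuous_zc ξ).sub continuous_const)).measurable
  exact (h1 _).sub (h1 _)

lemma per_n_bound {ξ : ℝ} (hξ : 0 < ξ) {w : ℂ} (hw : 0 ≤ w.im) :
    ∫⁻ t in Set.Ioc 0 π, ENNReal.ofReal (ξ * (Real.log (Complex.abs (zc ξ t - starRingEnd ℂ w))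
        - Real.log (Complex.abs (zc ξ t - w))))
      ≤ ENNReal.ofReal (bBound ξ w) := by
  have hπ := Real.pi_pos
  by_cases hc : Complex.abs w < ξ/2
  · -- small case
    have hpt : ∀ t ∈ Set.Ioc (0:ℝ) π,
        ENNReal.ofReal (ξ * (Real.log (Complex.abs (zc ξ t - starRingEnd ℂ w))
          - Real.log (Complex.abs (zc ξ t - w)))) ≤ ENNReal.ofReal (8 * Complex.abs w) := by
      intro t ht
      apply ENNReal.ofReal_le_ofReal
      have h := g_small hξ ht.1.le ht.2 hw hc
      calc ξ * (Real.log (Complex.abs (zc ξ t - starRingEnd ℂ w))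
            - Real.log (Complex.abs (zc ξ t - w))) ≤ ξ * (8 * Complex.abs w / ξ) :=
        mul_le_mul_of_nonneg_left h hξ.le
      _ = 8 * Complex.abs w := by field_simp
    calc ∫⁻ t in Set.Ioc 0 π, ENNReal.ofReal (ξ * (Real.log (Complex.abs (zc ξ t - starRingEnd ℂ w))
          - Real.log (Complex.abs (zc ξ t - w))))
        ≤ ∫⁻ _ in Set.Ioc (0:ℝ) π, ENNReal.ofReal (8 * Complex.abs w) :=
          MeasureTheory.setLIntegral_mono measurable_const hpt
      _ = ENNReal.ofReal (8 * Complex.abs w) * volume (Set.Ioc (0:ℝ) π) :=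
          MeasureTheory.setLIntegral_const _ _
      _ = ENNReal.ofReal (8 * Complex.abs w) * ENNReal.ofReal π := by
          rw [Real.volume_Ioc, sub_zero]
      _ = ENNReal.ofReal (8 * π * Complex.abs w) := by
          rw [← ENNReal.ofReal_mul (by positivity)]; ring_nf
      _ = ENNReal.ofReal (bBound ξ w) := by rw [bBound, if_pos hc]
  · -- big case
    push_neg at hc
    set A := Real.log ((ξ + Complex.abs w)*π/(Real.sqrt 2*ξ)) with hA
    have hA0 : 0 ≤ A := A_nonneg hξ hc
    set F : ℝ → ℝ := fun t => |t - w.arg| ^ (-(1:ℝ)/2) with hF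
    have hF0 : ∀ t, 0 ≤ F t := fun t => Real.rpow_nonneg (abs_nonneg _) _
    -- integrability of F on Ioc 0 π
    have hFint : IntervalIntegrable F volume 0 π := by
      have := (intervalIntegrable_abs_rpow_neg_half (0 - w.arg) (π - w.arg)).comp_sub_right w.arg
      simpa using this
    have hFint' : MeasureTheory.IntegrableOn F (Set.Ioc 0 π) volume := by
      rw [← intervalIntegrable_iff_integrableOn_Ioc_of_le hπ.le]
      exact hFint
    set H : ℝ → ℝ := fun t => ξ*A + 2*ξ*F t with hH
    have hH0 : ∀ t, 0 ≤ H t := fun t => by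
      have := hF0 t; positivity
    have hHint : MeasureTheory.IntegrableOn H (Set.Ioc 0 π) volume := by
      apply MeasureTheory.Integrable.add
      · exact MeasureTheory.integrableOn_const (by rw [Real.volume_Ioc]; exact ENNReal.ofReal_ne_top)
      · exact hFint'.const_mul (2*ξ)
    -- a.e. pointwise bound
    have hae : ∀ᵐ t ∂(volume.restrict (Set.Ioc 0 π)),
        ENNReal.ofReal (ξ * (Real.log (Complex.abs (zc ξ t - starRingEnd ℂ w))
          - Real.log (Complex.abs (zc ξ t - w)))) ≤ ENNReal.ofReal (H t) := by
      rw [MeasureTheory.ae_restrict_iff' measurableSet_Ioc]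
      have h1 : ∀ᵐ t : ℝ ∂volume, t ∉ ({w.arg} : Set ℝ) :=
        MeasureTheory.measure_eq_zero_iff_ae_notMem.mp (measure_singleton _)
      filter_upwards [h1] with t ht1 ht
      apply ENNReal.ofReal_le_ofReal
      have hne : t ≠ w.arg := by simpa using ht1
      have h := g_big hξ ht.1.le ht.2 hw hc hne
      calc ξ * (Real.log (Complex.abs (zc ξ t - starRingEnd ℂ w))
            - Real.log (Complex.abs (zc ξ t - w)))
          ≤ ξ * (A + 2 * F t) := mul_le_mul_of_nonneg_left h hξ.le
        _ = H t := by rw [hH]; ring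
    -- integral of H
    have hHval : ∫ t in Set.Ioc (0:ℝ) π, H t ≤ ξ*(π*A + 8*Real.sqrt π) := by
      have hsplit : ∫ t in Set.Ioc (0:ℝ) π, H t
          = (∫ _ in Set.Ioc (0:ℝ) π, ξ*A) + ∫ t in Set.Ioc (0:ℝ) π, 2*ξ*F t := by
        rw [← MeasureTheory.integral_add]
        · exact MeasureTheory.integrableOn_const (by rw [Real.volume_Ioc]; exact ENNReal.ofReal_ne_top)
        · exact hFint'.const_mul (2*ξ)
      have hconst : (∫ _ in Set.Ioc (0:ℝ) π, ξ*A) = ξ*A*π := by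
        rw [MeasureTheory.setIntegral_const, Real.volume_real_Ioc_of_le hπ.le, sub_zero,
          smul_eq_mul]
        ring
      have hFle : ∫ t in Set.Ioc (0:ℝ) π, F t ≤ 4*Real.sqrt π := by
        rw [← intervalIntegral.integral_of_le hπ.le]
        exact integral_abs_rpow_neg_half_le (Complex.arg_nonneg_iff.2 hw) (Complex.arg_le_pi w)
      have hF2 : ∫ t in Set.Ioc (0:ℝ) π, 2*ξ*F t = 2*ξ*∫ t in Set.Ioc (0:ℝ) π, F t := by
        rw [← MeasureTheory.integral_const_mul]
      rw [hsplit, hconst, hF2]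
      nlinarith [hFle, hξ]
    calc ∫⁻ t in Set.Ioc 0 π, ENNReal.ofReal (ξ * (Real.log (Complex.abs (zc ξ t - starRingEnd ℂ w))
          - Real.log (Complex.abs (zc ξ t - w))))
        ≤ ∫⁻ t in Set.Ioc (0:ℝ) π, ENNReal.ofReal (H t) := MeasureTheory.lintegral_mono_ae hae
      _ = ENNReal.ofReal (∫ t in Set.Ioc (0:ℝ) π, H t) :=
          (MeasureTheory.ofReal_integral_eq_lintegral_ofReal hHint
            (Filter.Eventually.of_forall hH0)).symm
      _ ≤ ENNReal.ofReal (ξ*(π*A + 8*Real.sqrt π)) := ENNReal.ofReal_le_ofReal hHval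
      _ = ENNReal.ofReal (bBound ξ w) := by rw [bBound, if_neg (not_lt.2 hc)]

lemma log_le_div_exp {x : ℝ} (hx : 0 < x) : Real.log x ≤ x / Real.exp 1 := by
  have h := Real.log_le_sub_one_of_pos (x := x / Real.exp 1) (by positivity)
  rw [Real.log_div (ne_of_gt hx) (Real.exp_ne_zero 1), Real.log_exp] at h
  linarith

lemma sqrt_two_ge : (1.41:ℝ) ≤ Real.sqrt 2 := by
  nlinarith [Real.sq_sqrt (by norm_num : (0:ℝ) ≤ 2), Real.sqrt_nonneg 2]

lemma sqrt_pi_le_two : Real.sqrt π ≤ 2 := by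
  nlinarith [Real.sq_sqrt Real.pi_pos.le, Real.sqrt_nonneg π, Real.pi_le_four]

lemma exp_one_ge : (2.71:ℝ) ≤ Real.exp 1 := by
  have := Real.exp_one_gt_d9; linarith

lemma bBound_le {ξ : ℝ} (hξ : 0 < ξ) (w : ℂ) : bBound ξ w ≤ 100 * Complex.abs w := by
  have hρ0 : 0 ≤ Complex.abs w := Complex.abs.nonneg w
  unfold bBound
  split_ifs with h
  · nlinarith [Real.pi_le_four]
  · push_neg at h
    set ρ := Complex.abs w with hρ
    have hρpos : 0 < ρ := lt_of_lt_of_le (by positivity) h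
    have hξ2ρ : ξ ≤ 2*ρ := by linarith
    have hπ := Real.pi_pos
    have hs2 : (0:ℝ) < Real.sqrt 2 := Real.sqrt_pos.2 (by norm_num)
    have he1 : (0:ℝ) < Real.exp 1 := Real.exp_pos 1
    have h1 : Real.log ((ξ + ρ)*π/(Real.sqrt 2*ξ)) ≤ Real.log (3*ρ*π/(Real.sqrt 2*ξ)) := by
      apply Real.log_le_log (by positivity)
      exact (div_le_div_iff_of_pos_right (by positivity)).2 (by nlinarith)
    have h2 : Real.log (3*ρ*π/(Real.sqrt 2*ξ)) ≤ (3*ρ*π/(Real.sqrt 2*ξ))/Real.exp 1 :=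
      log_le_div_exp (by positivity)
    have hA := h1.trans h2
    have key1 : ξ*π*Real.log ((ξ + ρ)*π/(Real.sqrt 2*ξ)) ≤ 3*π^2*ρ/(Real.sqrt 2*Real.exp 1) := by
      have hmul := mul_le_mul_of_nonneg_left hA (show (0:ℝ) ≤ ξ*π by positivity)
      have heq : ξ*π*((3*ρ*π/(Real.sqrt 2*ξ))/Real.exp 1)
          = 3*π^2*ρ/(Real.sqrt 2*Real.exp 1) := by
        field_simp
      calc ξ*π*Real.log ((ξ + ρ)*π/(Real.sqrt 2*ξ))
          ≤ ξ*π*((3*ρ*π/(Real.sqrt 2*ξ))/Real.exp 1) := hmul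
        _ = 3*π^2*ρ/(Real.sqrt 2*Real.exp 1) := heq
    have key2 : 3*π^2*ρ/(Real.sqrt 2*Real.exp 1) ≤ 8*ρ := by
      rw [div_le_iff₀ (by positivity)]
      have hp : π^2 ≤ 9.9225 := by nlinarith [Real.pi_lt_d2, hπ]
      have hse : (3.8211:ℝ) ≤ Real.sqrt 2 * Real.exp 1 := by
        nlinarith [sqrt_two_ge, exp_one_ge]
      nlinarith [mul_le_mul_of_nonneg_right hp hρpos.le,
        mul_le_mul_of_nonneg_left hse (by positivity : (0:ℝ) ≤ 8*ρ)]
    have key3 : 8*Real.sqrt π*ξ ≤ 32*ρ := by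
      nlinarith [sqrt_pi_le_two, Real.sqrt_nonneg π]
    have expand : ξ*(π*Real.log ((ξ + ρ)*π/(Real.sqrt 2*ξ)) + 8*Real.sqrt π)
        = ξ*π*Real.log ((ξ + ρ)*π/(Real.sqrt 2*ξ)) + 8*Real.sqrt π*ξ := by ring
    linarith

lemma bBound_tendsto (w : ℂ) : Tendsto (fun ξ => bBound ξ w) (nhdsWithin 0 (Set.Ioi 0)) (nhds 0) := by
  rcases eq_or_lt_of_le (Complex.abs.nonneg w) with h0|h0
  · apply Tendsto.congr'
      ?_ (tendsto_const_nhds :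
        Tendsto (fun _ : ℝ => (0:ℝ)) (nhdsWithin 0 (Set.Ioi 0)) (nhds 0))
    filter_upwards [self_mem_nhdsWithin] with ξ hξ
    have hξ0 : (0:ℝ) < ξ := hξ
    have hb : bBound ξ w = 0 := by
      unfold bBound
      rw [← h0, if_pos (half_pos hξ0)]
      ring
    rw [hb]
  · set ρ := Complex.abs w with hρ
    have hπ := Real.pi_pos
    have hs2 : (0:ℝ) < Real.sqrt 2 := Real.sqrt_pos.2 (by norm_num)
    have hmem : Set.Ioo (0:ℝ) (2*ρ) ∈ nhdsWithin (0:ℝ) (Set.Ioi 0) :=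
      Ioo_mem_nhdsGT_of_mem ⟨le_refl 0, by positivity⟩
    have t1 : Tendsto (fun ξ : ℝ => ξ*(π*Real.log ((ξ+ρ)*π/Real.sqrt 2)))
        (nhdsWithin 0 (Set.Ioi 0)) (nhds 0) := by
      have hc : ContinuousAt (fun ξ : ℝ => ξ*(π*Real.log ((ξ+ρ)*π/Real.sqrt 2))) 0 := by
        apply ContinuousAt.mul continuousAt_id
        apply ContinuousAt.mul continuousAt_const
        apply ContinuousAt.comp (Real.continuousAt_log (by positivity))
        fun_prop
      have h2 : Tendsto (fun ξ : ℝ => ξ*(π*Real.log ((ξ+ρ)*π/Real.sqrt 2)))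
          (nhdsWithin 0 (Set.Ioi 0)) (nhds (0 * (π * Real.log ((0+ρ)*π/Real.sqrt 2)))) :=
        hc.tendsto.mono_left nhdsWithin_le_nhds
      simpa using h2
    have t2 : Tendsto (fun ξ : ℝ => π*(ξ*Real.log ξ)) (nhdsWithin 0 (Set.Ioi 0)) (nhds 0) := by
      have h := tendsto_log_mul_rpow_nhdsGT_zero (r := 1) one_pos
      have h2 : Tendsto (fun ξ : ℝ => ξ*Real.log ξ) (nhdsWithin 0 (Set.Ioi 0)) (nhds 0) := by
        apply h.congr'
        filter_upwards [self_mem_nhdsWithin] with ξ _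
        rw [Real.rpow_one, mul_comm]
      have := h2.const_mul π
      simpa using this
    have t3 : Tendsto (fun ξ : ℝ => 8*Real.sqrt π*ξ) (nhdsWithin 0 (Set.Ioi 0)) (nhds 0) := by
      have : Tendsto (fun ξ : ℝ => 8*Real.sqrt π*ξ) (nhds 0) (nhds (8*Real.sqrt π*0)) :=
        (continuous_const.mul continuous_id).tendsto 0
      rw [mul_zero] at this
      exact this.mono_left nhdsWithin_le_nhds
    have hT : Tendsto (fun ξ : ℝ => ξ*(π*Real.log ((ξ+ρ)*π/Real.sqrt 2))
          - π*(ξ*Real.log ξ) + 8*Real.sqrt π*ξ) (nhdsWithin 0 (Set.Ioi 0)) (nhds 0) := by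
      have := (t1.sub t2).add t3
      simpa using this
    apply Tendsto.congr' ?_ hT
    filter_upwards [hmem] with ξ hξ
    have hξ0 : 0 < ξ := hξ.1
    rw [bBound, if_neg (not_lt.2 (by linarith [hξ.2]))]
    have hlog : Real.log ((ξ+ρ)*π/(Real.sqrt 2*ξ))
        = Real.log ((ξ+ρ)*π/Real.sqrt 2) - Real.log ξ := by
      rw [show (ξ+ρ)*π/(Real.sqrt 2*ξ) = ((ξ+ρ)*π/Real.sqrt 2)/ξ from (div_div _ _ _).symm]
      rw [Real.log_div (by positivity) (ne_of_gt hξ0)]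
    rw [hlog]
    ring

lemma ae_ne_lam {ξ : ℝ} (hξ : 0 < ξ) (lam : ℕ → ℂ) :
    ∀ᵐ t ∂(volume.restrict (Set.Ioc 0 π)), ∀ n, zc ξ t ≠ lam n := by
  set S : ℕ → Set ℝ := fun n => {t | t ∈ Set.Ioc (0:ℝ) π ∧ zc ξ t = lam n} with hS
  have hsub : ∀ n, (S n).Subsingleton := by
    intro n t1 h1 t2 h2
    obtain ⟨⟨ht10, ht1π⟩, he1⟩ := h1
    obtain ⟨⟨ht20, ht2π⟩, he2⟩ := h2
    have hξc : (ξ:ℂ) ≠ 0 := by exact_mod_cast ne_of_gt hξ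
    have he : Complex.exp (Complex.I * t1) = Complex.exp (Complex.I * t2) :=
      mul_left_cancel₀ hξc (by rw [show (ξ:ℂ) * Complex.exp (Complex.I*t1) = zc ξ t1 from rfl,
        show (ξ:ℂ) * Complex.exp (Complex.I*t2) = zc ξ t2 from rfl, he1, he2])
    rw [Complex.exp_eq_exp_iff_exists_int] at he
    obtain ⟨k, hk⟩ := he
    have him : t1 = t2 + k * (2*π) := by
      have := congrArg Complex.im hk
      simpa [Complex.mul_im, Complex.add_im] using this
    have hπ := Real.pi_pos
    have hklt : (k:ℝ) < 1 := by nlinarith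
    have hkgt : (-1:ℝ) < k := by nlinarith
    have hk0 : k = 0 := by
      have a1 : k < 1 := by exact_mod_cast hklt
      have a2 : -1 < k := by exact_mod_cast hkgt
      omega
    rw [him, hk0]
    push_cast
    ring
  have hnull : volume (⋃ n, S n) = 0 :=
    measure_iUnion_null fun n => ((hsub n).countable).measure_zero _
  have h1 : ∀ᵐ t ∂(volume : Measure ℝ), t ∉ ⋃ n, S n :=
    MeasureTheory.measure_eq_zero_iff_ae_notMem.mp hnull
  rw [MeasureTheory.ae_restrict_iff' measurableSet_Ioc]
  filter_upwards [h1] with t ht htIoc n heq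
  exact ht (Set.mem_iUnion.2 ⟨n, ⟨htIoc, heq⟩⟩)

lemma log_abs_inv_nonneg {x : ℝ} (h0 : 0 ≤ x) (h1 : x ≤ 1) : 0 ≤ Real.log x⁻¹ := by
  rw [Real.log_inv]
  linarith [Real.log_nonpos h0 h1]

lemma main_est (lam : ℕ → ℂ) (him : ∀ n, 0 ≤ (lam n).im)
    (hsum : Summable fun n => Complex.abs (lam n)) {ξ : ℝ} (hξ : 0 < ξ) :
    (∫ t in (0:ℝ)..π, ξ * Real.log ((Complex.abs
        (∏' n, (zc ξ t - lam n) / (zc ξ t - starRingEnd ℂ (lam n))))⁻¹))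
      ≤ ∑' n, bBound ξ (lam n) := by
  set G : ℝ → ℝ := fun t => ξ * Real.log ((Complex.abs
      (∏' n, (zc ξ t - lam n) / (zc ξ t - starRingEnd ℂ (lam n))))⁻¹) with hG
  have hSb : Summable fun n => bBound ξ (lam n) :=
    Summable.of_nonneg_of_le (fun n => bBound_nonneg hξ _) (fun n => bBound_le hξ _)
      (hsum.mul_left 100)
  by_cases hInt : IntervalIntegrable G volume 0 π
  · have h0 : 0 ≤ᶠ[MeasureTheory.ae (volume.restrict (Set.Ioc 0 π))] G := by
      filter_upwards [MeasureTheory.ae_restrict_mem measurableSet_Ioc] with t ht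
      have hzim : 0 ≤ (zc ξ t).im := by
        rw [zc_im]
        exact mul_nonneg hξ.le (Real.sin_nonneg_of_nonneg_of_le_pi ht.1.le ht.2)
      exact mul_nonneg hξ.le (log_abs_inv_nonneg (Complex.abs.nonneg _)
        (abs_tprod_le_one lam him hzim))
    rw [intervalIntegral.integral_of_le Real.pi_pos.le,
      MeasureTheory.integral_eq_lintegral_of_nonneg_ae h0 hInt.1.aestronglyMeasurable]
    apply ENNReal.toReal_le_of_le_ofReal (tsum_nonneg fun n => bBound_nonneg hξ _)
    calc ∫⁻ t in Set.Ioc 0 π, ENNReal.ofReal (G t)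
        ≤ ∫⁻ t in Set.Ioc 0 π, ∑' n, ENNReal.ofReal
            (ξ * (Real.log (Complex.abs (zc ξ t - starRingEnd ℂ (lam n)))
              - Real.log (Complex.abs (zc ξ t - lam n)))) := by
          apply MeasureTheory.lintegral_mono_ae
          filter_upwards [ae_ne_lam hξ lam,
            MeasureTheory.ae_restrict_mem measurableSet_Ioc] with t hne ht
          have hzim : 0 ≤ (zc ξ t).im := by
            rw [zc_im]
            exact mul_nonneg hξ.le (Real.sin_nonneg_of_nonneg_of_le_pi ht.1.le ht.2)
          exact key_pointwise lam him hzim hne hξ.le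
      _ = ∑' n, ∫⁻ t in Set.Ioc 0 π, ENNReal.ofReal
            (ξ * (Real.log (Complex.abs (zc ξ t - starRingEnd ℂ (lam n)))
              - Real.log (Complex.abs (zc ξ t - lam n)))) :=
          MeasureTheory.lintegral_tsum fun n =>
            (ENNReal.measurable_ofReal.comp
              (measurable_const.mul (g_measurable ξ (lam n)))).aemeasurable
      _ ≤ ∑' n, ENNReal.ofReal (bBound ξ (lam n)) :=
          ENNReal.tsum_le_tsum fun n => per_n_bound hξ (him n)
      _ = ENNReal.ofReal (∑' n, bBound ξ (lam n)) :=
          (ENNReal.ofReal_tsum_of_nonneg (fun n => bBound_nonneg hξ _) hSb).symm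
  · rw [intervalIntegral.integral_undef hInt]
    exact tsum_nonneg fun n => bBound_nonneg hξ _

end BlaschkeAux

theorem blaschke_product_radial_limit (lam : ℕ → ℂ) (him : ∀ n, 0 ≤ (lam n).im)
    (hsum : Summable fun n => ‖lam n‖) :
    Tendsto (fun ξ : ℝ =>
        ∫ t in (0:ℝ)..Real.pi, ξ * Real.log (‖          (∏' n, ((ξ : ℂ) * Complex.exp (Complex.I * t) - lam n) /
            ((ξ : ℂ) * Complex.exp (Complex.I * t) - starRingEnd ℂ (lam n)))‖⁻¹))
      (nhdsWithin 0 (Set.Ioi 0)) (nhds 0) := by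
  have hsq : Tendsto (fun ξ => ∑' n, bBound ξ (lam n)) (nhdsWithin 0 (Set.Ioi 0)) (nhds 0) := by
    have h := tendsto_tsum_of_dominated_convergence
      (𝓕 := nhdsWithin (0:ℝ) (Set.Ioi 0))
      (f := fun ξ n => bBound ξ (lam n)) (g := fun _ => (0:ℝ))
      (bound := fun n => 100 * Complex.abs (lam n)) (hsum.mul_left 100)
      (fun n => bBound_tendsto (lam n)) ?_
    · simpa using h
    · filter_upwards [self_mem_nhdsWithin] with ξ hξ
      intro n
      rw [Real.norm_eq_abs, abs_of_nonneg (bBound_nonneg hξ _)]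
      exact bBound_le hξ _
  apply tendsto_of_tendsto_of_tendsto_of_le_of_le' tendsto_const_nhds hsq
  · filter_upwards [self_mem_nhdsWithin] with ξ hξ
    have hξ0 : (0:ℝ) < ξ := hξ
    apply intervalIntegral.integral_nonneg Real.pi_pos.le
    intro t ht
    have hzim : 0 ≤ (zc ξ t).im := by
      rw [zc_im]
      exact mul_nonneg hξ0.le (Real.sin_nonneg_of_nonneg_of_le_pi ht.1 ht.2)
    exact mul_nonneg hξ0.le (log_abs_inv_nonneg (Complex.abs.nonneg _)
      (abs_tprod_le_one lam him hzim))
  · filter_upwards [self_mem_nhdsWithin] with ξ hξ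
    have hξ0 : (0:ℝ) < ξ := hξ
    exact main_est lam him hsum hξ0
end

section
/- Let (f_n)_{n∈ℕ} be a sequence of nonnegative functions in L¹(ℝ) converging almost everywhere to f ∈ L¹(ℝ). Assume that the limit L := lim_{n→∞} ∫_ℝ f_n exists and is finite, and that for every ε > 0 one has ∫_{|x|≥ε} |f_n(x) − f(x)| dx → 0 as n → ∞. Then γ := L − ∫_ℝ f is nonnegative, and for every z ∈ ℂ with Im z > 0, lim_{n→∞} ∫_ℝ f_n(x)/(z − x) dx = γ/z + ∫_ℝ f(x)/(z − x) dx. -/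
open MeasureTheory Filter

lemma im_le_abs_sub (z : ℂ) (hz : 0 < z.im) (x : ℝ) : z.im ≤ ‖z - x‖ := by
  calc z.im = |(z - (x:ℂ)).im| := by simp [abs_of_pos hz]
  _ ≤ ‖z - x‖ := Complex.abs_im_le_norm _

lemma sub_ne (z : ℂ) (hz : 0 < z.im) (x : ℝ) : z - (x:ℂ) ≠ 0 := by
  intro h
  have := congrArg Complex.im h
  simp at this
  exact hz.ne' this

lemma cont_inv (z : ℂ) (hz : 0 < z.im) : Continuous fun x : ℝ => (z - (x:ℂ))⁻¹ :=
  Continuous.inv₀ (by continuity) (fun x => sub_ne z hz x)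

lemma integrable_div (g : ℝ → ℝ) (hg : Integrable g) (z : ℂ) (hz : 0 < z.im) :
    Integrable (fun x : ℝ => (g x : ℂ) / (z - x)) := by
  have : (fun x : ℝ => (g x : ℂ) / (z - x)) = fun x : ℝ => (z - (x:ℂ))⁻¹ * (g x : ℂ) := by
    funext x; rw [div_eq_mul_inv, mul_comm]
  rw [this]
  apply Integrable.bdd_mul (c := (z.im)⁻¹) hg.ofReal ((cont_inv z hz).aestronglyMeasurable)
  · filter_upwards with x
    rw [norm_inv]
    exact inv_anti₀ hz (by simpa using im_le_abs_sub z hz x)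

theorem cauchy_integral_limit (fn : ℕ → ℝ → ℝ) (f : ℝ → ℝ) (L : ℝ)
    (hnn : ∀ n x, 0 ≤ fn n x)
    (hint : ∀ n, Integrable (fn n)) (hf : Integrable f)
    (hae : ∀ᵐ x ∂(volume : Measure ℝ), Tendsto (fun n => fn n x) atTop (nhds (f x)))
    (hL : Tendsto (fun n => ∫ x, fn n x) atTop (nhds L))
    (hloc : ∀ ε > (0 : ℝ),
      Tendsto (fun n => ∫ x in {x : ℝ | ε ≤ |x|}, |fn n x - f x|) atTop (nhds 0)) :
    0 ≤ L - ∫ x, f x ∧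
    ∀ z : ℂ, 0 < z.im →
      Tendsto (fun n => ∫ x : ℝ, (fn n x : ℂ) / (z - x)) atTop
        (nhds (((L - ∫ x, f x : ℝ) : ℂ) / z + ∫ x : ℝ, (f x : ℂ) / (z - x))) := by
  have hfatou : (∫ x, f x) ≤ L := by
    have hfnn : 0 ≤ᵐ[volume] f := by
      filter_upwards [hae] with x hx
      exact ge_of_tendsto' hx (fun n => hnn n x)
    have h1 : ∫⁻ x, ENNReal.ofReal (f x) ≤ Filter.liminf (fun n => ∫⁻ x, ENNReal.ofReal (fn n x)) atTop := by
      have := lintegral_liminf_le' (μ := volume) (u := atTop) (f := fun n x => ENNReal.ofReal (fn n x))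
        (fun n => ((hint n).aemeasurable).ennreal_ofReal)
      refine le_trans (le_of_eq ?_) this
      apply lintegral_congr_ae
      filter_upwards [hae] with x hx
      exact (((ENNReal.continuous_ofReal.tendsto _).comp hx).liminf_eq).symm
    have h2 : ∀ n, ∫⁻ x, ENNReal.ofReal (fn n x) = ENNReal.ofReal (∫ x, fn n x) := by
      intro n
      rw [← ofReal_integral_eq_lintegral_ofReal (hint n) (Filter.Eventually.of_forall (hnn n))]
    simp_rw [h2] at h1
    have h3 : Filter.liminf (fun n => ENNReal.ofReal (∫ x, fn n x)) atTop = ENNReal.ofReal L :=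
      ((ENNReal.continuous_ofReal.tendsto _).comp hL).liminf_eq
    rw [h3, ← ofReal_integral_eq_lintegral_ofReal hf hfnn] at h1
    have hL0 : 0 ≤ L := le_of_tendsto_of_tendsto' tendsto_const_nhds hL (fun n => integral_nonneg (hnn n))
    rwa [ENNReal.ofReal_le_ofReal_iff hL0] at h1
  refine ⟨by linarith, fun z hz => ?_⟩
  have hL0 : 0 ≤ L :=
    le_of_tendsto_of_tendsto' tendsto_const_nhds hL (fun n => integral_nonneg (hnn n))
  set γ : ℝ := L - ∫ x, f x with hγdef
  set T : ℂ := ((γ : ℝ) : ℂ) / z + ∫ x : ℝ, (f x : ℂ) / (z - x) with hTdef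
  have hz0 : z ≠ 0 := fun h => by simp [h] at hz
  have habs : 0 < ‖z‖ := norm_pos_iff.mpr hz0
  rw [Metric.tendsto_nhds]
  intro η hη
  -- constants
  set B : ℝ := L + 1 + ∫ x, |f x| with hBdef
  have hfabs0 : 0 ≤ ∫ x, |f x| := integral_nonneg (fun x => abs_nonneg _)
  have hB : 0 < B := by positivity
  set ε : ℝ := η * (‖z‖ * z.im) / (2 * B) with hεdef
  have hε : 0 < ε := by positivity
  set s : Set ℝ := {x : ℝ | ε ≤ |x|} with hsdef
  have hs : MeasurableSet s := measurableSet_le measurable_const measurable_id.abs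
  -- integrability facts
  have Dn : ∀ n, Integrable (fun x => fn n x - f x) := fun n => (hint n).sub hf
  have Ig : ∀ n, Integrable (fun x : ℝ => ((fn n x - f x : ℝ) : ℂ) / (z - x)) :=
    fun n => integrable_div _ (Dn n) z hz
  have IB : ∀ n, Integrable (fun x : ℝ => ((fn n x - f x : ℝ) : ℂ) / z) :=
    fun n => (Dn n).ofReal.div_const z
  have hEeq : ∀ n, (fun x : ℝ => ((fn n x - f x : ℝ) : ℂ) * ((x : ℂ) / (z * (z - x))))
      = fun x : ℝ => ((fn n x - f x : ℝ) : ℂ) / (z - x) - ((fn n x - f x : ℝ) : ℂ) / z := by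
    intro n; funext x
    have h1 := sub_ne z hz x
    field_simp
    ring
  have IE : ∀ n, Integrable (fun x : ℝ => ((fn n x - f x : ℝ) : ℂ) * ((x : ℂ) / (z * (z - x)))) := by
    intro n; rw [hEeq n]; exact (Ig n).sub (IB n)
  -- key quantities
  set A : ℕ → ℂ := fun n => ∫ x in s, ((fn n x - f x : ℝ) : ℂ) / (z - x) with hAdef
  set m : ℕ → ℝ := fun n => ∫ x in sᶜ, (fn n x - f x) with hmdef
  set E : ℕ → ℂ := fun n => ∫ x in sᶜ, ((fn n x - f x : ℝ) : ℂ) * ((x : ℂ) / (z * (z - x))) with hEdef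
  -- identity
  have key : ∀ n, (∫ x : ℝ, (fn n x : ℂ) / (z - x)) - T
      = A n + (((m n - γ : ℝ)) : ℂ) / z + E n := by
    intro n
    have e1 : (∫ x : ℝ, (fn n x : ℂ) / (z - x)) - (∫ x : ℝ, (f x : ℂ) / (z - x))
        = ∫ x : ℝ, ((fn n x - f x : ℝ) : ℂ) / (z - x) := by
      rw [← integral_sub (integrable_div _ (hint n) z hz) (integrable_div _ hf z hz)]
      congr 1; funext x; push_cast; rw [sub_div]
    have e2 : (∫ x : ℝ, ((fn n x - f x : ℝ) : ℂ) / (z - x))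
        = A n + ∫ x in sᶜ, ((fn n x - f x : ℝ) : ℂ) / (z - x) :=
      (integral_add_compl hs (Ig n)).symm
    have e3 : (∫ x in sᶜ, ((fn n x - f x : ℝ) : ℂ) / (z - x))
        = ((m n : ℝ) : ℂ) / z + E n := by
      have : (fun x : ℝ => ((fn n x - f x : ℝ) : ℂ) / (z - x))
          = fun x : ℝ => ((fn n x - f x : ℝ) : ℂ) / z
            + ((fn n x - f x : ℝ) : ℂ) * ((x : ℂ) / (z * (z - x))) := by
        funext x; rw [congrFun (hEeq n) x]; ring
      rw [this, integral_add ((IB n).restrict) ((IE n).restrict)]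
      congr 1
      rw [integral_div, hmdef]
      norm_cast
    rw [hTdef]
    have : (∫ x : ℝ, (fn n x : ℂ) / (z - x)) - (↑γ / z + ∫ x : ℝ, (f x : ℂ) / (z - x))
        = ((∫ x : ℝ, (fn n x : ℂ) / (z - x)) - (∫ x : ℝ, (f x : ℂ) / (z - x))) - ↑γ / z := by
      ring
    rw [this, e1, e2, e3]
    push_cast
    ring
  -- limits
  have ha : Tendsto (fun n => ∫ x in s, |fn n x - f x|) atTop (nhds 0) := hloc ε hε
  have hA0 : Tendsto A atTop (nhds 0) := by
    have hb : Tendsto (fun n => (∫ x in s, |fn n x - f x|) * (z.im)⁻¹) atTop (nhds 0) := by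
      simpa using ha.mul_const (z.im)⁻¹
    refine squeeze_zero_norm (fun n => ?_) hb
    calc ‖A n‖ ≤ ∫ x in s, ‖((fn n x - f x : ℝ) : ℂ) / (z - x)‖ :=
          norm_integral_le_integral_norm _
    _ ≤ ∫ x in s, |fn n x - f x| * (z.im)⁻¹ := by
        apply integral_mono ((Ig n).restrict.norm) (((Dn n).abs.mul_const _).restrict)
        intro x
        show ‖((fn n x - f x : ℝ) : ℂ) / (z - (x:ℂ))‖ ≤ |fn n x - f x| * (z.im)⁻¹
        rw [norm_div, Complex.norm_real, Real.norm_eq_abs,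
          div_eq_mul_inv]
        exact mul_le_mul_of_nonneg_left (inv_anti₀ hz (im_le_abs_sub z hz x)) (abs_nonneg _)
    _ = (∫ x in s, |fn n x - f x|) * (z.im)⁻¹ := integral_mul_const _ _
  have hm : Tendsto m atTop (nhds γ) := by
    have h1 : ∀ n, m n = (∫ x, (fn n x - f x)) - ∫ x in s, (fn n x - f x) := by
      intro n
      show (∫ x in sᶜ, (fn n x - f x)) = _
      have h0 := integral_add_compl hs (Dn n)
      linarith
    have h2 : Tendsto (fun n => ∫ x, (fn n x - f x)) atTop (nhds γ) := by
      have : ∀ n, (∫ x, (fn n x - f x)) = (∫ x, fn n x) - ∫ x, f x := fun n =>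
        integral_sub (hint n) hf
      simp_rw [this]
      exact hL.sub tendsto_const_nhds
    have h3 : Tendsto (fun n => ∫ x in s, (fn n x - f x)) atTop (nhds 0) := by
      apply squeeze_zero_norm _ ha
      intro n
      simpa [Real.norm_eq_abs] using
        norm_integral_le_integral_norm (μ := volume.restrict s) (fun x => fn n x - f x)
    have hme : m = fun n => (∫ x, (fn n x - f x)) - ∫ x in s, (fn n x - f x) := funext h1
    rw [hme]
    simpa using h2.sub h3
  have hmid : Tendsto (fun n => (((m n - γ : ℝ)) : ℂ) / z) atTop (nhds 0) := by
    have : Tendsto (fun n => ((m n - γ : ℝ) : ℂ)) atTop (nhds ((0:ℝ):ℂ)) :=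
      (Complex.continuous_ofReal.tendsto _).comp (by simpa using hm.sub_const γ)
    simpa using this.div_const z
  have h4 : Tendsto (fun n => A n + (((m n - γ : ℝ)) : ℂ) / z) atTop (nhds 0) := by
    simpa using hA0.add hmid
  have h5 : ∀ᶠ n in atTop, ‖A n + (((m n - γ : ℝ)) : ℂ) / z‖ < η / 2 := by
    have := Metric.tendsto_nhds.mp h4 (η/2) (by positivity)
    simpa [dist_eq_norm] using this
  -- E bound
  set k : ℝ := ε / (‖z‖ * z.im) with hkdef
  have hk : 0 < k := by positivity
  have hEb : ∀ᶠ n in atTop, ‖E n‖ < η / 2 := by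
    have hev : ∀ᶠ n in atTop, (∫ x, fn n x) < L + 1 :=
      Tendsto.eventually_lt_const (by linarith) hL
    filter_upwards [hev] with n hn
    have step1 : ‖E n‖ ≤ (∫ x in sᶜ, |fn n x - f x|) * k := by
      calc ‖E n‖ ≤ ∫ x in sᶜ, ‖((fn n x - f x : ℝ) : ℂ) * ((x : ℂ) / (z * (z - x)))‖ :=
            norm_integral_le_integral_norm _
      _ ≤ ∫ x in sᶜ, |fn n x - f x| * k := by
          apply setIntegral_mono_on ((IE n).restrict.norm) ((Dn n).abs.mul_const _).restrict
            hs.compl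
          intro x hx
          have hxε : |x| ≤ ε := le_of_lt (by simpa [hsdef] using hx)
          rw [norm_mul, Complex.norm_real, Real.norm_eq_abs, norm_div,
            norm_mul]
          apply mul_le_mul_of_nonneg_left _ (abs_nonneg _)
          rw [hkdef, Complex.norm_real, Real.norm_eq_abs]
          exact div_le_div₀ hε.le hxε (by positivity)
            (mul_le_mul_of_nonneg_left (im_le_abs_sub z hz x) (norm_nonneg _))
      _ = (∫ x in sᶜ, |fn n x - f x|) * k := integral_mul_const _ _
    have step2 : (∫ x in sᶜ, |fn n x - f x|) ≤ ∫ x, |fn n x - f x| :=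
      setIntegral_le_integral (Dn n).abs
        (Filter.Eventually.of_forall (fun x => abs_nonneg _))
    have step3 : (∫ x, |fn n x - f x|) ≤ (∫ x, fn n x) + ∫ x, |f x| := by
      rw [← integral_add (hint n) hf.abs]
      apply integral_mono (Dn n).abs ((hint n).add hf.abs)
      intro x
      calc |fn n x - f x| ≤ |fn n x| + |f x| := abs_sub _ _
      _ = fn n x + |f x| := by rw [_root_.abs_of_nonneg (hnn n x)]
    have step4 : (∫ x, fn n x) + ∫ x, |f x| < B := by
      simp only [hBdef]; linarith
    have hlt : (∫ x in sᶜ, |fn n x - f x|) < B := lt_of_le_of_lt (step2.trans step3) step4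
    have : ‖E n‖ < B * k :=
      lt_of_le_of_lt step1 (mul_lt_mul_of_pos_right hlt hk)
    have hBk : B * k = η / 2 := by
      have h7 : ‖z‖ * z.im ≠ 0 := by positivity
      rw [hkdef, hεdef]
      field_simp
    exact hBk ▸ this
  filter_upwards [h5, hEb] with n h1 h2
  rw [dist_eq_norm]
  have : (∫ x : ℝ, (fn n x : ℂ) / (z - x)) - T
      = (A n + (((m n - γ : ℝ)) : ℂ) / z) + E n := by rw [key n]
  calc ‖(∫ x : ℝ, (fn n x : ℂ) / (z - x)) - T‖
      = ‖(A n + (((m n - γ : ℝ)) : ℂ) / z) + E n‖ := by rw [this]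
  _ ≤ ‖A n + (((m n - γ : ℝ)) : ℂ) / z‖ + ‖E n‖ := norm_add_le _ _
  _ < η / 2 + η / 2 := by exact add_lt_add h1 h2
  _ = η := by ring
end
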